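/- arXiv:2011.14893 — 5 statements merged into one kernel-verified Lean document; each statement's English description precedes it below -/
import Mathlib

section
/- Let X and Y be i.i.d. random variables with Gamma distribution with shape α > 0 and scale θ > 0 (density t ↦ t^(α-1) e^(-t/θ) / (θ^α Γ(α)) on (0,∞)). Then for j ∈ {1,2}, E[(min{X,Y})^j] = θ^j Γ(α+j)/Γ(α) − (j θ^j/√π) · Γ(α+j−1/2)/Γ(α). -/
open MeasureTheory ProbabilityTheory Real Set
open scoped ENNReal NNReal

namespace MinGammaAux

lemma lintegral_rpow_exp {s q : ℝ} (hs : 0 < s) (hq : 0 < q) :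
    ∫⁻ x in Set.Ioi (0:ℝ), ENNReal.ofReal (x ^ (s-1) * Real.exp (-(q * x))) =
      ENNReal.ofReal (Real.Gamma s / q ^ s) := by
  have h1 := ProbabilityTheory.lintegral_gammaPDF_eq_one hs hq
  have hsplit : (∫⁻ x in Set.Iio (0:ℝ), gammaPDF s q x) + ∫⁻ x in (Set.Iio (0:ℝ))ᶜ, gammaPDF s q x
      = ∫⁻ x, gammaPDF s q x := lintegral_add_compl _ measurableSet_Iio
  rw [ProbabilityTheory.lintegral_gammaPDF_of_nonpos le_rfl, zero_add, h1] at hsplit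
  rw [compl_Iio] at hsplit
  have hae : (∫⁻ x in Set.Ici (0:ℝ), gammaPDF s q x) = ∫⁻ x in Set.Ioi (0:ℝ), gammaPDF s q x := by
    refine setLIntegral_congr ?_
    exact (Ioi_ae_eq_Ici (a := (0:ℝ))).symm
  rw [hae] at hsplit
  have hcongr : (∫⁻ x in Set.Ioi (0:ℝ), gammaPDF s q x) =
      ENNReal.ofReal (q ^ s / Real.Gamma s) *
        ∫⁻ x in Set.Ioi (0:ℝ), ENNReal.ofReal (x ^ (s-1) * Real.exp (-(q * x))) := by
    rw [← lintegral_const_mul]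
    · refine setLIntegral_congr_fun measurableSet_Ioi (fun x hx => ?_)
      rw [gammaPDF_of_nonneg (le_of_lt hx), mul_assoc, ENNReal.ofReal_mul (by positivity)]
    · exact (Measurable.ennreal_ofReal (by fun_prop))
  rw [hcongr] at hsplit
  have hK : (0:ℝ) < q ^ s / Real.Gamma s := by
    have := Real.Gamma_pos_of_pos hs
    have := Real.rpow_pos_of_pos hq s
    positivity
  have := congrArg (fun z => ENNReal.ofReal (Real.Gamma s / q ^ s) * z) hsplit
  simp only [mul_one] at this
  rw [← mul_assoc, ← ENNReal.ofReal_mul (by positivity)] at this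
  have heq : Real.Gamma s / q ^ s * (q ^ s / Real.Gamma s) = 1 := by
    field_simp
  rw [heq, ENNReal.ofReal_one, one_mul] at this
  exact this

lemma lintegral_Ioc_scale {g : ℝ → ℝ≥0∞} (hg : Measurable g) {x : ℝ} (hx : 0 < x) :
    ∫⁻ y in Set.Ioc 0 x, g y = ENNReal.ofReal x * ∫⁻ v in Set.Ioc (0:ℝ) 1, g (x * v) := by
  have hmap : Measure.map (fun v : ℝ => x * v) volume = ENNReal.ofReal |x⁻¹| • volume :=
    Real.map_volume_mul_left (ne_of_gt hx)
  have h1 : ∫⁻ v in Set.Ioc (0:ℝ) 1, g (x * v) =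
      ∫⁻ y in Set.Ioc 0 x, g y ∂(ENNReal.ofReal |x⁻¹| • volume) := by
    rw [← hmap]
    rw [Measure.restrict_map (measurable_const_mul x) measurableSet_Ioc]
    rw [lintegral_map hg (measurable_const_mul x)]
    congr 2
    ext v
    simp only [Set.mem_preimage, Set.mem_Ioc]
    constructor
    · rintro ⟨h1, h2⟩
      refine ⟨?_, ?_⟩
      · nlinarith
      · nlinarith
    · rintro ⟨h1, h2⟩
      refine ⟨?_, ?_⟩
      · nlinarith
      · nlinarith
  rw [h1]
  rw [Measure.restrict_smul, lintegral_smul_measure]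
  rw [smul_eq_mul, ← mul_assoc, ← ENNReal.ofReal_mul (le_of_lt hx), abs_of_pos (by positivity)]
  rw [mul_inv_cancel₀ (ne_of_gt hx), ENNReal.ofReal_one, one_mul]


lemma integrableOn_core {b s' : ℝ} (hb : 0 < b) (hs' : 0 < s') :
    IntegrableOn (fun v : ℝ => v ^ (b-1) * (1+v) ^ (-s')) (Set.Ioc (0:ℝ) 1) := by
  have hmono : IntegrableOn (fun v : ℝ => v ^ (b-1)) (Set.Ioc (0:ℝ) 1) := by
    have := intervalIntegral.intervalIntegrable_rpow' (r := b-1) (a := 0) (b := 1) (by linarith)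
    rwa [intervalIntegrable_iff, uIoc_of_le zero_le_one] at this
  refine Integrable.mono hmono ?_ ?_
  · exact ((Measurable.aestronglyMeasurable (by fun_prop))).restrict
  · filter_upwards [ae_restrict_mem measurableSet_Ioc] with v hv
    have hv0 : (0:ℝ) < v := hv.1
    have h1 : (1+v) ^ (-s') ≤ 1 :=
      Real.rpow_le_one_of_one_le_of_nonpos (by linarith) (by linarith)
    have h2 : (0:ℝ) ≤ (1+v) ^ (-s') := Real.rpow_nonneg (by linarith) _
    have h3 : (0:ℝ) ≤ v ^ (b-1) := Real.rpow_nonneg hv0.le _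
    rw [Real.norm_eq_abs, Real.norm_eq_abs, abs_of_nonneg (by positivity), abs_of_nonneg h3]
    nlinarith

lemma W_eval {a b cc : ℝ} (ha : 0 < a) (hb : 0 < b) (hc : 0 < cc) :
    ∫⁻ x in Set.Ioi (0:ℝ), ENNReal.ofReal (x ^ (a-1) * Real.exp (-(cc * x))) *
        (∫⁻ y in Set.Ioc (0:ℝ) x, ENNReal.ofReal (y ^ (b-1) * Real.exp (-(cc * y)))) =
      ENNReal.ofReal (Real.Gamma (a+b) / cc ^ (a+b)) *
        ENNReal.ofReal (∫ v in Set.Ioc (0:ℝ) 1, v ^ (b-1) * (1+v) ^ (-(a+b))) := by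
  have hg : Measurable fun y : ℝ => ENNReal.ofReal (y ^ (b-1) * Real.exp (-(cc * y))) := by
    fun_prop
  have step1 : ∫⁻ x in Set.Ioi (0:ℝ), ENNReal.ofReal (x ^ (a-1) * Real.exp (-(cc * x))) *
        (∫⁻ y in Set.Ioc (0:ℝ) x, ENNReal.ofReal (y ^ (b-1) * Real.exp (-(cc * y)))) =
      ∫⁻ x in Set.Ioi (0:ℝ), ∫⁻ v in Set.Ioc (0:ℝ) 1,
        ENNReal.ofReal (v ^ (b-1) * (x ^ (a+b-1) * Real.exp (-((cc*(1+v))*x)))) := by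
    refine setLIntegral_congr_fun measurableSet_Ioi
      (fun x hx => ?_)
    have hx : (0:ℝ) < x := hx
    rw [lintegral_Ioc_scale hg hx, ← mul_assoc,
      ← ENNReal.ofReal_mul (by positivity), ← lintegral_const_mul _ (by fun_prop)]
    refine setLIntegral_congr_fun measurableSet_Ioc
      (fun v hv => ?_)
    rw [← ENNReal.ofReal_mul (by positivity)]
    congr 1
    have hv0 : (0:ℝ) < v := hv.1
    have e1 : x ^ (a-1) * x ^ (b-1) * x = x ^ (a+b-1) := by
      rw [← Real.rpow_add hx, ← Real.rpow_add_one (ne_of_gt hx)]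
      congr 1; ring
    have e2 : Real.exp (-(cc*x)) * Real.exp (-(cc*(x*v))) = Real.exp (-((cc*(1+v))*x)) := by
      rw [← Real.exp_add]; congr 1; ring
    calc x ^ (a-1) * Real.exp (-(cc * x)) * x * ((x*v) ^ (b-1) * Real.exp (-(cc*(x*v))))
        = x ^ (a-1) * Real.exp (-(cc * x)) * x * ((x ^ (b-1) * v ^ (b-1)) * Real.exp (-(cc*(x*v)))) := by
          rw [Real.mul_rpow hx.le hv0.le]
      _ = v ^ (b-1) * ((x ^ (a-1) * x ^ (b-1) * x) * (Real.exp (-(cc*x)) * Real.exp (-(cc*(x*v))))) := by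
          ring
      _ = v ^ (b-1) * (x ^ (a+b-1) * Real.exp (-((cc*(1+v))*x))) := by rw [e1, e2]
  rw [step1]
  have hmeas : Measurable (Function.uncurry fun (x v : ℝ) =>
      ENNReal.ofReal (v ^ (b-1) * (x ^ (a+b-1) * Real.exp (-((cc*(1+v))*x))))) := by
    fun_prop
  rw [lintegral_lintegral_swap hmeas.aemeasurable]
  have hs : 0 < a + b := by linarith
  have step3 : ∀ v ∈ Set.Ioc (0:ℝ) 1,
      (∫⁻ x in Set.Ioi (0:ℝ),
        ENNReal.ofReal (v ^ (b-1) * (x ^ (a+b-1) * Real.exp (-((cc*(1+v))*x))))) =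
      ENNReal.ofReal (Real.Gamma (a+b) / cc ^ (a+b) * (v ^ (b-1) * (1+v) ^ (-(a+b)))) := by
    intro v hv
    have hv0 : (0:ℝ) < v := hv.1
    have hq : 0 < cc * (1+v) := by nlinarith
    calc (∫⁻ x in Set.Ioi (0:ℝ),
          ENNReal.ofReal (v ^ (b-1) * (x ^ (a+b-1) * Real.exp (-((cc*(1+v))*x)))))
        = ENNReal.ofReal (v ^ (b-1)) * ∫⁻ x in Set.Ioi (0:ℝ),
            ENNReal.ofReal (x ^ ((a+b)-1) * Real.exp (-((cc*(1+v))*x))) := by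
          rw [← lintegral_const_mul _ (by fun_prop)]
          refine setLIntegral_congr_fun measurableSet_Ioi
            (fun x hx => ?_)
          rw [← ENNReal.ofReal_mul (Real.rpow_nonneg hv0.le _)]
      _ = ENNReal.ofReal (v ^ (b-1)) * ENNReal.ofReal (Real.Gamma (a+b) / (cc*(1+v)) ^ (a+b)) := by
          rw [lintegral_rpow_exp hs hq]
      _ = ENNReal.ofReal (Real.Gamma (a+b) / cc ^ (a+b) * (v ^ (b-1) * (1+v) ^ (-(a+b)))) := by
          rw [← ENNReal.ofReal_mul (Real.rpow_nonneg hv0.le _)]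
          congr 1
          rw [Real.mul_rpow hc.le (by linarith : (0:ℝ) ≤ 1+v), Real.rpow_neg (by linarith)]
          have h1 : (0:ℝ) < cc ^ (a+b) := Real.rpow_pos_of_pos hc _
          have h2 : (0:ℝ) < (1+v) ^ (a+b) := Real.rpow_pos_of_pos (by linarith) _
          field_simp
  rw [setLIntegral_congr_fun measurableSet_Ioc step3]
  have hnn : 0 ≤ᵐ[volume.restrict (Set.Ioc (0:ℝ) 1)]
      fun v : ℝ => v ^ (b-1) * (1+v) ^ (-(a+b)) := by
    filter_upwards [ae_restrict_mem measurableSet_Ioc] with v hv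
    have hv0 : (0:ℝ) < v := hv.1
    positivity
  have hint := integrableOn_core hb hs
  calc ∫⁻ v in Set.Ioc (0:ℝ) 1,
        ENNReal.ofReal (Real.Gamma (a+b) / cc ^ (a+b) * (v ^ (b-1) * (1+v) ^ (-(a+b))))
      = ENNReal.ofReal (Real.Gamma (a+b) / cc ^ (a+b)) * ∫⁻ v in Set.Ioc (0:ℝ) 1,
          ENNReal.ofReal (v ^ (b-1) * (1+v) ^ (-(a+b))) := by
        rw [← lintegral_const_mul _ (by fun_prop)]
        refine setLIntegral_congr_fun measurableSet_Ioc
          (fun v hv => ?_)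
        have hv0 : (0:ℝ) < v := hv.1
        rw [← ENNReal.ofReal_mul (by positivity)]
    _ = ENNReal.ofReal (Real.Gamma (a+b) / cc ^ (a+b)) *
          ENNReal.ofReal (∫ v in Set.Ioc (0:ℝ) 1, v ^ (b-1) * (1+v) ^ (-(a+b))) := by
        rw [MeasureTheory.ofReal_integral_eq_lintegral_ofReal hint hnn]


lemma contOn_aux {p : ℝ} (hp : 0 ≤ p) : ContinuousOn (fun v : ℝ => v ^ p) (Set.Icc 0 1) :=
  fun v _ => (Real.continuousAt_rpow_const v p (Or.inr hp)).continuousWithinAt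

lemma contOn_aux2 (q : ℝ) : ContinuousOn (fun v : ℝ => (1+v) ^ q) (Set.Icc (0:ℝ) 1) := by
  intro v hv
  have h1 : (1:ℝ)+v ≠ 0 := by have := hv.1; positivity
  exact ((Real.continuousAt_rpow_const (1+v) q (Or.inl h1)).comp
    (by fun_prop : Continuous fun v : ℝ => 1+v).continuousAt).continuousWithinAt

lemma hasDeriv_aux2 (q : ℝ) {v : ℝ} (h1 : (1:ℝ) + v ≠ 0) :
    HasDerivAt (fun v : ℝ => (1+v) ^ q) (q * (1+v) ^ (q-1)) v := by
  have h2 : HasDerivAt (fun v : ℝ => 1+v) 1 v := (hasDerivAt_id v).const_add 1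
  have h3 : HasDerivAt (fun u : ℝ => u ^ q) (q * (1+v) ^ (q-1)) (1+v) :=
    Real.hasDerivAt_rpow_const (Or.inl h1)
  have := h3.comp v h2; rw [mul_one] at this; exact this

lemma intInt_aux {α : ℝ} (hα : 0 < α) (j : ℕ) (hj : 1 ≤ j) :
    IntervalIntegrable (fun v : ℝ => (v ^ (α-1) - v ^ (α+j-1)) * (1+v) ^ (-(2*α+j)))
      volume 0 1 := by
  have hs : (0:ℝ) < 2*α + j := by positivity
  have h1 := integrableOn_core (b := α) hα hs
  have h2 := integrableOn_core (b := α + j) (by positivity) hs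
  rw [intervalIntegrable_iff, uIoc_of_le zero_le_one]
  refine (h1.sub h2).congr (Filter.EventuallyEq.of_eq (funext fun v => ?_))
  simp only [Pi.sub_apply]
  ring

lemma ftc1 {α : ℝ} (hα : 0 < α) :
    ∫ v in Set.Ioc (0:ℝ) 1, (v ^ (α-1) - v ^ α) * (1+v) ^ (-(2*α+1)) =
      (2:ℝ) ^ (-(2*α)) / α := by
  set F : ℝ → ℝ := fun v => v ^ α * (1+v) ^ (-(2*α)) / α with hF
  have hderiv : ∀ v ∈ Set.Ioo (0:ℝ) 1,
      HasDerivAt F ((v ^ (α-1) - v ^ α) * (1+v) ^ (-(2*α+1))) v := by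
    intro v hv
    have hv0 : (0:ℝ) < v := hv.1
    have h1v : (0:ℝ) < 1 + v := by linarith
    have d1 : HasDerivAt (fun v : ℝ => v ^ α) (α * v ^ (α-1)) v :=
      Real.hasDerivAt_rpow_const (Or.inl (ne_of_gt hv0))
    have d2 := hasDeriv_aux2 (-(2*α)) (v := v) (ne_of_gt h1v)
    have := (d1.mul d2).div_const α
    refine this.congr_deriv ?_
    have e1 : v ^ α = v ^ (α-1) * v := by
      rw [← Real.rpow_add_one (ne_of_gt hv0)]; congr 1; ring
    have e2 : (1+v) ^ (-(2*α)) = (1+v) ^ (-(2*α+1)) * (1+v) := by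
      rw [← Real.rpow_add_one (ne_of_gt h1v)]; congr 1; ring
    have e3 : (1+v) ^ (-(2*α) - 1) = (1+v) ^ (-(2*α+1)) := by congr 1; ring
    rw [e3, e2, e1]
    field_simp
    ring
  have hcont : ContinuousOn F (Set.Icc (0:ℝ) 1) :=
    ((contOn_aux hα.le).mul (contOn_aux2 (-(2*α)))).div_const α
  have hii := intInt_aux hα 1 le_rfl
  simp only [Nat.cast_one] at hii
  have hii' : IntervalIntegrable (fun v : ℝ => (v ^ (α-1) - v ^ α) * (1+v) ^ (-(2*α+1)))
      volume 0 1 := by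
    refine hii.congr ?_
    refine fun v _ => ?_
    norm_num
  have := intervalIntegral.integral_eq_sub_of_hasDerivAt_of_le zero_le_one hcont hderiv hii'
  rw [intervalIntegral.integral_of_le zero_le_one] at this
  rw [this, hF]
  simp only
  rw [Real.one_rpow, Real.zero_rpow (ne_of_gt hα)]
  norm_num

lemma ftc2 {α : ℝ} (hα : 0 < α) :
    ∫ v in Set.Ioc (0:ℝ) 1, (v ^ (α-1) - v ^ (α+1)) * (1+v) ^ (-(2*α+2)) =
      (2:ℝ) ^ (-(2*α)) / α := by
  set F : ℝ → ℝ := fun v => (v ^ α + v ^ (α+1)) * (1+v) ^ (-(2*α+1)) / α with hF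
  have hderiv : ∀ v ∈ Set.Ioo (0:ℝ) 1,
      HasDerivAt F ((v ^ (α-1) - v ^ (α+1)) * (1+v) ^ (-(2*α+2))) v := by
    intro v hv
    have hv0 : (0:ℝ) < v := hv.1
    have h1v : (0:ℝ) < 1 + v := by linarith
    have d1 : HasDerivAt (fun v : ℝ => v ^ α) (α * v ^ (α-1)) v :=
      Real.hasDerivAt_rpow_const (Or.inl (ne_of_gt hv0))
    have d1' : HasDerivAt (fun v : ℝ => v ^ (α+1)) ((α+1) * v ^ (α+1-1)) v :=
      Real.hasDerivAt_rpow_const (Or.inl (ne_of_gt hv0))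
    have d2 := hasDeriv_aux2 (-(2*α+1)) (v := v) (ne_of_gt h1v)
    have := ((d1.add d1').mul d2).div_const α
    refine this.congr_deriv ?_
    have e1 : v ^ α = v ^ (α-1) * v := by
      rw [← Real.rpow_add_one (ne_of_gt hv0)]; congr 1; ring
    have e1' : v ^ (α+1) = v ^ (α-1) * v * v := by
      rw [← Real.rpow_add_one (ne_of_gt hv0), ← Real.rpow_add_one (ne_of_gt hv0)]
      congr 1; ring
    have e1'' : v ^ (α+1-1) = v ^ (α-1) * v := by
      rw [← Real.rpow_add_one (ne_of_gt hv0)]; congr 1; ring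
    have e2 : (1+v) ^ (-(2*α+1)) = (1+v) ^ (-(2*α+2)) * (1+v) := by
      rw [← Real.rpow_add_one (ne_of_gt h1v)]; congr 1; ring
    have e3 : (1+v) ^ (-(2*α+1) - 1) = (1+v) ^ (-(2*α+2)) := by congr 1; ring
    simp only [Pi.add_apply]
    rw [e3, e2, e1'', e1', e1]
    field_simp
    ring
  have hcont : ContinuousOn F (Set.Icc (0:ℝ) 1) :=
    (((contOn_aux hα.le).add (contOn_aux (by linarith))).mul
      (contOn_aux2 (-(2*α+1)))).div_const α
  have hii := intInt_aux hα 2 (by norm_num)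
  have hii' : IntervalIntegrable (fun v : ℝ => (v ^ (α-1) - v ^ (α+1)) * (1+v) ^ (-(2*α+2)))
      volume 0 1 := by
    refine hii.congr (fun v _ => ?_)
    have hc1 : α + ((2:ℕ):ℝ) - 1 = α + 1 := by push_cast; ring
    have hc2 : -(2*α + ((2:ℕ):ℝ)) = -(2*α+2) := by push_cast; ring
    rw [hc1, hc2]
  have := intervalIntegral.integral_eq_sub_of_hasDerivAt_of_le zero_le_one hcont hderiv hii'
  rw [intervalIntegral.integral_of_le zero_le_one] at this
  rw [this, hF]
  simp only
  rw [Real.one_rpow, Real.one_rpow, Real.zero_rpow (ne_of_gt hα),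
    Real.zero_rpow (by positivity : α + 1 ≠ 0)]
  have h2 : ((1:ℝ)+1) ^ (-(2*α+1)) = (2:ℝ) ^ (-(2*α)) / 2 := by
    rw [show ((1:ℝ)+1) = 2 by norm_num, show -(2*α+1) = -(2*α) + (-1) by ring,
      Real.rpow_add (by norm_num : (0:ℝ) < 2), Real.rpow_neg_one]
    ring
  rw [h2]
  ring


lemma pair_eval {cc a b : ℝ} (hc : 0 < cc) (ha : 0 < a) (hb : 0 < b)
    {k1 k2 : ℝ} (hk1 : 0 ≤ k1) (hk2 : 0 ≤ k2) :
    ∫⁻ x, ENNReal.ofReal (if 0 ≤ x then k1 * x ^ (a-1) * Real.exp (-(cc*x)) else 0) *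
      (∫⁻ y in Set.Iio x,
        ENNReal.ofReal (if 0 ≤ y then k2 * y ^ (b-1) * Real.exp (-(cc*y)) else 0)) =
    ENNReal.ofReal (k1 * k2) * (ENNReal.ofReal (Real.Gamma (a+b) / cc ^ (a+b)) *
      ENNReal.ofReal (∫ v in Set.Ioc (0:ℝ) 1, v ^ (b-1) * (1+v) ^ (-(a+b)))) := by
  have hinner0 : ∀ x : ℝ, x ≤ 0 → (∫⁻ y in Set.Iio x,
      ENNReal.ofReal (if 0 ≤ y then k2 * y ^ (b-1) * Real.exp (-(cc*y)) else 0)) = 0 := by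
    intro x hx
    rw [setLIntegral_congr_fun (g := fun _ => 0) measurableSet_Iio
      (fun y hy => ?_), lintegral_zero]
    have : ¬ (0:ℝ) ≤ y := by simp only [Set.mem_Iio] at hy; linarith
    rw [if_neg this, ENNReal.ofReal_zero]
  have hinner : ∀ x : ℝ, 0 < x → (∫⁻ y in Set.Iio x,
      ENNReal.ofReal (if 0 ≤ y then k2 * y ^ (b-1) * Real.exp (-(cc*y)) else 0)) =
      ENNReal.ofReal k2 *
        ∫⁻ y in Set.Ioc (0:ℝ) x, ENNReal.ofReal (y ^ (b-1) * Real.exp (-(cc*y))) := by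
    intro x hx
    have hunion : Set.Iio (0:ℝ) ∪ Set.Ico 0 x = Set.Iio x :=
      Set.Iio_union_Ico_eq_Iio hx.le
    rw [← hunion, lintegral_union measurableSet_Ico
      (Set.Iio_disjoint_Ici le_rfl |>.mono_right Set.Ico_subset_Ici_self)]
    have h0 : (∫⁻ y in Set.Iio (0:ℝ),
        ENNReal.ofReal (if 0 ≤ y then k2 * y ^ (b-1) * Real.exp (-(cc*y)) else 0)) = 0 := by
      rw [setLIntegral_congr_fun (g := fun _ => 0) measurableSet_Iio
        (fun y hy => ?_), lintegral_zero]
      have : ¬ (0:ℝ) ≤ y := by simp only [Set.mem_Iio] at hy; linarith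
      rw [if_neg this, ENNReal.ofReal_zero]
    rw [h0, zero_add, setLIntegral_congr (MeasureTheory.Ico_ae_eq_Ioc (a := (0:ℝ)) (b := x)),
      ← lintegral_const_mul _ (by fun_prop)]
    refine setLIntegral_congr_fun measurableSet_Ioc
      (fun y hy => ?_)
    rw [if_pos hy.1.le, ← ENNReal.ofReal_mul hk2]
    congr 1
    ring
  have hsplit : ∫⁻ x, ENNReal.ofReal (if 0 ≤ x then k1 * x ^ (a-1) * Real.exp (-(cc*x)) else 0) *
      (∫⁻ y in Set.Iio x,
        ENNReal.ofReal (if 0 ≤ y then k2 * y ^ (b-1) * Real.exp (-(cc*y)) else 0)) =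
      ∫⁻ x in Set.Ioi (0:ℝ),
        ENNReal.ofReal (if 0 ≤ x then k1 * x ^ (a-1) * Real.exp (-(cc*x)) else 0) *
        (∫⁻ y in Set.Iio x,
          ENNReal.ofReal (if 0 ≤ y then k2 * y ^ (b-1) * Real.exp (-(cc*y)) else 0)) := by
    rw [← lintegral_add_compl _ (measurableSet_Ioi (a := (0:ℝ))), Set.compl_Ioi]
    have hz : (∫⁻ x in Set.Iic (0:ℝ),
        ENNReal.ofReal (if 0 ≤ x then k1 * x ^ (a-1) * Real.exp (-(cc*x)) else 0) *
        (∫⁻ y in Set.Iio x,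
          ENNReal.ofReal (if 0 ≤ y then k2 * y ^ (b-1) * Real.exp (-(cc*y)) else 0))) = 0 := by
      rw [setLIntegral_congr_fun (g := fun _ => 0) measurableSet_Iic
        (fun x hx => ?_), lintegral_zero]
      rw [hinner0 x hx, mul_zero]
    rw [hz, add_zero]
  rw [hsplit]
  have hcongr : ∫⁻ x in Set.Ioi (0:ℝ),
      ENNReal.ofReal (if 0 ≤ x then k1 * x ^ (a-1) * Real.exp (-(cc*x)) else 0) *
      (∫⁻ y in Set.Iio x,
        ENNReal.ofReal (if 0 ≤ y then k2 * y ^ (b-1) * Real.exp (-(cc*y)) else 0)) =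
      ∫⁻ x in Set.Ioi (0:ℝ), (ENNReal.ofReal k1 * ENNReal.ofReal k2) *
        (ENNReal.ofReal (x ^ (a-1) * Real.exp (-(cc*x))) *
          ∫⁻ y in Set.Ioc (0:ℝ) x, ENNReal.ofReal (y ^ (b-1) * Real.exp (-(cc*y)))) := by
    refine setLIntegral_congr_fun measurableSet_Ioi
      (fun x hx => ?_)
    have hx : (0:ℝ) < x := hx
    rw [hinner x hx, if_pos hx.le, mul_assoc k1, ENNReal.ofReal_mul hk1]
    ring
  have hmono : Monotone fun x : ℝ =>
      ∫⁻ y in Set.Ioc (0:ℝ) x, ENNReal.ofReal (y ^ (b-1) * Real.exp (-(cc*y))) :=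
    fun x x' h => lintegral_mono_set (Set.Ioc_subset_Ioc_right h)
  rw [hcongr, lintegral_const_mul _ (f := fun x : ℝ => ENNReal.ofReal (x ^ (a-1) * Real.exp (-(cc*x))) *
      ∫⁻ y in Set.Ioc (0:ℝ) x, ENNReal.ofReal (y ^ (b-1) * Real.exp (-(cc*y))))
    ((Measurable.mul (by fun_prop) hmono.measurable))]
  rw [W_eval ha hb hc, ← ENNReal.ofReal_mul hk1]

lemma single_eval {cc a : ℝ} (hc : 0 < cc) (ha : 0 < a) {k1 : ℝ} (hk1 : 0 ≤ k1) :
    ∫⁻ x, ENNReal.ofReal (if 0 ≤ x then k1 * x ^ (a-1) * Real.exp (-(cc*x)) else 0) =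
      ENNReal.ofReal (k1 * (Real.Gamma a / cc ^ a)) := by
  rw [← lintegral_add_compl _ (measurableSet_Ioi (a := (0:ℝ))), Set.compl_Ioi]
  have h0 : (∫⁻ x in Set.Iic (0:ℝ),
      ENNReal.ofReal (if 0 ≤ x then k1 * x ^ (a-1) * Real.exp (-(cc*x)) else 0)) = 0 := by
    rw [← setLIntegral_congr (MeasureTheory.Iio_ae_eq_Iic (a := (0:ℝ)))]
    rw [setLIntegral_congr_fun (g := fun _ => 0) measurableSet_Iio
      (fun x hx => by
        have : ¬ (0:ℝ) ≤ x := by simp only [Set.mem_Iio] at hx; linarith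
        rw [if_neg this, ENNReal.ofReal_zero]), lintegral_zero]
  rw [h0, add_zero]
  have hcg : (∫⁻ x in Set.Ioi (0:ℝ),
      ENNReal.ofReal (if 0 ≤ x then k1 * x ^ (a-1) * Real.exp (-(cc*x)) else 0)) =
      ENNReal.ofReal k1 * ∫⁻ x in Set.Ioi (0:ℝ),
        ENNReal.ofReal (x ^ (a-1) * Real.exp (-(cc*x))) := by
    rw [← lintegral_const_mul _ (by fun_prop)]
    refine setLIntegral_congr_fun measurableSet_Ioi
      (fun x hx => ?_)
    have hx : (0:ℝ) < x := hx
    rw [if_pos hx.le, ← ENNReal.ofReal_mul hk1, mul_assoc]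
  rw [hcg, lintegral_rpow_exp ha hc, ← ENNReal.ofReal_mul hk1]

lemma dup_key {α : ℝ} (hα : 0 < α) (j : ℕ) (hj : j = 1 ∨ j = 2) :
    Real.Gamma (2*α + j) * (2:ℝ) ^ (-(2*α)) / (α * Real.Gamma α) =
      j * Real.Gamma (α + j - 1/2) / Real.sqrt π := by
  have hπ : (0:ℝ) < Real.sqrt π := Real.sqrt_pos.mpr Real.pi_pos
  have hΓ : (0:ℝ) < Real.Gamma α := Real.Gamma_pos_of_pos hα
  rcases hj with rfl | rfl
  · push_cast
    have hne : 2*α ≠ 0 := by positivity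
    have hadd := Real.Gamma_add_one hne
    have dup := Real.Gamma_mul_Gamma_add_half α
    have hpow : (2:ℝ) ^ (1-2*α) = 2 * (2:ℝ) ^ (-(2*α)) := by
      rw [show (1:ℝ)-2*α = -(2*α)+1 by ring, Real.rpow_add (by norm_num : (0:ℝ) < 2),
        Real.rpow_one]
      ring
    rw [hpow] at dup
    rw [show α + 1 - 1/2 = α + 1/2 by ring, hadd,
      div_eq_div_iff (by positivity) (ne_of_gt hπ)]
    linear_combination (-α) * dup
  · push_cast
    have hα' : α ≠ 0 := ne_of_gt hα
    have dup := Real.Gamma_mul_Gamma_add_half (α+1)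
    rw [Real.Gamma_add_one hα'] at dup
    rw [show 2*(α+1) = 2*α+2 by ring] at dup
    have hpow : (2:ℝ) ^ (1-(2*α+2)) = (2:ℝ) ^ (-(2*α)) / 2 := by
      rw [show (1:ℝ)-(2*α+2) = -(2*α)+(-1) by ring,
        Real.rpow_add (by norm_num : (0:ℝ) < 2), Real.rpow_neg_one]
      ring
    rw [hpow] at dup
    rw [show α + 2 - 1/2 = α + 1 + 1/2 by ring,
      div_eq_div_iff (by positivity) (ne_of_gt hπ)]
    linear_combination (-2:ℝ) * dup


lemma endgame {α θ : ℝ} (hα : 0 < α) (hθ : 0 < θ) (j : ℕ) (hj : j = 1 ∨ j = 2)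
    (I D G M : ℝ≥0∞)
    (hkey : I + D = G + M)
    (hG : G = ENNReal.ofReal ((θ⁻¹^α/Real.Gamma α)*(θ⁻¹^α/Real.Gamma α) *
      (Real.Gamma (2*α+(j:ℝ))/θ⁻¹^(2*α+(j:ℝ)) *
        ∫ v in Set.Ioc (0:ℝ) 1, v ^ (α+(j:ℝ)-1) * (1+v) ^ (-(2*α+(j:ℝ))))))
    (hD : D = ENNReal.ofReal ((θ⁻¹^α/Real.Gamma α)*(θ⁻¹^α/Real.Gamma α) *
      (Real.Gamma (2*α+(j:ℝ))/θ⁻¹^(2*α+(j:ℝ)) *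
        ∫ v in Set.Ioc (0:ℝ) 1, v ^ (α-1) * (1+v) ^ (-(2*α+(j:ℝ))))))
    (hM : M = ENNReal.ofReal ((θ⁻¹^α/Real.Gamma α) *
      (Real.Gamma (α+(j:ℝ))/θ⁻¹^(α+(j:ℝ))))) :
    I.toReal = θ ^ j * Real.Gamma (α + (j:ℝ)) / Real.Gamma α
          - ((j:ℝ) * θ ^ j / Real.sqrt π) * (Real.Gamma (α + (j:ℝ) - 1/2) / Real.Gamma α) := by
  have hc : (0:ℝ) < θ⁻¹ := inv_pos.mpr hθ
  have hΓ : (0:ℝ) < Real.Gamma α := Real.Gamma_pos_of_pos hα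
  have hj1 : (1:ℝ) ≤ (j:ℝ) := by rcases hj with rfl|rfl <;> norm_num
  have hs : (0:ℝ) < 2*α+(j:ℝ) := by linarith
  have hbj : (0:ℝ) < α+(j:ℝ) := by linarith
  set k := θ⁻¹^α/Real.Gamma α with hk
  have hknn : (0:ℝ) ≤ k := by
    rw [hk]; exact div_nonneg (Real.rpow_pos_of_pos hc _).le hΓ.le
  set Q := Real.Gamma (2*α+(j:ℝ))/θ⁻¹^(2*α+(j:ℝ)) with hQ
  have hQnn : (0:ℝ) ≤ Q := by
    rw [hQ]
    exact div_nonneg (Real.Gamma_pos_of_pos hs).le (Real.rpow_pos_of_pos hc _).le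
  set Jv := ∫ v in Set.Ioc (0:ℝ) 1, v ^ (α+(j:ℝ)-1) * (1+v) ^ (-(2*α+(j:ℝ))) with hJv
  set Kv := ∫ v in Set.Ioc (0:ℝ) 1, v ^ (α-1) * (1+v) ^ (-(2*α+(j:ℝ))) with hKv
  set Mr := k * (Real.Gamma (α+(j:ℝ))/θ⁻¹^(α+(j:ℝ))) with hMr
  have hJnn : (0:ℝ) ≤ Jv := by
    rw [hJv]
    refine setIntegral_nonneg measurableSet_Ioc fun v hv => ?_
    have h1 : (0:ℝ) < v := hv.1
    have h2 : (0:ℝ) ≤ 1 + v := by linarith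
    exact mul_nonneg (Real.rpow_nonneg h1.le _) (Real.rpow_nonneg h2 _)
  have hKnn : (0:ℝ) ≤ Kv := by
    rw [hKv]
    refine setIntegral_nonneg measurableSet_Ioc fun v hv => ?_
    have h1 : (0:ℝ) < v := hv.1
    have h2 : (0:ℝ) ≤ 1 + v := by linarith
    exact mul_nonneg (Real.rpow_nonneg h1.le _) (Real.rpow_nonneg h2 _)
  have hMnn : (0:ℝ) ≤ Mr := by
    rw [hMr]
    exact mul_nonneg hknn
      (div_nonneg (Real.Gamma_pos_of_pos hbj).le (Real.rpow_pos_of_pos hc _).le)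
  have hGr : (0:ℝ) ≤ k*k*(Q*Jv) :=
    mul_nonneg (mul_nonneg hknn hknn) (mul_nonneg hQnn hJnn)
  have hDr : (0:ℝ) ≤ k*k*(Q*Kv) :=
    mul_nonneg (mul_nonneg hknn hknn) (mul_nonneg hQnn hKnn)
  have hKJ : Kv - Jv = (2:ℝ)^(-(2*α))/α := by
    have h1 : IntegrableOn (fun v : ℝ => v ^ (α-1) * (1+v) ^ (-(2*α+(j:ℝ))))
        (Set.Ioc (0:ℝ) 1) := integrableOn_core hα hs
    have h2 : IntegrableOn (fun v : ℝ => v ^ (α+(j:ℝ)-1) * (1+v) ^ (-(2*α+(j:ℝ))))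
        (Set.Ioc (0:ℝ) 1) := integrableOn_core hbj hs
    rw [hKv, hJv, ← MeasureTheory.integral_sub h1 h2]
    have hptw : ∀ v : ℝ, v ^ (α-1) * (1+v) ^ (-(2*α+(j:ℝ)))
        - v ^ (α+(j:ℝ)-1) * (1+v) ^ (-(2*α+(j:ℝ)))
        = (v ^ (α-1) - v ^ (α+(j:ℝ)-1)) * (1+v) ^ (-(2*α+(j:ℝ))) := fun v => by ring
    simp only [hptw]
    rcases hj with rfl | rfl
    · simp only [Nat.cast_one, show α+(1:ℝ)-1 = α from by ring]
      exact ftc1 hα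
    · simp only [Nat.cast_ofNat, show α+(2:ℝ)-1 = α+1 from by ring]
      exact ftc2 hα
  have hkey2 : I + ENNReal.ofReal (k*k*(Q*Kv)) = ENNReal.ofReal (k*k*(Q*Jv) + Mr) := by
    rw [← hD, hkey, hG, hM, ← ENNReal.ofReal_add hGr hMnn]
  have hIeq : I = ENNReal.ofReal (k*k*(Q*Jv) + Mr) - ENNReal.ofReal (k*k*(Q*Kv)) :=
    ENNReal.eq_sub_of_add_eq ENNReal.ofReal_ne_top hkey2
  have hle' : ENNReal.ofReal (k*k*(Q*Kv)) ≤ ENNReal.ofReal (k*k*(Q*Jv) + Mr) := by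
    rw [← hkey2]; exact le_add_self
  have hle : k*k*(Q*Kv) ≤ k*k*(Q*Jv) + Mr :=
    (ENNReal.ofReal_le_ofReal_iff (by linarith)).mp hle'
  rw [hIeq, ← ENNReal.ofReal_sub _ hDr, ENNReal.toReal_ofReal (by linarith)]
  have hcc : ∀ x y : ℝ, θ⁻¹ ^ x / θ⁻¹ ^ (x+y) = θ ^ y := fun x y => by
    rw [← Real.rpow_sub hc, show x - (x+y) = -y from by ring, Real.rpow_neg hc.le,
      Real.inv_rpow hθ.le, inv_inv]
  have hMv : Mr = θ ^ j * Real.Gamma (α+(j:ℝ)) / Real.Gamma α := by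
    rw [hMr, hk]
    rw [show θ⁻¹^α/Real.Gamma α * (Real.Gamma (α+(j:ℝ))/θ⁻¹^(α+(j:ℝ)))
      = (θ⁻¹^α/θ⁻¹^(α+(j:ℝ))) * (Real.Gamma (α+(j:ℝ))/Real.Gamma α) from by ring,
      hcc α (j:ℝ), ← Real.rpow_natCast θ j]
    ring
  have hQv : k*k*Q = θ ^ j * Real.Gamma (2*α+(j:ℝ)) / (Real.Gamma α * Real.Gamma α) := by
    rw [hk, hQ]
    have hαα : θ⁻¹^α * θ⁻¹^α = θ⁻¹^(2*α) := by
      rw [← Real.rpow_add hc]; congr 1; ring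
    rw [show θ⁻¹^α/Real.Gamma α * (θ⁻¹^α/Real.Gamma α) *
        (Real.Gamma (2*α+(j:ℝ))/θ⁻¹^(2*α+(j:ℝ)))
      = (θ⁻¹^α * θ⁻¹^α) / θ⁻¹^(2*α+(j:ℝ)) *
        (Real.Gamma (2*α+(j:ℝ)) / (Real.Gamma α * Real.Gamma α)) from by ring, hαα]
    rw [show (2*α+(j:ℝ)) = 2*α + (j:ℝ) from rfl, hcc (2*α) (j:ℝ), ← Real.rpow_natCast θ j]
    ring
  have hsub : k*k*(Q*Jv) + Mr - k*k*(Q*Kv) = Mr - (k*k*Q)*(Kv - Jv) := by ring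
  rw [hsub, hKJ, hMv, hQv]
  have hdup := dup_key hα j hj
  have hπ : (0:ℝ) < Real.sqrt π := Real.sqrt_pos.mpr Real.pi_pos
  rw [div_eq_div_iff (by positivity) (ne_of_gt hπ)] at hdup
  have hsec : θ^j * Real.Gamma (2*α+(j:ℝ)) / (Real.Gamma α * Real.Gamma α) * ((2:ℝ)^(-(2*α))/α)
      = ((j:ℝ) * θ^j / Real.sqrt π) * (Real.Gamma (α+(j:ℝ)-1/2) / Real.Gamma α) := by
    rw [div_mul_div_comm, div_mul_div_comm,
      div_eq_div_iff (by positivity) (ne_of_gt (by positivity : (0:ℝ) < Real.sqrt π * Real.Gamma α))]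
    linear_combination (θ^j * Real.Gamma α) * hdup
  rw [hsec]

end MinGammaAux

open MinGammaAux in
/-- If `X, Y` are i.i.d. Gamma(shape `α`, scale `θ`) random variables, then for `j ∈ {1,2}`,
`E[(min{X,Y})^j] = θ^j Γ(α+j)/Γ(α) − (j θ^j/√π) Γ(α+j−1/2)/Γ(α)`. -/
theorem min_gamma_moment {Ω : Type*} [MeasureSpace Ω] [IsProbabilityMeasure (ℙ : Measure Ω)]
    (X Y : Ω → ℝ) (α θ : ℝ) (hα : 0 < α) (hθ : 0 < θ)
    (hX : Measure.map X ℙ = gammaMeasure α θ⁻¹)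
    (hY : Measure.map Y ℙ = gammaMeasure α θ⁻¹)
    (hindep : IndepFun X Y ℙ) :
    ∀ j ∈ ({1, 2} : Set ℕ),
      ∫ ω, (min (X ω) (Y ω)) ^ j ∂ℙ =
        θ ^ j * Real.Gamma (α + j) / Real.Gamma α
          - (j * θ ^ j / Real.sqrt π) * (Real.Gamma (α + j - 1/2) / Real.Gamma α) := by
  intro j hj
  simp only [Set.mem_insert_iff, Set.mem_singleton_iff] at hj
  have hj1 : 1 ≤ j := by rcases hj with rfl | rfl <;> norm_num
  have hjR : (1:ℝ) ≤ (j:ℝ) := by exact_mod_cast hj1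
  have hcpos : (0:ℝ) < θ⁻¹ := inv_pos.mpr hθ
  have hΓpos : (0:ℝ) < Real.Gamma α := Real.Gamma_pos_of_pos hα
  set c : ℝ := θ⁻¹ with hcdef
  set μ : Measure ℝ := gammaMeasure α c with hμdef
  haveI hprob : IsProbabilityMeasure μ := isProbabilityMeasure_gammaMeasure hα hcpos
  have hpm : Measurable (gammaPDF α c) := (measurable_gammaPDFReal α c).ennreal_ofReal
  have hXm : AEMeasurable X ℙ :=
    aemeasurable_of_map_neZero (by rw [hX]; exact ⟨hprob.ne_zero⟩)
  have hYm : AEMeasurable Y ℙ :=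
    aemeasurable_of_map_neZero (by rw [hY]; exact ⟨hprob.ne_zero⟩)
  have hμIio0 : μ (Set.Iio 0) = 0 := by
    rw [hμdef, gammaMeasure, withDensity_apply _ measurableSet_Iio]
    exact lintegral_gammaPDF_of_nonpos le_rfl
  have hX0 : ∀ᵐ ω ∂ℙ, 0 ≤ X ω := by
    have hmap : ℙ (X ⁻¹' (Set.Iio 0)) = 0 := by
      rw [← Measure.map_apply_of_aemeasurable hXm measurableSet_Iio, hX]
      exact hμIio0
    rw [ae_iff]
    convert hmap using 2
    ext ω
    simp [not_le]
  have hY0 : ∀ᵐ ω ∂ℙ, 0 ≤ Y ω := by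
    have hmap : ℙ (Y ⁻¹' (Set.Iio 0)) = 0 := by
      rw [← Measure.map_apply_of_aemeasurable hYm measurableSet_Iio, hY]
      exact hμIio0
    rw [ae_iff]
    convert hmap using 2
    ext ω
    simp [not_le]
  have hnn : 0 ≤ᵐ[ℙ] fun ω => (min (X ω) (Y ω)) ^ j := by
    filter_upwards [hX0, hY0] with ω h1 h2
    exact pow_nonneg (le_min h1 h2) j
  have hminmeas : AEStronglyMeasurable (fun ω => (min (X ω) (Y ω)) ^ j) ℙ :=
    ((hXm.min hYm).pow_const j).aestronglyMeasurable
  rw [integral_eq_lintegral_of_nonneg_ae hnn hminmeas]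
  have hpair : Measure.map (fun ω => (X ω, Y ω)) ℙ = μ.prod μ := by
    rw [(ProbabilityTheory.indepFun_iff_map_prod_eq_prod_map_map hXm hYm).mp hindep, hX, hY]
  have hFmeas : Measurable fun p : ℝ × ℝ => ENNReal.ofReal (min p.1 p.2 ^ j) :=
    ((measurable_fst.min measurable_snd).pow_const j).ennreal_ofReal
  have hlift : ∫⁻ ω, ENNReal.ofReal ((min (X ω) (Y ω)) ^ j) ∂ℙ
      = ∫⁻ x, ∫⁻ y, ENNReal.ofReal (min x y ^ j) ∂μ ∂μ := by
    have h1 : ∫⁻ z, ENNReal.ofReal (min z.1 z.2 ^ j) ∂(Measure.map (fun ω => (X ω, Y ω)) ℙ)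
        = ∫⁻ ω, ENNReal.ofReal ((min (X ω) (Y ω)) ^ j) ∂ℙ :=
      lintegral_map' hFmeas.aemeasurable (hXm.prodMk hYm)
    rw [← h1, hpair, MeasureTheory.lintegral_prod _ hFmeas.aemeasurable]
  rw [hlift]
  -- inner split
  have hg1mono : Monotone fun x : ℝ => ∫⁻ y in Set.Iio x, ENNReal.ofReal (y ^ j) ∂μ :=
    fun x x' h => lintegral_mono_set (Set.Iio_subset_Iio h)
  have hsplit_in : ∀ x : ℝ, (∫⁻ y, ENNReal.ofReal (min x y ^ j) ∂μ)
      = (∫⁻ y in Set.Iio x, ENNReal.ofReal (y ^ j) ∂μ)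
        + ENNReal.ofReal (x ^ j) * μ (Set.Ici x) := by
    intro x
    rw [← lintegral_add_compl (fun y : ℝ => ENNReal.ofReal (min x y ^ j))
      (measurableSet_Iio (a := x)) (μ := μ), Set.compl_Iio]
    congr 1
    · refine setLIntegral_congr_fun measurableSet_Iio
        (fun y hy => ?_)
      rw [min_eq_right (le_of_lt hy)]
    · rw [setLIntegral_congr_fun measurableSet_Ici
        (fun y hy => by rw [min_eq_left hy]),
        setLIntegral_const]
  have hI : (∫⁻ x, ∫⁻ y, ENNReal.ofReal (min x y ^ j) ∂μ ∂μ)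
      = (∫⁻ x, (∫⁻ y in Set.Iio x, ENNReal.ofReal (y ^ j) ∂μ) ∂μ)
        + ∫⁻ x, ENNReal.ofReal (x ^ j) * μ (Set.Ici x) ∂μ := by
    calc (∫⁻ x, ∫⁻ y, ENNReal.ofReal (min x y ^ j) ∂μ ∂μ)
        = ∫⁻ x, ((∫⁻ y in Set.Iio x, ENNReal.ofReal (y ^ j) ∂μ)
            + ENNReal.ofReal (x ^ j) * μ (Set.Ici x)) ∂μ := lintegral_congr hsplit_in
      _ = _ := lintegral_add_left hg1mono.measurable _
  have hanti : Antitone fun x : ℝ => μ (Set.Ici x) :=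
    fun x x' h => measure_mono (Set.Ici_subset_Ici.mpr h)
  have hmeasB : Measurable fun x : ℝ => ENNReal.ofReal (x ^ j) * μ (Set.Ici x) :=
    (by fun_prop : Measurable fun x : ℝ => ENNReal.ofReal (x ^ j)).mul hanti.measurable
  have hBD : (∫⁻ x, ENNReal.ofReal (x ^ j) * μ (Set.Ici x) ∂μ)
      + (∫⁻ x, ENNReal.ofReal (x ^ j) * μ (Set.Iio x) ∂μ)
      = ∫⁻ x, ENNReal.ofReal (x ^ j) ∂μ := by
    rw [← lintegral_add_left hmeasB]
    refine lintegral_congr fun x => ?_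
    rw [← mul_add]
    have h1 : μ (Set.Ici x) + μ (Set.Iio x) = 1 := by
      have h2 := measure_add_measure_compl (μ := μ) (measurableSet_Ici (a := x))
      rwa [Set.compl_Ici, measure_univ] at h2
    rw [h1, mul_one]
  have hkey : (∫⁻ x, ∫⁻ y, ENNReal.ofReal (min x y ^ j) ∂μ ∂μ)
      + (∫⁻ x, ENNReal.ofReal (x ^ j) * μ (Set.Iio x) ∂μ)
      = (∫⁻ x, (∫⁻ y in Set.Iio x, ENNReal.ofReal (y ^ j) ∂μ) ∂μ)
        + ∫⁻ x, ENNReal.ofReal (x ^ j) ∂μ := by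
    rw [hI, add_assoc, hBD]
  -- pointwise pdf identities
  have hbjpos : (0:ℝ) < α + (j:ℝ) := by linarith
  have hpt : ∀ y : ℝ, gammaPDF α c y * ENNReal.ofReal (y ^ j) =
      ENNReal.ofReal (if 0 ≤ y then (c ^ α / Real.Gamma α) * y ^ (α+(j:ℝ)-1) * Real.exp (-(c*y)) else 0) := by
    intro y
    rcases lt_trichotomy y 0 with hy | hy | hy
    · rw [gammaPDF_of_neg hy, zero_mul, if_neg (not_le.mpr hy), ENNReal.ofReal_zero]
    · subst hy
      rw [zero_pow (by omega : j ≠ 0), ENNReal.ofReal_zero, mul_zero, if_pos le_rfl,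
        Real.zero_rpow (by nlinarith : α+(j:ℝ)-1 ≠ 0)]
      norm_num
    · rw [gammaPDF_of_nonneg hy.le, if_pos hy.le, ← ENNReal.ofReal_mul (by positivity)]
      congr 1
      rw [← Real.rpow_natCast y j,
        show c ^ α / Real.Gamma α * y ^ (α-1) * Real.exp (-(c*y)) * y ^ ((j:ℕ):ℝ)
          = (c ^ α / Real.Gamma α) * ((y ^ (α-1) * y ^ ((j:ℕ):ℝ)) * Real.exp (-(c*y))) from by ring,
        ← Real.rpow_add hy, show α - 1 + ((j:ℕ):ℝ) = α + (j:ℝ) - 1 from by push_cast; ring]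
      ring
  have hpt0 : ∀ y : ℝ, gammaPDF α c y =
      ENNReal.ofReal (if 0 ≤ y then (c ^ α / Real.Gamma α) * y ^ (α-1) * Real.exp (-(c*y)) else 0) := by
    intro y
    rw [gammaPDF_eq]
  have hknn : (0:ℝ) ≤ c ^ α / Real.Gamma α := by positivity
  -- inner integral conversions
  have hinner_eqb : ∀ x : ℝ, (∫⁻ y in Set.Iio x, ENNReal.ofReal (y ^ j) ∂μ)
      = ∫⁻ y in Set.Iio x, ENNReal.ofReal
          (if 0 ≤ y then (c ^ α / Real.Gamma α) * y ^ (α+(j:ℝ)-1) * Real.exp (-(c*y)) else 0) := by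
    intro x
    rw [hμdef, gammaMeasure, restrict_withDensity measurableSet_Iio,
      lintegral_withDensity_eq_lintegral_mul _ hpm (by fun_prop)]
    exact lintegral_congr fun y => hpt y
  have hinner_eq0 : ∀ x : ℝ, μ (Set.Iio x)
      = ∫⁻ y in Set.Iio x, ENNReal.ofReal
          (if 0 ≤ y then (c ^ α / Real.Gamma α) * y ^ (α-1) * Real.exp (-(c*y)) else 0) := by
    intro x
    rw [hμdef, gammaMeasure, withDensity_apply _ measurableSet_Iio]
    exact lintegral_congr fun y => hpt0 y
  -- closed form for G
  have hmono2 : Monotone fun x : ℝ => ∫⁻ y in Set.Iio x, ENNReal.ofReal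
      (if 0 ≤ y then (c ^ α / Real.Gamma α) * y ^ (α+(j:ℝ)-1) * Real.exp (-(c*y)) else 0) :=
    fun x x' h => lintegral_mono_set (Set.Iio_subset_Iio h)
  have hmono0 : Monotone fun x : ℝ => ∫⁻ y in Set.Iio x, ENNReal.ofReal
      (if 0 ≤ y then (c ^ α / Real.Gamma α) * y ^ (α-1) * Real.exp (-(c*y)) else 0) :=
    fun x x' h => lintegral_mono_set (Set.Iio_subset_Iio h)
  have hG : (∫⁻ x, (∫⁻ y in Set.Iio x, ENNReal.ofReal (y ^ j) ∂μ) ∂μ)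
      = ENNReal.ofReal ((c ^ α / Real.Gamma α) * (c ^ α / Real.Gamma α)) *
          (ENNReal.ofReal (Real.Gamma (α+(α+(j:ℝ))) / c ^ (α+(α+(j:ℝ)))) *
            ENNReal.ofReal (∫ v in Set.Ioc (0:ℝ) 1, v ^ (α+(j:ℝ)-1) * (1+v) ^ (-(α+(α+(j:ℝ)))))) := by
    calc (∫⁻ x, (∫⁻ y in Set.Iio x, ENNReal.ofReal (y ^ j) ∂μ) ∂μ)
        = ∫⁻ x, (∫⁻ y in Set.Iio x, ENNReal.ofReal
            (if 0 ≤ y then (c ^ α / Real.Gamma α) * y ^ (α+(j:ℝ)-1) * Real.exp (-(c*y)) else 0)) ∂μ :=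
          lintegral_congr fun x => hinner_eqb x
      _ = ∫⁻ x, gammaPDF α c x * (∫⁻ y in Set.Iio x, ENNReal.ofReal
            (if 0 ≤ y then (c ^ α / Real.Gamma α) * y ^ (α+(j:ℝ)-1) * Real.exp (-(c*y)) else 0)) := by
          rw [hμdef, gammaMeasure, lintegral_withDensity_eq_lintegral_mul _ hpm hmono2.measurable]
          simp only [Pi.mul_apply]
      _ = ∫⁻ x, ENNReal.ofReal
            (if 0 ≤ x then (c ^ α / Real.Gamma α) * x ^ (α-1) * Real.exp (-(c*x)) else 0) *
          (∫⁻ y in Set.Iio x, ENNReal.ofReal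
            (if 0 ≤ y then (c ^ α / Real.Gamma α) * y ^ (α+(j:ℝ)-1) * Real.exp (-(c*y)) else 0)) :=
          lintegral_congr fun x => by rw [hpt0 x]
      _ = _ := pair_eval hcpos hα hbjpos hknn hknn
  have hD : (∫⁻ x, ENNReal.ofReal (x ^ j) * μ (Set.Iio x) ∂μ)
      = ENNReal.ofReal ((c ^ α / Real.Gamma α) * (c ^ α / Real.Gamma α)) *
          (ENNReal.ofReal (Real.Gamma ((α+(j:ℝ))+α) / c ^ ((α+(j:ℝ))+α)) *
            ENNReal.ofReal (∫ v in Set.Ioc (0:ℝ) 1, v ^ (α-1) * (1+v) ^ (-((α+(j:ℝ))+α)))) := by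
    have hmeasD : Measurable fun x : ℝ => ENNReal.ofReal (x ^ j) *
        ∫⁻ y in Set.Iio x, ENNReal.ofReal
          (if 0 ≤ y then (c ^ α / Real.Gamma α) * y ^ (α-1) * Real.exp (-(c*y)) else 0) :=
      (by fun_prop : Measurable fun x : ℝ => ENNReal.ofReal (x ^ j)).mul hmono0.measurable
    calc (∫⁻ x, ENNReal.ofReal (x ^ j) * μ (Set.Iio x) ∂μ)
        = ∫⁻ x, (ENNReal.ofReal (x ^ j) *
            ∫⁻ y in Set.Iio x, ENNReal.ofReal
              (if 0 ≤ y then (c ^ α / Real.Gamma α) * y ^ (α-1) * Real.exp (-(c*y)) else 0)) ∂μ :=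
          lintegral_congr fun x => by rw [hinner_eq0 x]
      _ = ∫⁻ x, gammaPDF α c x * (ENNReal.ofReal (x ^ j) *
            ∫⁻ y in Set.Iio x, ENNReal.ofReal
              (if 0 ≤ y then (c ^ α / Real.Gamma α) * y ^ (α-1) * Real.exp (-(c*y)) else 0)) := by
          rw [hμdef, gammaMeasure, lintegral_withDensity_eq_lintegral_mul _ hpm hmeasD]
          simp only [Pi.mul_apply]
      _ = ∫⁻ x, ENNReal.ofReal
            (if 0 ≤ x then (c ^ α / Real.Gamma α) * x ^ (α+(j:ℝ)-1) * Real.exp (-(c*x)) else 0) *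
          (∫⁻ y in Set.Iio x, ENNReal.ofReal
            (if 0 ≤ y then (c ^ α / Real.Gamma α) * y ^ (α-1) * Real.exp (-(c*y)) else 0)) :=
          lintegral_congr fun x => by rw [← mul_assoc, hpt x]
      _ = _ := pair_eval hcpos hbjpos hα hknn hknn
  have hM : (∫⁻ x, ENNReal.ofReal (x ^ j) ∂μ)
      = ENNReal.ofReal ((c ^ α / Real.Gamma α) * (Real.Gamma (α+(j:ℝ)) / c ^ (α+(j:ℝ)))) := by
    calc (∫⁻ x, ENNReal.ofReal (x ^ j) ∂μ)
        = ∫⁻ x, gammaPDF α c x * ENNReal.ofReal (x ^ j) := by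
          rw [hμdef, gammaMeasure, lintegral_withDensity_eq_lintegral_mul _ hpm
            (by fun_prop : Measurable fun x : ℝ => ENNReal.ofReal (x ^ j))]
          simp only [Pi.mul_apply]
      _ = ∫⁻ x, ENNReal.ofReal
            (if 0 ≤ x then (c ^ α / Real.Gamma α) * x ^ (α+(j:ℝ)-1) * Real.exp (-(c*x)) else 0) :=
          lintegral_congr fun x => hpt x
      _ = _ := single_eval hcpos hbjpos hknn
  -- normalize exponents and apply endgame
  have hn1 : α+(α+(j:ℝ)) = 2*α+(j:ℝ) := by ring
  have hn2 : (α+(j:ℝ))+α = 2*α+(j:ℝ) := by ring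
  simp only [hn1] at hG
  simp only [hn2] at hD
  rw [← ENNReal.ofReal_mul (div_nonneg (Real.Gamma_pos_of_pos (by linarith : (0:ℝ) < 2*α+(j:ℝ))).le
      (Real.rpow_pos_of_pos hcpos _).le),
    ← ENNReal.ofReal_mul (mul_nonneg hknn hknn)] at hG hD
  exact endgame hα hθ j hj _ _ _ _ hkey hG hD hM
end

section
/- Let X and Y be i.i.d. random variables with Gamma(α, θ) distribution (shape α > 0, scale θ > 0). Then E[min{X,Y}] = θα − (θ/√π) · Γ(α + 1/2)/Γ(α). -/
open MeasureTheory ProbabilityTheory Real Set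

namespace MinGammaAux

lemma measurable_gammaPDF0 (α r : ℝ) : Measurable (gammaPDF α r) :=
  (measurable_gammaPDFReal α r).ennreal_ofReal

lemma gammaPDF_ne_topZ (α r x : ℝ) : gammaPDF α r x ≠ ⊤ := by
  rw [gammaPDF]; exact ENNReal.ofReal_ne_top



lemma cpow_eq_ofReal {u v x : ℝ} (h0 : 0 ≤ x) (h1 : x ≤ 1) :
    (x:ℂ) ^ ((u:ℂ) - 1) * (1 - (x:ℂ)) ^ ((v:ℂ) - 1)
      = ((x ^ (u-1) * (1-x) ^ (v-1) : ℝ) : ℂ) := by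
  rw [Complex.ofReal_mul, Complex.ofReal_cpow h0, Complex.ofReal_cpow (by linarith)]
  push_cast
  ring_nf

lemma beta_integrableOn {u v : ℝ} (hu : 0 < u) (hv : 0 < v) :
    IntegrableOn (fun x : ℝ => x ^ (u-1) * (1-x) ^ (v-1)) (Ioo 0 1) := by
  have h := Complex.betaIntegral_convergent (u := u) (v := v) (by simpa) (by simpa)
  have h2 : IntegrableOn (fun x : ℝ => (x:ℂ) ^ ((u:ℂ)-1) * (1-(x:ℂ)) ^ ((v:ℂ)-1)) (Ioc 0 1) := by
    rw [← intervalIntegrable_iff_integrableOn_Ioc_of_le zero_le_one]; exact h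
  have h3 := h2.re
  refine (MeasureTheory.IntegrableOn.congr_fun h3 (fun x hx => ?_) measurableSet_Ioc).mono_set
    Ioo_subset_Ioc_self
  simp [cpow_eq_ofReal hx.1.le hx.2]

lemma beta_integral_Ioo {u v : ℝ} (hu : 0 < u) (hv : 0 < v) :
    ∫ x in Ioo (0:ℝ) 1, x ^ (u-1) * (1-x) ^ (v-1) = Gamma u * Gamma v / Gamma (u+v) := by
  have h := Complex.Gamma_mul_Gamma_eq_betaIntegral (s := (u:ℂ)) (t := (v:ℂ)) (by simpa) (by simpa)
  rw [Complex.betaIntegral] at h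
  have heq : (∫ x : ℝ in (0:ℝ)..1, (x:ℂ) ^ ((u:ℂ) - 1) * (1 - (x:ℂ)) ^ ((v:ℂ) - 1))
      = ((∫ x in Ioc (0:ℝ) 1, x ^ (u-1) * (1-x) ^ (v-1) : ℝ) : ℂ) := by
    rw [intervalIntegral.integral_of_le zero_le_one]
    exact (setIntegral_congr_fun measurableSet_Ioc
      (fun x hx => cpow_eq_ofReal hx.1.le hx.2)).trans integral_ofReal
  rw [heq, ← Complex.ofReal_add u v, Complex.Gamma_ofReal, Complex.Gamma_ofReal,
    Complex.Gamma_ofReal, ← Complex.ofReal_mul, ← Complex.ofReal_mul, Complex.ofReal_inj] at h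
  have hpos : 0 < Gamma (u+v) := Gamma_pos_of_pos (by linarith)
  rw [setIntegral_congr_set Ioo_ae_eq_Ioc]
  field_simp
  linarith [h]





lemma reflect_integral (h : ℝ → ℝ) :
    ∫ b in Ioo (2⁻¹:ℝ) 1, h b = ∫ b in Ioo (0:ℝ) 2⁻¹, h (1-b) := by
  have himg : (fun x : ℝ => 1 - x) '' Ioo (0:ℝ) 2⁻¹ = Ioo (2⁻¹:ℝ) 1 := by
    rw [show (fun x : ℝ => 1 - x) = (fun x : ℝ => (1:ℝ) - x) from rfl, Set.image_const_sub_Ioo]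
    norm_num
  have := integral_image_eq_integral_abs_deriv_smul (s := Ioo (0:ℝ) 2⁻¹)
    (f := fun x : ℝ => 1 - x)
    (f' := fun _ => (-1:ℝ)) measurableSet_Ioo
    (fun x _ => ((hasDerivAt_id x).const_sub 1).hasDerivWithinAt)
    (fun a _ b _ hab => by simpa using hab) h
  rw [himg] at this
  simpa using this

lemma S_val {α : ℝ} (hα : 0 < α) :
    ∫ b in Ioo (2⁻¹:ℝ) 1, b ^ (α-1) * (1-b) ^ (α-1)
      = Gamma α * Gamma α / Gamma (2*α) / 2 := by
  have hint := beta_integrableOn hα hα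
  have hrefl : ∫ b in Ioo (2⁻¹:ℝ) 1, b ^ (α-1) * (1-b) ^ (α-1)
      = ∫ b in Ioo (0:ℝ) 2⁻¹, b ^ (α-1) * (1-b) ^ (α-1) := by
    rw [reflect_integral]
    refine setIntegral_congr_fun measurableSet_Ioo (fun x hx => ?_)
    simp only [sub_sub_cancel]
    ring
  have hIco : ∫ b in Ico (2⁻¹:ℝ) 1, b ^ (α-1) * (1-b) ^ (α-1)
      = ∫ b in Ioo (2⁻¹:ℝ) 1, b ^ (α-1) * (1-b) ^ (α-1) :=
    setIntegral_congr_set Ioo_ae_eq_Ico.symm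
  have hu : Ioo (0:ℝ) 2⁻¹ ∪ Ico 2⁻¹ 1 = Ioo 0 1 :=
    Set.Ioo_union_Ico_eq_Ioo (by norm_num) (by norm_num)
  have hdisj : Disjoint (Ioo (0:ℝ) 2⁻¹) (Ico 2⁻¹ 1) :=
    Set.disjoint_left.mpr (fun x hx hx' => absurd hx.2 (not_lt.mpr hx'.1))
  have hsplit : ∫ x in Ioo (0:ℝ) 1, x ^ (α-1) * (1-x) ^ (α-1)
      = (∫ b in Ioo (0:ℝ) 2⁻¹, b ^ (α-1) * (1-b) ^ (α-1))
        + ∫ b in Ico (2⁻¹:ℝ) 1, b ^ (α-1) * (1-b) ^ (α-1) := by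
    rw [← hu, setIntegral_union hdisj measurableSet_Ico
      (hint.mono_set (by rw [← hu]; exact subset_union_left))
      (hint.mono_set (by rw [← hu]; exact subset_union_right))]
  rw [beta_integral_Ioo hα hα, show α + α = 2*α by ring, hIco, ← hrefl] at hsplit
  linarith

lemma diff_val {α : ℝ} (hα : 0 < α) :
    ∫ b in Ioo (2⁻¹:ℝ) 1, (2*b-1) * (b - b^2) ^ (α-1) = (4:ℝ) ^ (-α) / α := by
  have himg : (fun b : ℝ => b - b^2) '' Ioo (2⁻¹:ℝ) 1 = Ioo (0:ℝ) 4⁻¹ := by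
    ext w
    simp only [mem_image, mem_Ioo]
    constructor
    · rintro ⟨b, ⟨hb1, hb2⟩, rfl⟩
      constructor
      · nlinarith
      · nlinarith
    · rintro ⟨hw1, hw2⟩
      have h4w : 0 < 1 - 4*w := by linarith
      have hs0 : 0 < Real.sqrt (1 - 4*w) := Real.sqrt_pos.mpr h4w
      have hs1 : Real.sqrt (1 - 4*w) < 1 := by
        rw [show Real.sqrt (1-4*w) < 1 ↔ 1 - 4*w < 1^2 from Real.sqrt_lt' one_pos]
        nlinarith
      have hsq : Real.sqrt (1 - 4*w) ^ 2 = 1 - 4*w := Real.sq_sqrt h4w.le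
      refine ⟨(1 + Real.sqrt (1 - 4*w))/2, ⟨by linarith, by linarith⟩, ?_⟩
      nlinarith
  have hderiv : ∀ b ∈ Ioo (2⁻¹:ℝ) 1,
      HasDerivWithinAt (fun b : ℝ => b - b^2) (1 - 2*b) (Ioo (2⁻¹:ℝ) 1) b :=
    fun b _ => ((hasDerivAt_id' (x := b)).sub (hasDerivAt_pow 2 b)).hasDerivWithinAt.congr_deriv (by norm_num)
  have hinj : InjOn (fun b : ℝ => b - b^2) (Ioo (2⁻¹:ℝ) 1) := by
    intro a ha b hb hab
    simp only [mem_Ioo] at ha hb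
    simp only [] at hab
    nlinarith [ha.1, hb.1]
  have key := integral_image_eq_integral_abs_deriv_smul measurableSet_Ioo hderiv hinj
    (fun w : ℝ => w ^ (α-1))
  rw [himg] at key
  have hleft : ∫ w in Ioo (0:ℝ) 4⁻¹, w ^ (α-1) = (4:ℝ)^(-α) / α := by
    rw [setIntegral_congr_set Ioo_ae_eq_Ioc,
      ← intervalIntegral.integral_of_le (by norm_num : (0:ℝ) ≤ 4⁻¹),
      integral_rpow (Or.inl (by linarith)), sub_add_cancel,
      Real.zero_rpow hα.ne', Real.inv_rpow (by norm_num), ← Real.rpow_neg (by norm_num)]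
    ring
  rw [hleft] at key
  rw [key]
  refine setIntegral_congr_fun measurableSet_Ioo (fun b hb => ?_)
  rcases hb with ⟨hb1, hb2⟩
  rw [smul_eq_mul, abs_of_nonpos (by nlinarith)]
  ring

lemma A_val {α : ℝ} (hα : 0 < α) :
    ∫ b in Ioo (2⁻¹:ℝ) 1, b ^ (α-1) * (1-b) ^ α
      = Gamma α * Gamma α / Gamma (2*α) / 4 - (4:ℝ) ^ (-α) / (2*α) := by
  have hA : IntegrableOn (fun b : ℝ => b ^ (α-1) * (1-b) ^ α) (Ioo 2⁻¹ 1) := by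
    have := (beta_integrableOn hα (by linarith : (0:ℝ) < α + 1)).mono_set
      (Set.Ioo_subset_Ioo_left (by norm_num) : Ioo (2⁻¹:ℝ) 1 ⊆ Ioo 0 1)
    simpa using this
  have hA'' : IntegrableOn (fun b : ℝ => b ^ α * (1-b) ^ (α-1)) (Ioo 2⁻¹ 1) := by
    have := (beta_integrableOn (by linarith : (0:ℝ) < α + 1) hα).mono_set
      (Set.Ioo_subset_Ioo_left (by norm_num) : Ioo (2⁻¹:ℝ) 1 ⊆ Ioo 0 1)
    simpa using this
  have hsum : (∫ b in Ioo (2⁻¹:ℝ) 1, b ^ α * (1-b) ^ (α-1))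
      + (∫ b in Ioo (2⁻¹:ℝ) 1, b ^ (α-1) * (1-b) ^ α)
      = Gamma α * Gamma α / Gamma (2*α) / 2 := by
    rw [← integral_add hA'' hA, ← S_val hα]
    refine setIntegral_congr_fun measurableSet_Ioo (fun b hb => ?_)
    rcases hb with ⟨hb1, hb2⟩
    have hb0 : (0:ℝ) < b := by linarith
    have h1b : (0:ℝ) < 1 - b := by linarith
    have e1 : b ^ α = b ^ (α-1) * b := by
      rw [← Real.rpow_add_one hb0.ne' (α-1), sub_add_cancel]
    have e2 : (1-b) ^ α = (1-b) ^ (α-1) * (1-b) := by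
      rw [← Real.rpow_add_one h1b.ne' (α-1), sub_add_cancel]
    rw [e1, e2]
    ring
  have hdiff : (∫ b in Ioo (2⁻¹:ℝ) 1, b ^ α * (1-b) ^ (α-1))
      - (∫ b in Ioo (2⁻¹:ℝ) 1, b ^ (α-1) * (1-b) ^ α)
      = (4:ℝ) ^ (-α) / α := by
    rw [← integral_sub hA'' hA, ← diff_val hα]
    refine setIntegral_congr_fun measurableSet_Ioo (fun b hb => ?_)
    rcases hb with ⟨hb1, hb2⟩
    have hb0 : (0:ℝ) < b := by linarith
    have h1b : (0:ℝ) < 1 - b := by linarith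
    have e1 : b ^ α = b ^ (α-1) * b := by
      rw [← Real.rpow_add_one hb0.ne' (α-1), sub_add_cancel]
    have e2 : (1-b) ^ α = (1-b) ^ (α-1) * (1-b) := by
      rw [← Real.rpow_add_one h1b.ne' (α-1), sub_add_cancel]
    have e3 : (b - b^2) ^ (α-1) = b ^ (α-1) * (1-b) ^ (α-1) := by
      rw [show b - b^2 = b * (1-b) by ring, Real.mul_rpow hb0.le h1b.le]
    rw [e1, e2, e3]
    ring
  have h2a : (4:ℝ) ^ (-α) / (2*α) = ((4:ℝ)^(-α)/α)/2 := by
    rw [div_div]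
    ring_nf
  linarith



lemma intA_integrable {α : ℝ} (hα : 0 < α) :
    IntegrableOn (fun u : ℝ => u ^ (α-1) * (1+u) ^ (-(2*α+1))) (Ioi 1) := by
  have hmaj : IntegrableOn (fun u : ℝ => u ^ (α-1) * u ^ (-(2*α+1))) (Ioi 1) := by
    refine (integrableOn_Ioi_rpow_of_lt (a := α-1-(2*α+1)) (by linarith) one_pos).congr_fun
      (fun u hu => ?_) measurableSet_Ioi
    have hu0 : (0:ℝ) < u := lt_trans one_pos hu
    rw [← Real.rpow_add hu0]
    ring_nf
  refine hmaj.mono' ?_ ?_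
  · exact ((measurable_id'.pow_const _).mul
      ((measurable_const.add measurable_id').pow_const _)).aestronglyMeasurable
  · filter_upwards [ae_restrict_mem measurableSet_Ioi] with u hu
    have hu0 : (0:ℝ) < u := lt_trans one_pos hu
    have h1u : (0:ℝ) < 1 + u := by linarith
    rw [Real.norm_eq_abs, abs_of_nonneg (mul_nonneg (Real.rpow_nonneg hu0.le _) (Real.rpow_nonneg h1u.le _))]
    exact mul_le_mul_of_nonneg_left
      (Real.rpow_le_rpow_of_nonpos hu0 (by linarith) (by linarith))
      (Real.rpow_nonneg hu0.le _)

lemma cov1 {α : ℝ} (hα : 0 < α) :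
    ∫ u in Ioi (1:ℝ), u ^ (α-1) * (1+u) ^ (-(2*α+1))
      = ∫ b in Ioo (2⁻¹:ℝ) 1, b ^ (α-1) * (1-b) ^ α := by
  have himg : (fun b : ℝ => b / (1-b)) '' Ioo (2⁻¹:ℝ) 1 = Ioi 1 := by
    ext u
    simp only [mem_image, mem_Ioo, mem_Ioi]
    constructor
    · rintro ⟨b, ⟨hb1, hb2⟩, rfl⟩
      rw [lt_div_iff₀ (by linarith)]
      linarith
    · intro hu
      have h1u : (0:ℝ) < 1 + u := by linarith
      refine ⟨u / (1+u), ⟨?_, ?_⟩, ?_⟩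
      · rw [lt_div_iff₀ h1u]; linarith
      · rw [div_lt_one h1u]; linarith
      · have : 1 - u/(1+u) = 1/(1+u) := by field_simp; ring
        rw [this]
        field_simp
  have hderiv : ∀ b ∈ Ioo (2⁻¹:ℝ) 1,
      HasDerivWithinAt (fun b : ℝ => b / (1-b)) (((1-b)^2)⁻¹) (Ioo (2⁻¹:ℝ) 1) b := by
    intro b hb
    have h1b : 1 - b ≠ 0 := by rcases hb with ⟨_, hb2⟩; intro h; simp only [sub_eq_zero] at h; linarith
    have := (hasDerivAt_id' (x := b)).div ((hasDerivAt_id' (x := b)).const_sub 1) h1b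
    refine this.hasDerivWithinAt.congr_deriv ?_
    ring
  have hinj : InjOn (fun b : ℝ => b / (1-b)) (Ioo (2⁻¹:ℝ) 1) := by
    intro a ha b hb hab
    rcases ha with ⟨_, ha2⟩; rcases hb with ⟨_, hb2⟩
    rw [div_eq_div_iff (by linarith) (by linarith)] at hab
    nlinarith
  have key := integral_image_eq_integral_abs_deriv_smul measurableSet_Ioo hderiv hinj
    (fun u : ℝ => u ^ (α-1) * (1+u) ^ (-(2*α+1)))
  rw [himg] at key
  rw [key]
  refine setIntegral_congr_fun measurableSet_Ioo (fun b hb => ?_)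
  rcases hb with ⟨hb1, hb2⟩
  have hb0 : (0:ℝ) < b := by linarith
  have h1b : (0:ℝ) < 1 - b := by linarith
  have e0 : 1 + b/(1-b) = (1-b)⁻¹ := by field_simp; ring
  have e1 : (b/(1-b)) ^ (α-1) = b ^ (α-1) * ((1-b) ^ (α-1))⁻¹ := by
    rw [Real.div_rpow hb0.le h1b.le, div_eq_mul_inv]
  have e2 : ((1-b)⁻¹) ^ (-(2*α+1)) = (1-b) ^ (2*α+1) := by
    rw [Real.inv_rpow h1b.le, ← Real.rpow_neg h1b.le, neg_neg]
  rw [smul_eq_mul, abs_of_pos (by positivity), e0, e1, e2]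
  have h2 : ((1-b)^2 : ℝ) = (1-b) ^ (2:ℝ) := (Real.rpow_two (1-b)).symm
  rw [h2, ← Real.rpow_neg h1b.le, ← Real.rpow_neg h1b.le]
  have : (1-b) ^ (-(2:ℝ)) * (b ^ (α-1) * (1-b) ^ (-(α-1)) * (1-b) ^ (2*α+1))
      = b ^ (α-1) * ((1-b) ^ (-(2:ℝ)) * (1-b) ^ (-(α-1)) * (1-b) ^ (2*α+1)) := by ring
  rw [this, ← Real.rpow_add h1b, ← Real.rpow_add h1b,
    show -(2:ℝ) + -(α-1) + (2*α+1) = α by ring]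



lemma final_algebra {α θ : ℝ} (hα : 0 < α) (hθ : 0 < θ) :
    2 * ((θ⁻¹ ^ α / Gamma α)^2 * Gamma (2*α+1) * (1/θ⁻¹) ^ (2*α+1)
        * (Gamma α * Gamma α / Gamma (2*α) / 4 - (4:ℝ) ^ (-α) / (2*α)))
      = θ * α - (θ / Real.sqrt π) * (Gamma (α + 1/2) / Gamma α) := by
  have hΓα : 0 < Gamma α := Gamma_pos_of_pos hα
  have hΓ2α : 0 < Gamma (2*α) := Gamma_pos_of_pos (by linarith)
  have hsπ : 0 < Real.sqrt π := Real.sqrt_pos.mpr Real.pi_pos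
  have h1 : (1/θ⁻¹ : ℝ) = θ := by field_simp
  have hpow : (θ⁻¹ ^ α)^2 * θ ^ (2*α+1) = θ := by
    rw [Real.inv_rpow hθ.le, ← Real.rpow_neg hθ.le, sq, ← Real.rpow_add hθ, ← Real.rpow_add hθ,
      show -α + -α + (2*α+1) = 1 by ring, Real.rpow_one]
  have hrec : Gamma (2*α+1) = 2*α * Gamma (2*α) := by
    rw [Real.Gamma_add_one (by positivity)]
  have h4 : (4:ℝ) ^ (-α) = (2:ℝ) ^ (-(2*α)) := by
    rw [show (4:ℝ) = (2:ℝ)^(2:ℝ) by rw [Real.rpow_two]; norm_num, ← Real.rpow_mul (by norm_num)]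
    ring_nf
  have h2pow : (2:ℝ) ^ ((1:ℝ)-2*α) = 2 * (2:ℝ) ^ (-(2*α)) := by
    rw [show (1:ℝ)-2*α = 1 + -(2*α) by ring, Real.rpow_add two_pos, Real.rpow_one]
  have h2pos : (0:ℝ) < (2:ℝ) ^ (-(2*α)) := Real.rpow_pos_of_pos two_pos _
  have hdup := Real.Gamma_mul_Gamma_add_half α
  rw [h2pow] at hdup
  -- hdup : Gamma α * Gamma (α+1/2) = Gamma (2α) * (2 * 2^(-(2α))) * √π
  have hKP : Gamma (2*α) * (2:ℝ)^(-(2*α)) = Gamma α * Gamma (α+1/2) / (2 * Real.sqrt π) := by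
    rw [eq_div_iff (by positivity)]
    linarith [hdup]
  calc 2 * ((θ⁻¹ ^ α / Gamma α)^2 * Gamma (2*α+1) * (1/θ⁻¹) ^ (2*α+1)
        * (Gamma α * Gamma α / Gamma (2*α) / 4 - (4:ℝ) ^ (-α) / (2*α)))
      = 2 * ((θ⁻¹^α)^2 * θ^(2*α+1)) * (2*α*Gamma (2*α))
          * (Gamma α * Gamma α / Gamma (2*α) / 4 - (2:ℝ)^(-(2*α)) / (2*α)) / (Gamma α)^2 := by
        rw [hrec, h1, h4]; ring
    _ = 2 * θ * (2*α*Gamma (2*α))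
          * (Gamma α * Gamma α / Gamma (2*α) / 4 - (2:ℝ)^(-(2*α)) / (2*α)) / (Gamma α)^2 := by
        rw [hpow]
    _ = θ * α - 2 * θ * (Gamma (2*α) * (2:ℝ)^(-(2*α))) / (Gamma α)^2 := by
        field_simp
        ring
    _ = θ * α - (θ / Real.sqrt π) * (Gamma (α + 1/2) / Gamma α) := by
        rw [hKP]
        field_simp




lemma scale_tail {α r t : ℝ} (ht : 0 < t) :
    ∫⁻ s in Ioi t, gammaPDF α r s
      = ENNReal.ofReal t * ∫⁻ u in Ioi 1, gammaPDF α r (t*u) := by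
  have hg := measurable_gammaPDF0 α r
  have hmap : Measure.map (fun u : ℝ => t * u) volume = ENNReal.ofReal |t⁻¹| • volume :=
    Real.map_volume_mul_left ht.ne'
  have h1 : ∫⁻ u in Ioi 1, gammaPDF α r (t*u)
      = ∫⁻ u, ((Ioi t).indicator (gammaPDF α r)) (t*u) := by
    rw [← lintegral_indicator measurableSet_Ioi]
    congr 1
    funext u
    by_cases h : 1 < u
    · rw [Set.indicator_of_mem (mem_Ioi.mpr h),
        Set.indicator_of_mem (mem_Ioi.mpr ((lt_mul_iff_one_lt_right ht).mpr h))]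
    · rw [Set.indicator_of_notMem (by simpa using h),
        Set.indicator_of_notMem (by simp [mem_Ioi, (lt_mul_iff_one_lt_right ht)]; exact le_of_not_gt h)]
  have h2 : ∫⁻ u, ((Ioi t).indicator (gammaPDF α r)) (t*u)
      = ∫⁻ s, ((Ioi t).indicator (gammaPDF α r)) s ∂(Measure.map (fun u : ℝ => t * u) volume) :=
    (lintegral_map (hg.indicator measurableSet_Ioi) (measurable_const_mul t)).symm
  rw [h1, h2, hmap, lintegral_smul_measure, lintegral_indicator measurableSet_Ioi,
    abs_of_pos (inv_pos.mpr ht), smul_eq_mul, ← mul_assoc, ← ENNReal.ofReal_mul ht.le,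
    mul_inv_cancel₀ ht.ne', ENNReal.ofReal_one, one_mul]







-- inner integral over t, for fixed u > 1
lemma inner_eval {α r u : ℝ} (hα : 0 < α) (hr : 0 < r) (hu : 1 < u) :
    ∫⁻ t in Ioi 0, ENNReal.ofReal t * gammaPDF α r t
        * (ENNReal.ofReal t * gammaPDF α r (t*u))
      = ENNReal.ofReal ((r^α / Gamma α)^2 * Gamma (2*α+1) * (1/r)^(2*α+1)
          * (u ^ (α-1) * (1+u) ^ (-(2*α+1)))) := by
  have hu0 : (0:ℝ) < u := by linarith
  have hb : (0:ℝ) < r * (1+u) := by positivity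
  have hΓα : (0:ℝ) < Gamma α := Gamma_pos_of_pos hα
  set c : ℝ := r^α / Gamma α with hc
  have hc0 : 0 ≤ c := by positivity
  set C : ℝ := c^2 * u^(α-1) with hC
  have hC0 : 0 ≤ C := by positivity
  have hpt : ∀ t ∈ Ioi (0:ℝ), ENNReal.ofReal t * gammaPDF α r t
      * (ENNReal.ofReal t * gammaPDF α r (t*u))
      = ENNReal.ofReal (C * (t ^ (2*α+1-1) * exp (-((r*(1+u)) * t)))) := by
    intro t ht
    rw [mem_Ioi] at ht
    rw [gammaPDF_of_nonneg ht.le, gammaPDF_of_nonneg (by positivity : (0:ℝ) ≤ t*u)]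
    rw [← ENNReal.ofReal_mul ht.le, ← ENNReal.ofReal_mul (by positivity),
      ← ENNReal.ofReal_mul (by positivity)]
    congr 1
    have e : t ^ (α-1) * t = t ^ α := by
      rw [← Real.rpow_add_one ht.ne' (α-1)]
      congr 1
      ring
    have h2a : t * t^(α-1) * (t * t^(α-1)) = t ^ (2*α+1-1) := by
      calc t * t^(α-1) * (t * t^(α-1)) = (t^(α-1) * t) * (t^(α-1) * t) := by ring
        _ = t^α * t^α := by rw [e]
        _ = t^(2*α+1-1) := by rw [← Real.rpow_add ht]; congr 1; ring
    have hexp : exp (-(r*t)) * exp (-(r*(t*u))) = exp (-((r*(1+u)) * t)) := by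
      rw [← Real.exp_add]
      congr 1
      ring
    rw [Real.mul_rpow ht.le hu0.le, ← h2a, ← hexp, hC, hc]
    ring
  rw [setLIntegral_congr_fun measurableSet_Ioi hpt]
  have hint : IntegrableOn (fun t : ℝ => C * (t ^ (2*α+1-1) * exp (-((r*(1+u)) * t)))) (Ioi 0) := by
    refine ((integrableOn_rpow_mul_exp_neg_mul_rpow (p := 1) (s := 2*α+1-1) (b := r*(1+u))
        (by linarith) one_pos hb).congr_fun (fun t ht => ?_) measurableSet_Ioi).const_mul C
    rw [Real.rpow_one, neg_mul]
  rw [← ofReal_integral_eq_lintegral_ofReal hint]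
  · rw [integral_const_mul, integral_rpow_mul_exp_neg_mul_Ioi (by linarith) hb]
    congr 1
    have h1ru : (1/(r*(1+u)) : ℝ) = (1/r) * (1+u)⁻¹ := by field_simp
    rw [h1ru, Real.mul_rpow (by positivity) (by positivity),
      Real.inv_rpow (by positivity), ← Real.rpow_neg (by positivity)]
    ring
  · filter_upwards [ae_restrict_mem measurableSet_Ioi] with t ht
    rw [mem_Ioi] at ht
    positivity

lemma T_val {α r : ℝ} (hα : 0 < α) (hr : 0 < r) :
    ∫⁻ t in Ioi 0, ENNReal.ofReal t * gammaPDF α r t * ∫⁻ s in Ioi t, gammaPDF α r s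
      = ENNReal.ofReal ((r^α / Gamma α)^2 * Gamma (2*α+1) * (1/r)^(2*α+1)
          * ∫ u in Ioi (1:ℝ), u ^ (α-1) * (1+u) ^ (-(2*α+1))) := by
  have hg := measurable_gammaPDF0 α r
  set K : ℝ := (r^α / Gamma α)^2 * Gamma (2*α+1) * (1/r)^(2*α+1) with hK
  have hΓα : (0:ℝ) < Gamma α := Gamma_pos_of_pos hα
  have hK0 : 0 ≤ K := by positivity
  have step1 : ∀ t ∈ Ioi (0:ℝ), ENNReal.ofReal t * gammaPDF α r t * ∫⁻ s in Ioi t, gammaPDF α r s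
      = ∫⁻ u in Ioi 1, ENNReal.ofReal t * gammaPDF α r t
          * (ENNReal.ofReal t * gammaPDF α r (t*u)) := by
    intro t ht
    rw [mem_Ioi] at ht
    have hne : ENNReal.ofReal t * gammaPDF α r t * ENNReal.ofReal t ≠ ⊤ :=
      ENNReal.mul_ne_top (ENNReal.mul_ne_top ENNReal.ofReal_ne_top (gammaPDF_ne_topZ α r t))
        ENNReal.ofReal_ne_top
    calc ENNReal.ofReal t * gammaPDF α r t * ∫⁻ s in Ioi t, gammaPDF α r s
        = ENNReal.ofReal t * gammaPDF α r t
            * (ENNReal.ofReal t * ∫⁻ u in Ioi 1, gammaPDF α r (t*u)) := by rw [scale_tail ht]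
      _ = (ENNReal.ofReal t * gammaPDF α r t * ENNReal.ofReal t)
            * ∫⁻ u in Ioi 1, gammaPDF α r (t*u) := by ring
      _ = ∫⁻ u in Ioi 1, (ENNReal.ofReal t * gammaPDF α r t * ENNReal.ofReal t)
            * gammaPDF α r (t*u) := (lintegral_const_mul' _ _ hne).symm
      _ = ∫⁻ u in Ioi 1, ENNReal.ofReal t * gammaPDF α r t
            * (ENNReal.ofReal t * gammaPDF α r (t*u)) := lintegral_congr (fun u => by ring)
  rw [setLIntegral_congr_fun measurableSet_Ioi step1]
  have hmeas : Measurable (fun p : ℝ × ℝ => ENNReal.ofReal p.1 * gammaPDF α r p.1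
      * (ENNReal.ofReal p.1 * gammaPDF α r (p.1 * p.2))) :=
    (measurable_fst.ennreal_ofReal.mul (hg.comp measurable_fst)).mul
      (measurable_fst.ennreal_ofReal.mul (hg.comp (measurable_fst.mul measurable_snd)))
  rw [lintegral_lintegral_swap hmeas.aemeasurable]
  have heval : ∀ u ∈ Ioi (1:ℝ), ∫⁻ t in Ioi (0:ℝ),
      ENNReal.ofReal t * gammaPDF α r t * (ENNReal.ofReal t * gammaPDF α r (t*u))
      = ENNReal.ofReal (K * (u ^ (α-1) * (1+u) ^ (-(2*α+1)))) := by
    intro u hu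
    rw [mem_Ioi] at hu
    rw [inner_eval hα hr hu, hK]
  rw [setLIntegral_congr_fun measurableSet_Ioi heval,
    ← ofReal_integral_eq_lintegral_ofReal ((intA_integrable hα).const_mul K)]
  · rw [integral_const_mul]
  · filter_upwards [ae_restrict_mem measurableSet_Ioi] with u hu
    rw [mem_Ioi] at hu
    have h1 : (0:ℝ) ≤ u ^ (α-1) * (1+u) ^ (-(2*α+1)) := by positivity
    positivity





lemma L_eq_twoT (α r : ℝ) :
    ∫⁻ x, gammaPDF α r x * ∫⁻ y, gammaPDF α r y * ENNReal.ofReal (min x y)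
      = 2 * ∫⁻ t in Ioi 0, ENNReal.ofReal t * gammaPDF α r t
          * ∫⁻ s in Ioi t, gammaPDF α r s := by
  have hg := measurable_gammaPDF0 α r
  set g := gammaPDF α r with hgdef
  set F : ℝ × ℝ → ENNReal := fun p =>
    ({q : ℝ × ℝ | 0 < q.2 ∧ q.2 ≤ q.1}).indicator
      (fun q => g q.1 * (g q.2 * ENNReal.ofReal q.2)) p with hF
  have hFmeas : Measurable F := by
    refine Measurable.indicator ?_ ?_
    · exact (hg.comp measurable_fst).mul
        ((hg.comp measurable_snd).mul measurable_snd.ennreal_ofReal)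
    · exact (measurableSet_lt measurable_const measurable_snd).inter
        (measurableSet_le measurable_snd measurable_fst)
  have hF1 : ∀ x y : ℝ, F (x, y)
      = (Ioc 0 x).indicator (fun y => g x * (g y * ENNReal.ofReal y)) y := by
    intro x y
    simp only [hF]
    by_cases h : y ∈ Ioc 0 x
    · rw [Set.indicator_of_mem h, Set.indicator_of_mem (by exact ⟨h.1, h.2⟩)]
    · rw [Set.indicator_of_notMem h,
        Set.indicator_of_notMem (fun hmem => h ⟨hmem.1, hmem.2⟩)]
  have hpt : ∀ x, g x * ∫⁻ y, g y * ENNReal.ofReal (min x y)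
      = (∫⁻ y, F (x, y)) + ∫⁻ y in Ioi x, g x * (g y * ENNReal.ofReal x) := by
    intro x
    have hFx : ∫⁻ y, F (x, y) = ∫⁻ y in Ioc 0 x, g x * (g y * ENNReal.ofReal y) := by
      rw [← lintegral_indicator measurableSet_Ioc]
      exact lintegral_congr (fun y => hF1 x y)
    rw [hFx]
    rcases le_or_gt x 0 with hx | hx
    · have h1 : ∫⁻ y in Ioc 0 x, g x * (g y * ENNReal.ofReal y) = 0 := by
        rw [Ioc_eq_empty (by linarith), Measure.restrict_empty, lintegral_zero_measure]
      have h2 : ∫⁻ y in Ioi x, g x * (g y * ENNReal.ofReal x) = 0 := by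
        rcases lt_or_eq_of_le hx with hx' | hx'
        · have hz : g x = 0 := gammaPDF_of_neg hx'
          simp [hz]
        · subst hx'
          simp
      have h3 : g x * ∫⁻ y, g y * ENNReal.ofReal (min x y) = 0 := by
        rcases lt_or_eq_of_le hx with hx' | hx'
        · have hz : g x = 0 := gammaPDF_of_neg hx'
          simp [hz]
        · subst hx'
          have hz : ∀ y : ℝ, g y * ENNReal.ofReal (min 0 y) = 0 := by
            intro y
            rcases lt_trichotomy y 0 with hy | hy | hy
            · rw [hgdef, gammaPDF_of_neg hy, zero_mul]
            · subst hy; simp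
            · rw [min_eq_left hy.le]; simp
          rw [lintegral_congr hz, lintegral_zero, mul_zero]
      rw [h1, h2, h3, add_zero]
    · have hdecomp : ∫⁻ y, g y * ENNReal.ofReal (min x y)
          = (∫⁻ y in Ioc 0 x, g y * ENNReal.ofReal y)
            + ∫⁻ y in Ioi x, g y * ENNReal.ofReal x := by
        rw [← lintegral_add_compl (fun y => g y * ENNReal.ofReal (min x y))
          (measurableSet_Iic (a := (0:ℝ)))]
        have hIic : ∫⁻ y in Iic 0, g y * ENNReal.ofReal (min x y) = 0 := by
          rw [setLIntegral_congr_fun (measurableSet_Iic) (fun y hy => ?_),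
            lintegral_zero]
          rcases lt_or_eq_of_le (mem_Iic.mp hy) with hy' | hy'
          · rw [hgdef, gammaPDF_of_neg hy', zero_mul]
          · subst hy'
            rw [min_eq_right hx.le]
            simp
        rw [hIic, zero_add, compl_Iic, ← Set.Ioc_union_Ioi_eq_Ioi hx.le,
          lintegral_union measurableSet_Ioi Set.Ioc_disjoint_Ioi_same]
        congr 1
        · exact setLIntegral_congr_fun measurableSet_Ioc
            (fun y hy => by rw [min_eq_right (mem_Ioc.mp hy).2])
        · exact setLIntegral_congr_fun measurableSet_Ioi
            (fun y hy => by rw [min_eq_left (le_of_lt (mem_Ioi.mp hy))])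
      rw [hdecomp, mul_add, ← lintegral_const_mul' _ _ (gammaPDF_ne_topZ α r x),
        ← lintegral_const_mul' _ _ (gammaPDF_ne_topZ α r x)]
  have hunc : Measurable (Function.uncurry fun x y => F (x, y)) := by
    have he : (Function.uncurry fun x y => F (x, y)) = F := by
      funext p
      simp [Function.uncurry]
    rw [he]
    exact hFmeas
  rw [lintegral_congr hpt, lintegral_add_left hunc.lintegral_prod_right]
  have hT2 : ∫⁻ x, ∫⁻ y in Ioi x, g x * (g y * ENNReal.ofReal x)
      = ∫⁻ t in Ioi 0, ENNReal.ofReal t * g t * ∫⁻ s in Ioi t, g s := by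
    have hpt2 : ∀ x, ∫⁻ y in Ioi x, g x * (g y * ENNReal.ofReal x)
        = ENNReal.ofReal x * g x * ∫⁻ s in Ioi x, g s := by
      intro x
      rw [show (fun y => g x * (g y * ENNReal.ofReal x)) = fun y => (ENNReal.ofReal x * g x) * g y
          from funext (fun y => by ring),
        lintegral_const_mul' _ _ (ENNReal.mul_ne_top ENNReal.ofReal_ne_top (gammaPDF_ne_topZ α r x))]
    rw [lintegral_congr hpt2,
      ← lintegral_add_compl (fun x => ENNReal.ofReal x * g x * ∫⁻ s in Ioi x, g s)
        (measurableSet_Iic (a := (0:ℝ)))]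
    have hzero : ∫⁻ x in Iic 0, ENNReal.ofReal x * g x * ∫⁻ s in Ioi x, g s = 0 := by
      rw [setLIntegral_congr_fun measurableSet_Iic (fun x hx => ?_), lintegral_zero]
      rw [ENNReal.ofReal_of_nonpos (mem_Iic.mp hx), zero_mul, zero_mul]
    rw [hzero, zero_add, compl_Iic]
  rw [hT2]
  have hT1 : ∫⁻ x, ∫⁻ y, F (x, y)
      = ∫⁻ t in Ioi 0, ENNReal.ofReal t * g t * ∫⁻ s in Ioi t, g s := by
    rw [lintegral_lintegral_swap (by exact hFmeas.aemeasurable)]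
    have hF2 : ∀ y, ∫⁻ x, F (x, y)
        = (Ioi 0).indicator (fun y => ENNReal.ofReal y * g y * ∫⁻ s in Ioi y, g s) y := by
      intro y
      by_cases hy : 0 < y
      · rw [Set.indicator_of_mem (mem_Ioi.mpr hy)]
        have hptx : ∀ x, F (x, y) = (Ici y).indicator (fun x => (g y * ENNReal.ofReal y) * g x) x := by
          intro x
          simp only [hF]
          by_cases h : y ≤ x
          · rw [Set.indicator_of_mem (mem_Ici.mpr h), Set.indicator_of_mem (by exact ⟨hy, h⟩)]
            ring
          · rw [Set.indicator_of_notMem (fun hmem => h (mem_Ici.mp hmem)),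
              Set.indicator_of_notMem (fun hmem => h hmem.2)]
        rw [lintegral_congr hptx, lintegral_indicator measurableSet_Ici,
          lintegral_const_mul' _ _
            (ENNReal.mul_ne_top (gammaPDF_ne_topZ α r y) ENNReal.ofReal_ne_top),
          Measure.restrict_congr_set Ioi_ae_eq_Ici.symm]
        ring
      · rw [Set.indicator_of_notMem (by simpa using hy)]
        have hz : ∀ x, F (x, y) = 0 := by
          intro x
          simp only [hF]
          exact Set.indicator_of_notMem (fun hmem => hy hmem.1) _
        rw [lintegral_congr hz, lintegral_zero]
    rw [lintegral_congr hF2, lintegral_indicator measurableSet_Ioi]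
  rw [hT1, two_mul]


end MinGammaAux

open MinGammaAux

/-- If `X, Y` are i.i.d. Gamma(shape `α`, scale `θ`) random variables, then
`E[min{X,Y}] = θα − (θ/√π) Γ(α+1/2)/Γ(α)`. -/
theorem min_gamma_mean {Ω : Type*} [MeasureSpace Ω] [IsProbabilityMeasure (ℙ : Measure Ω)]
    (X Y : Ω → ℝ) (α θ : ℝ) (hα : 0 < α) (hθ : 0 < θ)
    (hX : Measure.map X ℙ = gammaMeasure α θ⁻¹)
    (hY : Measure.map Y ℙ = gammaMeasure α θ⁻¹)
    (hindep : IndepFun X Y ℙ) :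
    ∫ ω, min (X ω) (Y ω) ∂ℙ =
      θ * α - (θ / Real.sqrt π) * (Real.Gamma (α + 1/2) / Real.Gamma α) := by
  have hr : (0:ℝ) < θ⁻¹ := inv_pos.mpr hθ
  have hprob : IsProbabilityMeasure (gammaMeasure α θ⁻¹) := isProbabilityMeasure_gammaMeasure hα hr
  have hgm := measurable_gammaPDF0 α θ⁻¹
  have hXm : AEMeasurable X ℙ := by
    by_contra h
    have h0 := hprob.measure_univ
    rw [← hX, Measure.map_of_not_aemeasurable h] at h0
    simp at h0
  have hYm : AEMeasurable Y ℙ := by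
    by_contra h
    have h0 := hprob.measure_univ
    rw [← hY, Measure.map_of_not_aemeasurable h] at h0
    simp at h0
  have hpair : AEMeasurable (fun ω => (X ω, Y ω)) ℙ := hXm.prodMk hYm
  have hjoint : Measure.map (fun ω => (X ω, Y ω)) ℙ
      = (gammaMeasure α θ⁻¹).prod (gammaMeasure α θ⁻¹) := by
    have hj := (indepFun_iff_map_prod_eq_prod_map_map hXm hYm).mp hindep
    rw [hX, hY] at hj
    exact hj
  have hXpos : ∀ᵐ ω ∂ℙ, 0 ≤ X ω := by
    have hmap : ℙ (X ⁻¹' (Iio 0)) = 0 := by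
      rw [← Measure.map_apply_of_aemeasurable hXm measurableSet_Iio, hX, gammaMeasure,
        withDensity_apply _ measurableSet_Iio]
      exact lintegral_gammaPDF_of_nonpos le_rfl
    rw [ae_iff]
    convert hmap using 2
    ext ω
    simp [not_le]
  have hYpos : ∀ᵐ ω ∂ℙ, 0 ≤ Y ω := by
    have hmap : ℙ (Y ⁻¹' (Iio 0)) = 0 := by
      rw [← Measure.map_apply_of_aemeasurable hYm measurableSet_Iio, hY, gammaMeasure,
        withDensity_apply _ measurableSet_Iio]
      exact lintegral_gammaPDF_of_nonpos le_rfl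
    rw [ae_iff]
    convert hmap using 2
    ext ω
    simp [not_le]
  have hnn : 0 ≤ᵐ[ℙ] fun ω => min (X ω) (Y ω) := by
    filter_upwards [hXpos, hYpos] with ω h1 h2
    exact le_min h1 h2
  have hsm : AEStronglyMeasurable (fun ω => min (X ω) (Y ω)) ℙ :=
    (hXm.min hYm).aestronglyMeasurable
  rw [integral_eq_lintegral_of_nonneg_ae hnn hsm]
  have hmeasmin : Measurable fun p : ℝ × ℝ => ENNReal.ofReal (min p.1 p.2) :=
    (measurable_fst.min measurable_snd).ennreal_ofReal
  have h1 : ∫⁻ ω, ENNReal.ofReal (min (X ω) (Y ω)) ∂ℙ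
      = ∫⁻ p : ℝ × ℝ, ENNReal.ofReal (min p.1 p.2)
          ∂(Measure.map (fun ω => (X ω, Y ω)) ℙ) :=
    (lintegral_map' hmeasmin.aemeasurable hpair).symm
  rw [h1, hjoint]
  have h2 : ∫⁻ p : ℝ × ℝ, ENNReal.ofReal (min p.1 p.2)
        ∂((gammaMeasure α θ⁻¹).prod (gammaMeasure α θ⁻¹))
      = ∫⁻ x, gammaPDF α θ⁻¹ x * ∫⁻ y, gammaPDF α θ⁻¹ y * ENNReal.ofReal (min x y) := by
    rw [lintegral_prod _ hmeasmin.aemeasurable]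
    have hinner : ∀ x : ℝ, ∫⁻ y, ENNReal.ofReal (min x y) ∂(gammaMeasure α θ⁻¹)
        = ∫⁻ y, gammaPDF α θ⁻¹ y * ENNReal.ofReal (min x y) := by
      intro x
      have hmin : Measurable fun y : ℝ => ENNReal.ofReal (min x y) :=
        (measurable_const.min measurable_id).ennreal_ofReal
      rw [gammaMeasure, lintegral_withDensity_eq_lintegral_mul _ hgm hmin]
      rfl
    rw [lintegral_congr hinner]
    have hH : Measurable fun x : ℝ => ∫⁻ y, gammaPDF α θ⁻¹ y * ENNReal.ofReal (min x y) := by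
      refine Measurable.lintegral_prod_right (f := fun x y => gammaPDF α θ⁻¹ y * ENNReal.ofReal (min x y)) ?_
      exact (hgm.comp measurable_snd).mul hmeasmin
    rw [gammaMeasure, lintegral_withDensity_eq_lintegral_mul _ hgm hH]
    rfl
  rw [h2, L_eq_twoT α θ⁻¹, T_val hα hr]
  have hΓα : (0:ℝ) < Gamma α := Gamma_pos_of_pos hα
  have hK0 : (0:ℝ) ≤ (θ⁻¹^α / Gamma α)^2 * Gamma (2*α+1) * (1/θ⁻¹)^(2*α+1) := by positivity
  have hA0 : (0:ℝ) ≤ ∫ u in Ioi (1:ℝ), u ^ (α-1) * (1+u) ^ (-(2*α+1)) := by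
    refine setIntegral_nonneg measurableSet_Ioi (fun u hu => ?_)
    have hu1 : (1:ℝ) < u := hu
    exact mul_nonneg (Real.rpow_nonneg (by linarith) _) (Real.rpow_nonneg (by linarith) _)
  rw [show (2 : ENNReal) = ENNReal.ofReal (2:ℝ) by simp, ← ENNReal.ofReal_mul (by norm_num),
    ENNReal.toReal_ofReal (by positivity), cov1 hα, A_val hα]
  exact final_algebra hα hθ
end

section
/- Let X and Y be i.i.d. InverseGamma(α, θ) random variables with α > 1, θ > 0. Then E[min{X,Y}] = (θ^(−1)/(α−1)) · [1 − (1/√π) · Γ(α − 1/2)/Γ(α)]. -/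
open MeasureTheory ProbabilityTheory Real Set intervalIntegral
open scoped ENNReal

lemma my_gammaInt {s b : ℝ} (hs : 0 < s) (hb : 0 < b) :
    IntegrableOn (fun u : ℝ => u ^ (s-1) * Real.exp (-(b*u))) (Ioi 0) := by
  have h := integrableOn_rpow_mul_exp_neg_mul_rpow (p := 1) (s := s-1) (b := b)
    (by linarith) one_pos hb
  simpa [rpow_one, neg_mul] using h

lemma my_gammaVal {s b : ℝ} (hs : 0 < s) (hb : 0 < b) :
    ∫ u in Ioi (0:ℝ), u ^ (s-1) * Real.exp (-(b*u)) = Real.Gamma s / b ^ s := by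
  rw [integral_rpow_mul_exp_neg_mul_Ioi hs hb, div_rpow (by norm_num) hb.le, one_rpow]
  ring

lemma my_real_beta {a b : ℝ} (ha : 0 < a) (hb : 0 < b) :
    ∫ t in (0:ℝ)..1, t ^ (a-1) * (1-t) ^ (b-1) =
      Real.Gamma a * Real.Gamma b / Real.Gamma (a+b) := by
  have hbeta : Complex.betaIntegral a b
      = ((∫ t in (0:ℝ)..1, t ^ (a-1) * (1-t) ^ (b-1) : ℝ) : ℂ) := by
    rw [Complex.betaIntegral, ← intervalIntegral.integral_ofReal]
    refine intervalIntegral.integral_congr fun t ht => ?_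
    rw [uIcc_of_le (by norm_num : (0:ℝ) ≤ 1)] at ht
    have h1 : (0:ℝ) ≤ t := ht.1
    have h2 : (0:ℝ) ≤ 1 - t := by linarith [ht.2]
    push_cast
    rw [Complex.ofReal_cpow h1, Complex.ofReal_cpow h2]
    push_cast
    ring
  have hg := Complex.Gamma_mul_Gamma_eq_betaIntegral
    (s := (a:ℂ)) (t := (b:ℂ)) (by simpa using ha) (by simpa using hb)
  rw [hbeta] at hg
  rw [show ((a:ℂ) + b) = ((a+b : ℝ) : ℂ) by push_cast; ring, Complex.Gamma_ofReal,
    Complex.Gamma_ofReal, Complex.Gamma_ofReal] at hg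
  have hg3 : Real.Gamma a * Real.Gamma b
      = Real.Gamma (a+b) * ∫ t in (0:ℝ)..1, t ^ (a-1) * (1-t) ^ (b-1) := by
    exact_mod_cast hg
  have hne : Real.Gamma (a+b) ≠ 0 := (Real.Gamma_pos_of_pos (by linarith)).ne'
  field_simp
  linarith [hg3]

lemma my_II {a b : ℝ} (ha : -1 < a) :
    IntervalIntegrable (fun t : ℝ => t ^ a * (1-t) ^ b) volume 0 (1/2) := by
  apply (intervalIntegrable_rpow' ha).mul_continuousOn
  refine ContinuousOn.rpow_const ?_ fun t ht => Or.inl ?_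
  · fun_prop
  · rw [uIcc_of_le (by norm_num : (0:ℝ) ≤ 1/2)] at ht
    have := ht.2
    intro h; rw [sub_eq_zero] at h; linarith

lemma my_II2 {a b : ℝ} (hb : 0 ≤ b) :
    IntervalIntegrable (fun t : ℝ => t ^ a * (1-t) ^ b) volume (1/2) 1 := by
  apply ContinuousOn.intervalIntegrable
  rw [uIcc_of_le (by norm_num : (1:ℝ)/2 ≤ 1)]
  refine ContinuousOn.mul (ContinuousOn.rpow_const ?_ fun t ht => Or.inl ?_)
    (ContinuousOn.rpow_const (by fun_prop) fun t ht => Or.inr hb)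
  · fun_prop
  · have := ht.1; intro h; rw [h] at this; norm_num at this

lemma my_ftc {α : ℝ} (hα : 1 < α) :
    ∫ t in (0:ℝ)..(1/2), (t*(1-t)) ^ (α-2) * (1-2*t) = (4:ℝ) ^ (1-α) / (α-1) := by
  have hle : (0:ℝ) ≤ 1/2 := by norm_num
  have hcont : ContinuousOn (fun t : ℝ => (t*(1-t)) ^ (α-1)) (Icc 0 (1/2)) := by
    refine ContinuousOn.rpow_const (by fun_prop) fun t ht => Or.inr (by linarith)
  have hderiv : ∀ t ∈ Ioo (0:ℝ) (1/2),
      HasDerivWithinAt (fun t : ℝ => (t*(1-t)) ^ (α-1))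
        ((α-1) * ((t*(1-t)) ^ (α-2) * (1-2*t))) (Ioi t) t := by
    intro t ht
    have hpos : 0 < t*(1-t) := mul_pos ht.1 (by linarith [ht.2])
    have h1 : HasDerivAt (fun t : ℝ => t*(1-t)) (1-2*t) t := by
      have := (hasDerivAt_id t).mul ((hasDerivAt_id t).const_sub 1)
      simp only [id] at this
      exact this.congr_deriv (by ring)
    have h2 : HasDerivAt (fun x : ℝ => x ^ (α-1)) ((α-1) * (t*(1-t)) ^ (α-1-1)) (t*(1-t)) :=
      Real.hasDerivAt_rpow_const (Or.inl hpos.ne')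
    have h3 := h2.comp t h1
    have : α - 1 - 1 = α - 2 := by ring
    rw [this] at h3
    exact h3.hasDerivWithinAt.congr_deriv (by ring)
  have hint : IntervalIntegrable
      (fun t : ℝ => (α-1) * ((t*(1-t)) ^ (α-2) * (1-2*t))) volume 0 (1/2) := by
    have hI : IntervalIntegrable (fun t : ℝ => t ^ (α-2) * ((1-t) ^ (α-2) * ((α-1)*(1-2*t))))
        volume 0 (1/2) := by
      apply (intervalIntegrable_rpow' (by linarith)).mul_continuousOn
      refine ContinuousOn.mul (ContinuousOn.rpow_const (by fun_prop) fun t ht => Or.inl ?_)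
        (by fun_prop)
      rw [uIcc_of_le hle] at ht
      have := ht.2; intro h; rw [sub_eq_zero] at h; linarith
    apply hI.congr_ae
    rw [Filter.EventuallyEq, ae_restrict_iff' measurableSet_uIoc]
    refine Filter.Eventually.of_forall fun t ht => ?_
    rw [uIoc_of_le hle] at ht
    rw [mul_rpow ht.1.le (by linarith [ht.2] : (0:ℝ) ≤ 1 - t)]
    ring
  have := intervalIntegral.integral_eq_sub_of_hasDeriv_right_of_le hle hcont hderiv hint
  rw [intervalIntegral.integral_const_mul] at this
  have h0 : ((0:ℝ)*(1-0)) ^ (α-1) = 0 := by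
    rw [zero_mul, Real.zero_rpow (by intro h; apply absurd h; intro h'; linarith [h'] )]
  have h12 : ((1/2:ℝ)*(1-1/2)) ^ (α-1) = (4:ℝ) ^ (1-α) := by
    have : ((1/2:ℝ)*(1-1/2)) = (4:ℝ)⁻¹ := by norm_num
    rw [this, Real.inv_rpow (by norm_num), ← Real.rpow_neg (by norm_num), neg_sub]
  rw [h0, h12, sub_zero] at this
  rw [eq_div_iff (by intro h; rw [sub_eq_zero] at h; exact absurd h.symm hα.ne : α - 1 ≠ 0)]
  linarith [this]

lemma my_keyM {α : ℝ} (hα : 1 < α) :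
    ∫ t in (0:ℝ)..(1/2), t ^ (α-1) * (1-t) ^ (α-2)
      = (Real.Gamma (α-1) * Real.Gamma α / Real.Gamma (2*α-1) - (4:ℝ) ^ (1-α) / (α-1)) / 2 := by
  have hne : α - 1 ≠ 0 := by intro h; rw [sub_eq_zero] at h; exact absurd h.symm hα.ne
  -- full beta
  have hbeta : ∫ t in (0:ℝ)..1, t ^ (α-2) * (1-t) ^ (α-1)
      = Real.Gamma (α-1) * Real.Gamma α / Real.Gamma (2*α-1) := by
    have := my_real_beta (a := α-1) (b := α) (by linarith) (by linarith)
    have e1 : α - 1 - 1 = α - 2 := by ring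
    have e2 : α - 1 + α = 2*α - 1 := by ring
    rw [e1, e2] at this
    exact this
  -- split at 1/2
  have hsplit : (∫ t in (0:ℝ)..(1/2), t ^ (α-2) * (1-t) ^ (α-1))
      + (∫ t in (1/2:ℝ)..1, t ^ (α-2) * (1-t) ^ (α-1))
      = Real.Gamma (α-1) * Real.Gamma α / Real.Gamma (2*α-1) := by
    rw [integral_add_adjacent_intervals (my_II (by linarith)) (my_II2 (by linarith))]
    exact hbeta
  -- second piece equals the goal integral, by t ↦ 1 - t
  have hswap : (∫ t in (1/2:ℝ)..1, t ^ (α-2) * (1-t) ^ (α-1))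
      = ∫ t in (0:ℝ)..(1/2), t ^ (α-1) * (1-t) ^ (α-2) := by
    have := intervalIntegral.integral_comp_sub_left (a := (0:ℝ)) (b := 1/2)
      (fun t => t ^ (α-2) * (1-t) ^ (α-1)) 1
    norm_num at this
    rw [← this]
    exact intervalIntegral.integral_congr fun t ht => by ring
  -- difference
  have hdiff : (∫ t in (0:ℝ)..(1/2), t ^ (α-2) * (1-t) ^ (α-1))
      - (∫ t in (0:ℝ)..(1/2), t ^ (α-1) * (1-t) ^ (α-2))
      = (4:ℝ) ^ (1-α) / (α-1) := by
    rw [← intervalIntegral.integral_sub (my_II (by linarith)) (my_II (by linarith))]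
    rw [← my_ftc hα]
    refine intervalIntegral.integral_congr fun t ht => ?_
    rw [uIcc_of_le (by norm_num : (0:ℝ) ≤ 1/2)] at ht
    rcases eq_or_lt_of_le ht.1 with h0 | h0
    · rw [← h0]
      simp [Real.zero_rpow hne]
    · have h1 : (0:ℝ) < 1 - t := by linarith [ht.2]
      rw [mul_rpow h0.le h1.le]
      have e1 : t ^ (α-1) = t ^ (α-2) * t := by
        rw [show α - 1 = α - 2 + 1 by ring, Real.rpow_add_one h0.ne']
      have e2 : (1-t) ^ (α-1) = (1-t) ^ (α-2) * (1-t) := by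
        rw [show α - 1 = α - 2 + 1 by ring, Real.rpow_add_one h1.ne']
      rw [e1, e2]
      ring
  linarith [hsplit, hswap, hdiff]

lemma my_keyN {α : ℝ} (hα : 1 < α) :
    ∫ w in (0:ℝ)..1, w ^ (α-1) * (1+w) ^ (1-2*α)
      = ∫ t in (0:ℝ)..(1/2), t ^ (α-1) * (1-t) ^ (α-2) := by
  have hle : (0:ℝ) ≤ 1/2 := by norm_num
  set f : ℝ → ℝ := fun t => t / (1-t) with hf
  set g : ℝ → ℝ := fun w => w ^ (α-1) * (1+w) ^ (1-2*α) with hg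
  have hmem : ∀ x ∈ uIcc (0:ℝ) (1/2), (0:ℝ) < 1 - x := by
    intro x hx
    rw [uIcc_of_le hle] at hx
    linarith [hx.2]
  have hd : ∀ x ∈ uIcc (0:ℝ) (1/2), HasDerivAt f (((1-x)^(2:ℕ))⁻¹) x := by
    intro x hx
    have h1 : 1 - x ≠ 0 := (hmem x hx).ne'
    have := (hasDerivAt_id x).div ((hasDerivAt_id x).const_sub 1) h1
    simp only [id] at this
    exact this.congr_deriv (by ring)
  have hcont : ContinuousOn (fun x : ℝ => ((1-x)^(2:ℕ))⁻¹) (uIcc (0:ℝ) (1/2)) := by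
    refine ContinuousOn.inv₀ (by fun_prop) fun x hx => pow_ne_zero _ (hmem x hx).ne'
  have himg : ContinuousOn g (f '' uIcc 0 (1/2)) := by
    refine ContinuousOn.mul (Continuous.continuousOn ?_) ?_
    · exact Real.continuous_rpow_const (by linarith)
    · refine ContinuousOn.rpow_const (by fun_prop) fun w hw => Or.inl ?_
      obtain ⟨x, hx, rfl⟩ := hw
      have h0 : 0 ≤ f x := by
        rw [uIcc_of_le hle] at hx
        exact div_nonneg hx.1 (by linarith [hx.2])
      intro h
      nlinarith [h0]
  have hsub := intervalIntegral.integral_comp_smul_deriv' hd hcont himg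
  have hf0 : f 0 = 0 := by simp [hf]
  have hf12 : f (1/2) = 1 := by norm_num [hf]
  rw [hf0, hf12] at hsub
  rw [← hsub]
  refine intervalIntegral.integral_congr fun t ht => ?_
  have h1 : (0:ℝ) < 1 - t := hmem t ht
  rw [uIcc_of_le hle] at ht
  rcases eq_or_lt_of_le ht.1 with h0 | h0
  · rw [← h0]
    simp [hf, hg, Real.zero_rpow (show α - 1 ≠ 0 by intro h; rw [sub_eq_zero] at h; linarith)]
  · have hft : f t = t / (1-t) := rfl
    have h2 : (1:ℝ) + t/(1-t) = (1-t)⁻¹ := by field_simp; ring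
    have h3 : (t/(1-t)) ^ (α-1) = t ^ (α-1) * ((1-t) ^ (α-1))⁻¹ := by
      rw [div_rpow h0.le h1.le, div_eq_mul_inv]
    have h4 : ((1-t):ℝ)⁻¹ ^ (1-2*α) = (1-t) ^ (2*α-1) := by
      rw [Real.inv_rpow h1.le, ← Real.rpow_neg h1.le, neg_sub]
    have e : ((1-t) ^ (α-1))⁻¹ * ((1-t) ^ (2*α-1) * (((1-t):ℝ)^(2:ℕ))⁻¹) = (1-t) ^ (α-2) := by
      rw [← Real.rpow_natCast (1-t) 2, ← Real.rpow_neg h1.le, ← Real.rpow_neg h1.le,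
        ← Real.rpow_add h1, ← Real.rpow_add h1]
      congr 1
      push_cast
      ring
    show ((1-t)^(2:ℕ))⁻¹ * (g (f t)) = t ^ (α-1) * (1-t) ^ (α-2)
    rw [hg]
    simp only []
    rw [hft, h2, h3, h4, ← e]
    ring

lemma my_gInt {α r : ℝ} (hα : 0 < α) (hr : 0 < r) :
    Integrable (gammaPDFReal α r) := by
  refine ⟨(measurable_gammaPDFReal α r).aestronglyMeasurable, ?_⟩
  rw [hasFiniteIntegral_iff_ofReal (Filter.Eventually.of_forall (gammaPDFReal_nonneg hα hr))]
  have : ∫⁻ x, ENNReal.ofReal (gammaPDFReal α r x) = 1 := lintegral_gammaPDF_eq_one hα hr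
  rw [this]
  exact ENNReal.one_lt_top

lemma my_zero_mass {α r : ℝ} (hα : 1 < α) (hr : 0 < r) :
    gammaMeasure α r (Iic 0) = 0 := by
  rw [gammaMeasure, withDensity_apply _ measurableSet_Iic,
    show Iic (0:ℝ) = Iio 0 ∪ {0} from (Iio_union_right).symm,
    lintegral_union (measurableSet_singleton 0) (by simp [disjoint_left]; intro a h h2; rw [h2] at h; exact absurd h (lt_irrefl 0))]
  rw [lintegral_gammaPDF_of_nonpos le_rfl]
  rw [setLIntegral_measure_zero _ _ (by simp)]
  simp

lemma my_cdf {α r : ℝ} (hα : 1 < α) (hr : 0 < r) {u : ℝ} (hu : 0 < u) :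
    gammaMeasure α r (Iio u)
      = ENNReal.ofReal (∫ v in (0:ℝ)..u, gammaPDFReal α r v) := by
  rw [gammaMeasure, withDensity_apply _ measurableSet_Iio,
    show Iio u = Iio 0 ∪ Ico 0 u by rw [Iio_union_Ico_eq_Iio hu.le],
    lintegral_union measurableSet_Ico (by simp [disjoint_left]; intro x h1 h2; linarith),
    lintegral_gammaPDF_of_nonpos le_rfl, zero_add]
  rw [setLIntegral_congr (Ico_ae_eq_Ioc (a := (0:ℝ)) (b := u))]
  rw [intervalIntegral.integral_of_le hu.le]
  rw [ofReal_integral_eq_lintegral_ofReal ((my_gInt (by linarith) hr).restrict)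
    (Filter.Eventually.of_forall (gammaPDFReal_nonneg (by linarith) hr))]
  rfl

lemma my_gpos {α r : ℝ} {u : ℝ} (hu : 0 ≤ u) :
    gammaPDFReal α r u = r ^ α / Real.Gamma α * u ^ (α-1) * Real.exp (-(r*u)) := by
  rw [gammaPDFReal, if_pos hu]

lemma my_sing {α r : ℝ} (u : ℝ) : gammaMeasure α r {u} = 0 := by
  rw [gammaMeasure, withDensity_apply _ (measurableSet_singleton u),
    setLIntegral_measure_zero _ _ (measure_singleton u)]

/-- pointwise product formula for `g u * g (w*u)`. -/
lemma my_prod_pdf {α r : ℝ} (hα : 1 < α) {u w : ℝ} (hu : 0 < u) (hw : 0 < w) :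
    gammaPDFReal α r u * gammaPDFReal α r (w*u)
      = (r ^ α / Real.Gamma α)^2 * w ^ (α-1) * (u ^ (2*α-1-1) * Real.exp (-(r*(1+w)*u))) := by
  have e1 : Real.exp (-(r*u)) * Real.exp (-(r*(w*u))) = Real.exp (-(r*(1+w)*u)) := by
    rw [← Real.exp_add]; congr 1; ring
  have e2 : u ^ (α-1) * u ^ (α-1) = u ^ (2*α-1-1) := by
    rw [← Real.rpow_add hu]; congr 1; ring
  rw [my_gpos hu.le, my_gpos (by positivity : (0:ℝ) ≤ w*u),
    Real.mul_rpow hw.le hu.le, ← e1, ← e2]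
  ring

/-- value and integrability of the inner `u`-integral. -/
lemma my_inner {α r : ℝ} (hα : 1 < α) (hr : 0 < r) {w : ℝ} (hw : 0 < w) :
    IntegrableOn (fun u => gammaPDFReal α r u * gammaPDFReal α r (w*u)) (Ioi 0) ∧
    ∫ u in Ioi (0:ℝ), gammaPDFReal α r u * gammaPDFReal α r (w*u)
      = (r ^ α / Real.Gamma α)^2 * w ^ (α-1) *
          (Real.Gamma (2*α-1) / (r*(1+w)) ^ (2*α-1)) := by
  have hs : (0:ℝ) < 2*α-1 := by linarith
  have hb : (0:ℝ) < r*(1+w) := by positivity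
  have heq : EqOn (fun u => gammaPDFReal α r u * gammaPDFReal α r (w*u))
      (fun u => (r ^ α / Real.Gamma α)^2 * w ^ (α-1) *
        (u ^ (2*α-1-1) * Real.exp (-(r*(1+w)*u)))) (Ioi 0) := by
    intro u hu
    exact my_prod_pdf hα (mem_Ioi.mp hu) hw
  constructor
  · have hint : IntegrableOn (fun u : ℝ => (r ^ α / Real.Gamma α)^2 * w ^ (α-1) *
        (u ^ (2*α-1-1) * Real.exp (-(r*(1+w)*u)))) (Ioi 0) :=
      (my_gammaInt hs hb).const_mul _
    exact hint.congr_fun (fun u hu => (heq hu).symm) measurableSet_Ioi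
  · rw [setIntegral_congr_fun measurableSet_Ioi heq, MeasureTheory.integral_const_mul,
      my_gammaVal hs hb]

lemma my_reduce {α r : ℝ} (hα : 1 < α) (hr : 0 < r) :
    ∫⁻ p : ℝ × ℝ, ENNReal.ofReal ((max p.1 p.2)⁻¹)
        ∂((gammaMeasure α r).prod (gammaMeasure α r))
      = 2 * ∫⁻ u, ENNReal.ofReal u⁻¹ * gammaMeasure α r (Iio u) ∂(gammaMeasure α r) := by
  set μ := gammaMeasure α r with hμ
  haveI : IsProbabilityMeasure μ := isProbabilityMeasure_gammaMeasure (by linarith) hr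
  set S₁ : ℝ × ℝ → ENNReal := fun p => if p.2 ≤ p.1 then ENNReal.ofReal p.1⁻¹ else 0 with hS₁
  set S₂ : ℝ × ℝ → ENNReal := fun p => if p.2 < p.1 then ENNReal.ofReal p.1⁻¹ else 0 with hS₂
  have hS₁m : Measurable S₁ :=
    Measurable.ite (measurableSet_le measurable_snd measurable_fst)
      measurable_fst.inv.ennreal_ofReal measurable_const
  have hS₂m : Measurable S₂ :=
    Measurable.ite (measurableSet_lt measurable_snd measurable_fst)
      measurable_fst.inv.ennreal_ofReal measurable_const
  have h1 : ∀ᵐ p : ℝ × ℝ ∂(μ.prod μ), 0 < p.1 := by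
    rw [ae_iff]
    have : {p : ℝ × ℝ | ¬ 0 < p.1} = (Iic 0) ×ˢ (univ : Set ℝ) := by
      ext p; simp [not_lt]
    rw [this, Measure.prod_prod, my_zero_mass hα hr, zero_mul]
  have h2 : ∀ᵐ p : ℝ × ℝ ∂(μ.prod μ), 0 < p.2 := by
    rw [ae_iff]
    have : {p : ℝ × ℝ | ¬ 0 < p.2} = (univ : Set ℝ) ×ˢ (Iic 0) := by
      ext p; simp [not_lt]
    rw [this, Measure.prod_prod, my_zero_mass hα hr, mul_zero]
  have hae : ∀ᵐ p : ℝ × ℝ ∂(μ.prod μ),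
      ENNReal.ofReal ((max p.1 p.2)⁻¹) = S₁ p + S₂ p.swap := by
    filter_upwards [h1, h2] with p hp1 hp2
    rcases le_or_gt p.2 p.1 with h | h
    · rw [max_eq_left h, hS₁, hS₂]
      simp only [Prod.fst_swap, Prod.snd_swap, if_pos h, if_neg (not_lt.mpr h), add_zero]
    · rw [max_eq_right h.le, hS₁, hS₂]
      simp only [Prod.fst_swap, Prod.snd_swap, if_neg (not_le.mpr h), if_pos h, zero_add]
  rw [lintegral_congr_ae hae, lintegral_add_left hS₁m]
  have hswap : ∫⁻ p : ℝ × ℝ, S₂ p.swap ∂(μ.prod μ) = ∫⁻ p, S₂ p ∂(μ.prod μ) := by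
    conv_rhs => rw [← Measure.prod_swap]
    rw [lintegral_map hS₂m measurable_swap]
  rw [hswap]
  have h1int : ∫⁻ p, S₁ p ∂(μ.prod μ) = ∫⁻ u, ENNReal.ofReal u⁻¹ * μ (Iic u) ∂μ := by
    rw [lintegral_prod _ hS₁m.aemeasurable]
    refine lintegral_congr fun u => ?_
    have heq : ∀ v, S₁ (u, v) = (Iic u).indicator (fun _ => ENNReal.ofReal u⁻¹) v := by
      intro v
      by_cases h : v ≤ u <;> simp [hS₁, h, indicator, mem_Iic]
    rw [lintegral_congr heq, lintegral_indicator measurableSet_Iic, setLIntegral_const]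
  have h2int : ∫⁻ p, S₂ p ∂(μ.prod μ) = ∫⁻ u, ENNReal.ofReal u⁻¹ * μ (Iio u) ∂μ := by
    rw [lintegral_prod _ hS₂m.aemeasurable]
    refine lintegral_congr fun u => ?_
    have heq : ∀ v, S₂ (u, v) = (Iio u).indicator (fun _ => ENNReal.ofReal u⁻¹) v := by
      intro v
      by_cases h : v < u <;> simp [hS₂, h, indicator, mem_Iio]
    rw [lintegral_congr heq, lintegral_indicator measurableSet_Iio, setLIntegral_const]
  have hIicIio : ∀ u : ℝ, μ (Iic u) = μ (Iio u) := by
    intro u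
    rw [← Iio_union_right, measure_union (by simp) (measurableSet_singleton u),
      my_sing, add_zero]
  rw [h1int, h2int]
  have : ∫⁻ u, ENNReal.ofReal u⁻¹ * μ (Iic u) ∂μ
      = ∫⁻ u, ENNReal.ofReal u⁻¹ * μ (Iio u) ∂μ :=
    lintegral_congr fun u => by rw [hIicIio u]
  rw [this, two_mul]

lemma my_pdf_zero {α r : ℝ} (hα : 1 < α) {u : ℝ} (hu : u ≤ 0) : gammaPDF α r u = 0 := by
  rcases lt_or_eq_of_le hu with h | h
  · exact gammaPDF_of_neg h
  · rw [h, gammaPDF_of_nonneg le_rfl,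
      Real.zero_rpow (by intro hh; rw [sub_eq_zero] at hh; exact absurd hh.symm hα.ne),
      mul_zero, zero_mul, ENNReal.ofReal_zero]

lemma my_F_cont {α r : ℝ} (hα : 1 < α) (hr : 0 < r) :
    Continuous (fun u : ℝ => ∫ v in (0:ℝ)..u, gammaPDFReal α r v) :=
  intervalIntegral.continuous_primitive
    (fun _ _ => (my_gInt (by linarith) hr).intervalIntegrable) 0

lemma my_F_le_one {α r : ℝ} (hα : 1 < α) (hr : 0 < r) (u : ℝ) :
    ∫ v in (0:ℝ)..u, gammaPDFReal α r v ≤ 1 := by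
  have htot : ∫ v, gammaPDFReal α r v = 1 := by
    rw [integral_eq_lintegral_of_nonneg_ae
      (Filter.Eventually.of_forall (gammaPDFReal_nonneg (by linarith) hr))
      (measurable_gammaPDFReal α r).aestronglyMeasurable]
    rw [show (fun v => ENNReal.ofReal (gammaPDFReal α r v)) = gammaPDF α r from rfl,
      lintegral_gammaPDF_eq_one (by linarith) hr, ENNReal.toReal_one]
  rcases le_or_gt 0 u with h | h
  · rw [intervalIntegral.integral_of_le h, ← htot]
    exact setIntegral_le_integral (my_gInt (by linarith) hr)
      (Filter.Eventually.of_forall (gammaPDFReal_nonneg (by linarith) hr))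
  · rw [intervalIntegral.integral_of_ge h.le]
    simp only [neg_le]
    calc -(1:ℝ) ≤ 0 := by norm_num
    _ ≤ ∫ v in Ioc u 0, gammaPDFReal α r v :=
      setIntegral_nonneg measurableSet_Ioc fun v _ => gammaPDFReal_nonneg (by linarith) hr v

lemma my_psiInt {α r : ℝ} (hα : 1 < α) (hr : 0 < r) :
    IntegrableOn (fun u : ℝ => gammaPDFReal α r u *
      (u⁻¹ * ∫ v in (0:ℝ)..u, gammaPDFReal α r v)) (Ioi 0) := by
  have hchi : IntegrableOn (fun u : ℝ => u⁻¹ * gammaPDFReal α r u) (Ioi 0) := by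
    have hint : IntegrableOn (fun u : ℝ => r ^ α / Real.Gamma α *
        (u ^ (α-1-1) * Real.exp (-(r*u)))) (Ioi 0) :=
      (my_gammaInt (by linarith : (0:ℝ) < α - 1) hr).const_mul _
    refine hint.congr_fun (fun u hu => ?_) measurableSet_Ioi
    have hu : (0:ℝ) < u := hu
    beta_reduce
    rw [my_gpos hu.le, show (α-1-1:ℝ) = (α-1) + (-1) by ring, Real.rpow_add hu,
      Real.rpow_neg_one]
    ring
  refine Integrable.mono' hchi ?_ ?_
  · exact ((measurable_gammaPDFReal α r).mul
      (measurable_inv.mul (my_F_cont hα hr).measurable)).aestronglyMeasurable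
  · rw [ae_restrict_iff' measurableSet_Ioi]
    refine Filter.Eventually.of_forall fun u hu => ?_
    have hu : (0:ℝ) < u := hu
    have hF0 : 0 ≤ ∫ v in (0:ℝ)..u, gammaPDFReal α r v :=
      intervalIntegral.integral_nonneg hu.le
        (fun v _ => gammaPDFReal_nonneg (by linarith) hr v)
    have hg0 : 0 ≤ gammaPDFReal α r u := gammaPDFReal_nonneg (by linarith) hr u
    rw [Real.norm_of_nonneg (by positivity)]
    calc gammaPDFReal α r u * (u⁻¹ * ∫ v in (0:ℝ)..u, gammaPDFReal α r v)
        ≤ gammaPDFReal α r u * (u⁻¹ * 1) := by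
          apply mul_le_mul_of_nonneg_left _ hg0
          apply mul_le_mul_of_nonneg_left (my_F_le_one hα hr u) (by positivity)
    _ = u⁻¹ * gammaPDFReal α r u := by ring

lemma my_W {α r : ℝ} (hα : 1 < α) (hr : 0 < r) :
    ∫⁻ u, ENNReal.ofReal u⁻¹ * gammaMeasure α r (Iio u) ∂(gammaMeasure α r)
      = ENNReal.ofReal (∫ u in Ioi (0:ℝ), gammaPDFReal α r u *
          (u⁻¹ * ∫ v in (0:ℝ)..u, gammaPDFReal α r v)) := by
  set μ := gammaMeasure α r with hμ
  set F : ℝ → ℝ := fun u => ∫ v in (0:ℝ)..u, gammaPDFReal α r v with hF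
  have h0 : ∀ᵐ u ∂μ, 0 < u := by
    rw [ae_iff]
    have : {u : ℝ | ¬ 0 < u} = Iic 0 := by ext u; simp [not_lt]
    rw [this]
    exact my_zero_mass hα hr
  have hcongr : ∫⁻ u, ENNReal.ofReal u⁻¹ * μ (Iio u) ∂μ
      = ∫⁻ u, (fun u => ENNReal.ofReal u⁻¹ * ENNReal.ofReal (F u)) u ∂μ := by
    refine lintegral_congr_ae ?_
    filter_upwards [h0] with u hu
    rw [my_cdf hα hr hu]
  rw [hcongr]
  have hmeas : Measurable (fun u : ℝ => ENNReal.ofReal u⁻¹ * ENNReal.ofReal (F u)) :=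
    measurable_inv.ennreal_ofReal.mul (my_F_cont hα hr).measurable.ennreal_ofReal
  have hpdfm : Measurable (gammaPDF α r) := (measurable_gammaPDFReal α r).ennreal_ofReal
  rw [hμ, gammaMeasure, lintegral_withDensity_eq_lintegral_mul volume hpdfm hmeas]
  rw [← lintegral_add_compl _ (measurableSet_Ioi (a := (0:ℝ))), compl_Ioi]
  have hzero : ∫⁻ u in Iic (0:ℝ),
      (gammaPDF α r * fun u => ENNReal.ofReal u⁻¹ * ENNReal.ofReal (F u)) u = 0 := by
    rw [setLIntegral_congr_fun measurableSet_Iic (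
      (fun u (hu : u ≤ 0) => by
        simp only [Pi.mul_apply]
        rw [my_pdf_zero hα hu, zero_mul]))]
    simp
  rw [hzero, add_zero]
  rw [setLIntegral_congr_fun measurableSet_Ioi (
    (fun u (hu : (0:ℝ) < u) => by
      simp only [Pi.mul_apply]
      rw [show gammaPDF α r u = ENNReal.ofReal (gammaPDFReal α r u) from rfl,
        ← ENNReal.ofReal_mul (by positivity : (0:ℝ) ≤ u⁻¹),
        ← ENNReal.ofReal_mul (gammaPDFReal_nonneg (by linarith) hr u)]))]
  rw [← ofReal_integral_eq_lintegral_ofReal (my_psiInt hα hr)]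
  filter_upwards [ae_restrict_mem measurableSet_Ioi] with u hu
  have hu : (0:ℝ) < u := hu
  have hF0 : 0 ≤ ∫ v in (0:ℝ)..u, gammaPDFReal α r v :=
    intervalIntegral.integral_nonneg hu.le
      (fun v _ => gammaPDFReal_nonneg (by linarith) hr v)
  have hg0 : 0 ≤ gammaPDFReal α r u := gammaPDFReal_nonneg (by linarith) hr u
  simp only [Pi.zero_apply]
  positivity

lemma my_Jval {α r : ℝ} (hα : 1 < α) (hr : 0 < r) :
    ∫ u in Ioi (0:ℝ), gammaPDFReal α r u * (u⁻¹ * ∫ v in (0:ℝ)..u, gammaPDFReal α r v)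
      = (r ^ α / Real.Gamma α)^2 * (Real.Gamma (2*α-1) / r ^ (2*α-1)) *
          ∫ w in (0:ℝ)..1, w ^ (α-1) * (1+w) ^ (1-2*α) := by
  set g := gammaPDFReal α r with hg
  have hgnn : ∀ x, 0 ≤ g x := gammaPDFReal_nonneg (by linarith) hr
  set D := (r ^ α / Real.Gamma α)^2 * (Real.Gamma (2*α-1) / r ^ (2*α-1)) with hD
  have hDnn : 0 ≤ D := by
    have := Real.Gamma_pos_of_pos (show (0:ℝ) < α by linarith)
    have := Real.Gamma_pos_of_pos (show (0:ℝ) < 2*α-1 by linarith)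
    positivity
  -- pointwise rewriting of the integrand as an inner integral
  have hpt : ∀ u ∈ Ioi (0:ℝ), g u * (u⁻¹ * ∫ v in (0:ℝ)..u, g v)
      = ∫ w in Ioc (0:ℝ) 1, g u * g (w*u) := by
    intro u hu
    have hu : (0:ℝ) < u := hu
    have hcm := intervalIntegral.integral_comp_mul_right (a := (0:ℝ)) (b := 1) g hu.ne'
    rw [zero_mul, one_mul, smul_eq_mul] at hcm
    rw [← hcm, ← intervalIntegral.integral_const_mul,
      intervalIntegral.integral_of_le (by norm_num : (0:ℝ) ≤ 1)]
  rw [setIntegral_congr_fun measurableSet_Ioi hpt]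
  -- Fubini
  have hΦm : Measurable (Function.uncurry fun u w : ℝ => g u * g (w*u)) := by
    apply Measurable.mul
    · exact (measurable_gammaPDFReal α r).comp measurable_fst
    · exact (measurable_gammaPDFReal α r).comp (measurable_snd.mul measurable_fst)
  have hKval : ∀ w ∈ Ioc (0:ℝ) 1, ∫ u in Ioi (0:ℝ), g u * g (w*u)
      = (r ^ α / Real.Gamma α)^2 * w ^ (α-1) *
          (Real.Gamma (2*α-1) / (r*(1+w)) ^ (2*α-1)) :=
    fun w hw => (my_inner hα hr hw.1).2
  have hKle : ∀ w ∈ Ioc (0:ℝ) 1,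
      (r ^ α / Real.Gamma α)^2 * w ^ (α-1) *
          (Real.Gamma (2*α-1) / (r*(1+w)) ^ (2*α-1)) ≤ D := by
    intro w hw
    have h1w : (0:ℝ) < 1 + w := by linarith [hw.1]
    have hA : (0:ℝ) ≤ (r ^ α / Real.Gamma α)^2 := sq_nonneg _
    have hw1 : w ^ (α-1) ≤ 1 := Real.rpow_le_one hw.1.le hw.2 (by linarith)
    have hfrac : Real.Gamma (2*α-1) / (r*(1+w)) ^ (2*α-1)
        ≤ Real.Gamma (2*α-1) / r ^ (2*α-1) := by
      apply div_le_div_of_nonneg_left (Real.Gamma_pos_of_pos (by linarith)).le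
        (Real.rpow_pos_of_pos hr _)
      exact Real.rpow_le_rpow hr.le (by nlinarith [hw.1]) (by linarith)
    calc (r ^ α / Real.Gamma α)^2 * w ^ (α-1) *
          (Real.Gamma (2*α-1) / (r*(1+w)) ^ (2*α-1))
        ≤ (r ^ α / Real.Gamma α)^2 * 1 * (Real.Gamma (2*α-1) / r ^ (2*α-1)) := by
          have hG := Real.Gamma_pos_of_pos (show (0:ℝ) < 2*α-1 by linarith)
          have hrp := Real.rpow_pos_of_pos (show (0:ℝ) < r*(1+w) by positivity) (2*α-1)
          have hrp2 := Real.rpow_pos_of_pos hr (2*α-1)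
          apply mul_le_mul
          · exact mul_le_mul_of_nonneg_left hw1 hA
          · exact hfrac
          · positivity
          · positivity
    _ = D := by rw [hD]; ring
  have hInt : Integrable (Function.uncurry fun u w : ℝ => g u * g (w*u))
      ((volume.restrict (Ioi (0:ℝ))).prod (volume.restrict (Ioc (0:ℝ) 1))) := by
    refine ⟨hΦm.aestronglyMeasurable, ?_⟩
    rw [hasFiniteIntegral_iff_ofReal (Filter.Eventually.of_forall fun p => by
      exact mul_nonneg (hgnn _) (hgnn _))]
    rw [lintegral_prod_symm' _ hΦm.ennreal_ofReal]
    have hb : ∀ᵐ w ∂(volume.restrict (Ioc (0:ℝ) 1)),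
        (∫⁻ u, ENNReal.ofReal ((Function.uncurry fun u w : ℝ => g u * g (w*u)) (u, w))
          ∂(volume.restrict (Ioi (0:ℝ)))) ≤ ENNReal.ofReal D := by
      filter_upwards [ae_restrict_mem measurableSet_Ioc] with w hw
      have : ∫⁻ u, ENNReal.ofReal (g u * g (w*u)) ∂(volume.restrict (Ioi (0:ℝ)))
          = ENNReal.ofReal (∫ u in Ioi (0:ℝ), g u * g (w*u)) := by
        rw [← ofReal_integral_eq_lintegral_ofReal (my_inner hα hr hw.1).1
          (Filter.Eventually.of_forall fun u => mul_nonneg (hgnn _) (hgnn _))]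
      simp only [Function.uncurry_apply_pair]
      rw [this, hKval w hw]
      exact ENNReal.ofReal_le_ofReal (hKle w hw)
    calc ∫⁻ w, (∫⁻ u, ENNReal.ofReal ((Function.uncurry fun u w : ℝ => g u * g (w*u)) (u, w))
          ∂(volume.restrict (Ioi (0:ℝ)))) ∂(volume.restrict (Ioc (0:ℝ) 1))
        ≤ ∫⁻ _, ENNReal.ofReal D ∂(volume.restrict (Ioc (0:ℝ) 1)) := lintegral_mono_ae hb
    _ = ENNReal.ofReal D * volume (Ioc (0:ℝ) 1) := by rw [lintegral_const]; simp
    _ < ⊤ := by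
        rw [Real.volume_Ioc]
        exact ENNReal.mul_lt_top ENNReal.ofReal_lt_top ENNReal.ofReal_lt_top
  have hswap := MeasureTheory.integral_integral_swap (f := fun u w : ℝ => g u * g (w*u))
    (μ := volume.restrict (Ioi (0:ℝ))) (ν := volume.restrict (Ioc (0:ℝ) 1)) hInt
  rw [hswap]
  rw [setIntegral_congr_fun measurableSet_Ioc hKval]
  have hpt2 : ∀ w ∈ Ioc (0:ℝ) 1,
      (r ^ α / Real.Gamma α)^2 * w ^ (α-1) *
          (Real.Gamma (2*α-1) / (r*(1+w)) ^ (2*α-1))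
        = D * (w ^ (α-1) * (1+w) ^ (1-2*α)) := by
    intro w hw
    have h1w : (0:ℝ) < 1 + w := by linarith [hw.1]
    have e1 : ((r*(1+w)):ℝ) ^ (2*α-1) = r ^ (2*α-1) * (1+w) ^ (2*α-1) :=
      Real.mul_rpow hr.le h1w.le
    have e2 : ((1+w):ℝ) ^ (1-2*α) = ((1+w) ^ (2*α-1))⁻¹ := by
      rw [← Real.rpow_neg h1w.le, neg_sub]
    rw [e1, e2, hD]
    have h3 : ((1+w):ℝ) ^ (2*α-1) ≠ 0 := (Real.rpow_pos_of_pos h1w _).ne'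
    have h4 : (r:ℝ) ^ (2*α-1) ≠ 0 := (Real.rpow_pos_of_pos hr _).ne'
    field_simp
  rw [setIntegral_congr_fun measurableSet_Ioc hpt2, MeasureTheory.integral_const_mul,
    intervalIntegral.integral_of_le (by norm_num : (0:ℝ) ≤ 1)]

lemma my_algebra {α r : ℝ} (hα : 1 < α) (hr : 0 < r) :
    2 * ((r ^ α / Real.Gamma α)^2 * (Real.Gamma (2*α-1) / r ^ (2*α-1)) *
      ((Real.Gamma (α-1) * Real.Gamma α / Real.Gamma (2*α-1) - (4:ℝ)^(1-α)/(α-1))/2))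
    = r / (α - 1) * (1 - (1 / Real.sqrt π) * (Real.Gamma (α - 1/2) / Real.Gamma α)) := by
  have hne : α - 1 ≠ 0 := by intro h; rw [sub_eq_zero] at h; exact absurd h.symm hα.ne
  have hG1 : 0 < Real.Gamma (α-1) := Real.Gamma_pos_of_pos (by linarith)
  have hGh : 0 < Real.Gamma (α-1/2) := Real.Gamma_pos_of_pos (by linarith)
  have hπ : 0 < Real.sqrt π := Real.sqrt_pos.mpr Real.pi_pos
  have h2p : (0:ℝ) < (2:ℝ) ^ (2-2*α) := Real.rpow_pos_of_pos (by norm_num) _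
  have hGa : Real.Gamma α = (α-1) * Real.Gamma (α-1) := by
    have h := Real.Gamma_add_one hne
    rw [show α - 1 + 1 = α by ring] at h
    exact h
  have hdup := Real.Gamma_mul_Gamma_add_half (α - 1/2)
  rw [show α - 1/2 + 1/2 = α by ring, show 2*(α-1/2) = 2*α-1 by ring,
    show 1-(2*α-1) = 2-2*α by ring] at hdup
  have hΓ2 : Real.Gamma (2*α-1)
      = Real.Gamma (α-1/2) * Real.Gamma α / ((2:ℝ)^(2-2*α) * Real.sqrt π) := by
    rw [eq_div_iff (by positivity)]
    linear_combination -hdup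
  have h4 : (4:ℝ)^(1-α) = (2:ℝ)^(2-2*α) := by
    rw [show (4:ℝ) = (2:ℝ)^(2:ℝ) by
        rw [show ((2:ℝ):ℝ) = ((2:ℕ):ℝ) by norm_num, Real.rpow_natCast]; norm_num,
      ← Real.rpow_mul (by norm_num : (0:ℝ) ≤ 2)]
    congr 1; ring
  have hsq : (r ^ α / Real.Gamma α)^2 = r * r ^ (2*α-1) / (Real.Gamma α)^2 := by
    rw [div_pow, sq]
    congr 1
    rw [← Real.rpow_add hr, show r * r^(2*α-1) = r^(1:ℝ) * r^(2*α-1) by rw [Real.rpow_one],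
      ← Real.rpow_add hr]
    congr 1; ring
  have hrq : (0:ℝ) < r ^ (2*α-1) := Real.rpow_pos_of_pos hr _
  rw [hsq, hΓ2, h4, hGa]
  set G1 := Real.Gamma (α-1) with hsetG1
  set Gh := Real.Gamma (α-1/2) with hsetGh
  set s := Real.sqrt π with hsets
  set p := (2:ℝ)^(2-2*α) with hsetp
  set q := r^(2*α-1) with hsetq
  set a := α-1 with hseta
  field_simp

lemma my_main {α r : ℝ} (hα : 1 < α) (hr : 0 < r) :
    ∫⁻ p : ℝ × ℝ, ENNReal.ofReal ((max p.1 p.2)⁻¹)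
        ∂((gammaMeasure α r).prod (gammaMeasure α r))
      = ENNReal.ofReal (r / (α - 1) *
          (1 - (1 / Real.sqrt π) * (Real.Gamma (α - 1/2) / Real.Gamma α))) := by
  rw [my_reduce hα hr, my_W hα hr, my_Jval hα hr, my_keyN hα, my_keyM hα]
  rw [show (2:ℝ≥0∞) = ENNReal.ofReal (2:ℝ) by simp]
  rw [← ENNReal.ofReal_mul (by norm_num : (0:ℝ) ≤ 2)]
  congr 1
  exact my_algebra hα hr

/-- If `X, Y` are i.i.d. InverseGamma(shape `α > 1`, scale `θ`) random variables
(i.e. `1/X` is Gamma with shape `α` and scale `θ`, that is rate `θ⁻¹`), then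
`E[min{X,Y}] = (θ⁻¹/(α−1)) (1 − Γ(α−1/2)/(√π Γ(α)))`. -/
theorem min_invGamma_mean {Ω : Type*} [MeasureSpace Ω]
    [IsProbabilityMeasure (ℙ : Measure Ω)]
    (X Y : Ω → ℝ) (α θ : ℝ) (hα : 1 < α) (hθ : 0 < θ)
    (hX : Measure.map (fun ω => (X ω)⁻¹) ℙ = gammaMeasure α θ⁻¹)
    (hY : Measure.map (fun ω => (Y ω)⁻¹) ℙ = gammaMeasure α θ⁻¹)
    (hindep : IndepFun X Y ℙ) :
    ∫ ω, min (X ω) (Y ω) ∂ℙ =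
      θ⁻¹ / (α - 1) * (1 - (1 / Real.sqrt π) * (Real.Gamma (α - 1/2) / Real.Gamma α)) := by
  have hr : (0:ℝ) < θ⁻¹ := inv_pos.mpr hθ
  haveI hprob : IsProbabilityMeasure (gammaMeasure α θ⁻¹) :=
    isProbabilityMeasure_gammaMeasure (by linarith) hr
  -- a.e.-measurability
  have hXm : AEMeasurable (fun ω => (X ω)⁻¹) ℙ := by
    by_contra h
    rw [Measure.map_of_not_aemeasurable h] at hX
    have h1 : gammaMeasure α θ⁻¹ univ = 0 := by rw [← hX]; simp
    rw [measure_univ] at h1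
    exact one_ne_zero h1
  have hYm : AEMeasurable (fun ω => (Y ω)⁻¹) ℙ := by
    by_contra h
    rw [Measure.map_of_not_aemeasurable h] at hY
    have h1 : gammaMeasure α θ⁻¹ univ = 0 := by rw [← hY]; simp
    rw [measure_univ] at h1
    exact one_ne_zero h1
  have hXm' : AEMeasurable X ℙ := by
    have h2 := measurable_inv.comp_aemeasurable hXm
    have h3 : (Inv.inv ∘ fun ω => (X ω)⁻¹) = X := by
      funext ω; simp
    rwa [h3] at h2
  have hYm' : AEMeasurable Y ℙ := by
    have h2 := measurable_inv.comp_aemeasurable hYm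
    have h3 : (Inv.inv ∘ fun ω => (Y ω)⁻¹) = Y := by
      funext ω; simp
    rwa [h3] at h2
  -- a.e. positivity
  have hXpos : ∀ᵐ ω ∂ℙ, 0 < X ω := by
    rw [ae_iff]
    have hset : {ω | ¬ 0 < X ω} = (fun ω => (X ω)⁻¹) ⁻¹' (Iic 0) := by
      ext ω; simp [not_lt, inv_nonpos]
    rw [hset, ← Measure.map_apply_of_aemeasurable hXm measurableSet_Iic, hX,
      my_zero_mass hα hr]
  have hYpos : ∀ᵐ ω ∂ℙ, 0 < Y ω := by
    rw [ae_iff]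
    have hset : {ω | ¬ 0 < Y ω} = (fun ω => (Y ω)⁻¹) ⁻¹' (Iic 0) := by
      ext ω; simp [not_lt, inv_nonpos]
    rw [hset, ← Measure.map_apply_of_aemeasurable hYm measurableSet_Iic, hY,
      my_zero_mass hα hr]
  -- rewrite min via max of inverses
  have hmin : ∀ᵐ ω ∂ℙ, min (X ω) (Y ω) = (max (X ω)⁻¹ (Y ω)⁻¹)⁻¹ := by
    filter_upwards [hXpos, hYpos] with ω h1 h2
    rcases le_total (X ω) (Y ω) with h | h
    · rw [min_eq_left h, max_eq_left (by exact inv_anti₀ h1 h), inv_inv]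
    · rw [min_eq_right h, max_eq_right (by exact inv_anti₀ h2 h), inv_inv]
  have hint : ∫ ω, min (X ω) (Y ω) ∂ℙ
      = (∫⁻ ω, ENNReal.ofReal (min (X ω) (Y ω)) ∂ℙ).toReal := by
    apply integral_eq_lintegral_of_nonneg_ae
    · filter_upwards [hXpos, hYpos] with ω h1 h2
      exact le_min h1.le h2.le
    · exact (hXm'.min hYm').aestronglyMeasurable
  have hlin : ∫⁻ ω, ENNReal.ofReal (min (X ω) (Y ω)) ∂ℙ
      = ∫⁻ ω, ENNReal.ofReal ((max (X ω)⁻¹ (Y ω)⁻¹)⁻¹) ∂ℙ := by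
    apply lintegral_congr_ae
    filter_upwards [hmin] with ω h
    rw [h]
  have hpair : Measure.map (fun ω => ((X ω)⁻¹, (Y ω)⁻¹)) ℙ
      = (gammaMeasure α θ⁻¹).prod (gammaMeasure α θ⁻¹) := by
    have hi : IndepFun (fun ω => (X ω)⁻¹) (fun ω => (Y ω)⁻¹) ℙ :=
      hindep.comp measurable_inv measurable_inv
    rw [(indepFun_iff_map_prod_eq_prod_map_map hXm hYm).mp hi, hX, hY]
  have hlift : ∫⁻ ω, ENNReal.ofReal ((max (X ω)⁻¹ (Y ω)⁻¹)⁻¹) ∂ℙ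
      = ∫⁻ p : ℝ × ℝ, ENNReal.ofReal ((max p.1 p.2)⁻¹)
          ∂((gammaMeasure α θ⁻¹).prod (gammaMeasure α θ⁻¹)) := by
    rw [← hpair]
    exact (lintegral_map' ((measurable_fst.max measurable_snd).inv.ennreal_ofReal).aemeasurable
      (hXm.prodMk hYm)).symm
  rw [hint, hlin, hlift, my_main hα hr]
  rw [ENNReal.toReal_ofReal]
  rw [← my_algebra hα hr, ← my_keyM hα]
  have hM : 0 ≤ ∫ t in (0:ℝ)..(1/2), t ^ (α-1) * (1-t) ^ (α-2) :=
    intervalIntegral.integral_nonneg (by norm_num) fun t ht =>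
      mul_nonneg (Real.rpow_nonneg ht.1 _) (Real.rpow_nonneg (by linarith [ht.2] : (0:ℝ) ≤ 1 - t) _)
  have hG := Real.Gamma_pos_of_pos (show (0:ℝ) < 2*α-1 by linarith)
  have hrq : (0:ℝ) < θ⁻¹ ^ (2*α-1) := Real.rpow_pos_of_pos hr _
  positivity
end

section
/- Let X and Y be i.i.d. lognormal random variables with parameters μ ∈ ℝ and σ > 0 (i.e., log X ~ N(μ, σ²)). Then for every a > 0, E[(min{X,Y})^a] = 2 e^(aμ + (aσ)²/2) Φ(−aσ/√2), where Φ is the standard normal c.d.f. -/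
open MeasureTheory ProbabilityTheory Real

/-- The standard normal cumulative distribution function. -/
noncomputable def stdNormalCDF (z : ℝ) : ℝ :=
  ∫ t in Set.Iic z, Real.exp (-t ^ 2 / 2) / Real.sqrt (2 * π)

open Set

namespace MinLogNormalAux

/-- Standard normal density. -/
noncomputable def stdG (t : ℝ) : ℝ := Real.exp (-t ^ 2 / 2) / Real.sqrt (2 * π)

lemma stdG_eq : stdG = gaussianPDFReal 0 1 := by
  funext x
  simp only [stdG, gaussianPDFReal, NNReal.coe_one, mul_one, sub_zero]
  rw [div_eq_inv_mul]

lemma stdG_nonneg (t : ℝ) : 0 ≤ stdG t := div_nonneg (Real.exp_nonneg _) (Real.sqrt_nonneg _)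

lemma continuous_stdG : Continuous stdG := by
  unfold stdG
  fun_prop

lemma integrable_stdG : Integrable stdG := by
  rw [stdG_eq]; exact integrable_gaussianPDFReal 0 1

lemma integral_stdG : ∫ t, stdG t = 1 := by
  rw [stdG_eq]
  exact integral_gaussianPDFReal_eq_one 0 one_ne_zero

lemma stdG_neg (t : ℝ) : stdG (-t) = stdG t := by simp [stdG]

lemma stdG_mul_exp (c z : ℝ) :
    Real.exp (c * z) * stdG z = Real.exp (c ^ 2 / 2) * stdG (z - c) := by
  simp only [stdG, ← mul_div_assoc, ← Real.exp_add]
  congr 2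
  ring

lemma stdNormalCDF_eq (z : ℝ) : stdNormalCDF z = ∫ t in Iic z, stdG t := rfl

lemma setIntegral_Iic_comp_sub (f : ℝ → ℝ) (z c : ℝ) :
    ∫ t in Iic z, f (t - c) = ∫ t in Iic (z - c), f t := by
  have A : MeasurableEmbedding (fun x : ℝ => x + -c) :=
    (Homeomorph.addRight (-c)).measurableEmbedding
  have h := A.setIntegral_map (μ := volume) f (Iic (z - c))
  rw [map_add_right_eq_self volume (-c)] at h
  have hs : (fun x : ℝ => x + -c) ⁻¹' Iic (z - c) = Iic z := by
    ext x
    simp only [mem_preimage, mem_Iic]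
    constructor <;> intro hx <;> linarith
  rw [hs] at h
  simp only [← sub_eq_add_neg] at h
  exact h.symm

lemma setIntegral_Ioi_comp_add (f : ℝ → ℝ) (u c : ℝ) :
    ∫ s in Ioi c, f (s + u) = ∫ t in Ioi (c + u), f t := by
  have A : MeasurableEmbedding (fun x : ℝ => x + u) :=
    (Homeomorph.addRight u).measurableEmbedding
  have h := A.setIntegral_map (μ := volume) f (Ioi (c + u))
  rw [map_add_right_eq_self volume u] at h
  have hs : (fun x : ℝ => x + u) ⁻¹' Ioi (c + u) = Ioi c := by
    ext x
    simp only [mem_preimage, mem_Ioi]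
    constructor <;> intro hx <;> linarith
  rw [hs] at h
  exact h.symm

lemma stdNormalCDF_neg (x : ℝ) : stdNormalCDF (-x) = ∫ t in Ioi x, stdG t := by
  have h := integral_comp_neg_Iic (-x) stdG
  simp_rw [stdG_neg] at h
  rw [stdNormalCDF_eq, h, neg_neg]

lemma stdNormalCDF_Ioi (z : ℝ) : ∫ t in Ioi z, stdG t = 1 - stdNormalCDF z := by
  have h := integral_add_compl (measurableSet_Iic (a := z)) integrable_stdG
  rw [compl_Iic, integral_stdG, ← stdNormalCDF_eq] at h
  linarith

lemma stdNormalCDF_neg' (x : ℝ) : stdNormalCDF (-x) = 1 - stdNormalCDF x := by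
  rw [stdNormalCDF_neg, stdNormalCDF_Ioi]

lemma stdNormalCDF_mono : Monotone stdNormalCDF := by
  intro x y hxy
  rw [stdNormalCDF_eq, stdNormalCDF_eq]
  exact setIntegral_mono_set integrable_stdG.integrableOn
    (Filter.Eventually.of_forall stdG_nonneg)
    (HasSubset.Subset.eventuallyLE (Iic_subset_Iic.2 hxy))

lemma measurable_stdNormalCDF : Measurable stdNormalCDF := stdNormalCDF_mono.measurable

lemma stdNormalCDF_nonneg (z : ℝ) : 0 ≤ stdNormalCDF z :=
  setIntegral_nonneg measurableSet_Iic fun t _ => stdG_nonneg t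

lemma stdNormalCDF_le_one (z : ℝ) : stdNormalCDF z ≤ 1 := by
  rw [stdNormalCDF_eq, ← integral_stdG]
  exact setIntegral_le_integral integrable_stdG (Filter.Eventually.of_forall stdG_nonneg)

lemma integral_gaussianReal_eq (f : ℝ → ℝ) :
    ∫ x, f x ∂(gaussianReal 0 1) = ∫ x, stdG x * f x := by
  rw [gaussianReal_of_var_ne_zero 0 one_ne_zero]
  have hp : gaussianPDF 0 1 = fun x => ((gaussianPDFReal 0 1 x).toNNReal : ENNReal) := rfl
  rw [hp, integral_withDensity_eq_integral_smul ((measurable_gaussianPDFReal 0 1).real_toNNReal) f]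
  congr 1
  funext x
  rw [NNReal.smul_def, Real.coe_toNNReal _ (gaussianPDFReal_nonneg 0 1 x), smul_eq_mul, stdG_eq]

lemma integrable_gaussianReal_iff (f : ℝ → ℝ) :
    Integrable f (gaussianReal 0 1) ↔ Integrable (fun x => f x * stdG x) := by
  rw [gaussianReal_of_var_ne_zero 0 one_ne_zero,
    integrable_withDensity_iff (measurable_gaussianPDF 0 1)
      (Filter.Eventually.of_forall fun x => ENNReal.ofReal_lt_top)]
  have key : ∀ x, (gaussianPDF 0 1 x).toReal = stdG x := by
    intro x
    rw [gaussianPDF, ENNReal.toReal_ofReal (gaussianPDFReal_nonneg 0 1 x)]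
    exact (congrFun stdG_eq x).symm
  constructor <;> intro h <;>
    exact h.congr (Filter.Eventually.of_forall fun x => by simp only [key])

lemma integrable_exp_gaussian (c : ℝ) :
    Integrable (fun x => Real.exp (c * x)) (gaussianReal 0 1) := by
  rw [integrable_gaussianReal_iff]
  have h : (fun x => Real.exp (c * x) * stdG x)
      = fun x => Real.exp (c ^ 2 / 2) * stdG (x - c) := funext fun x => stdG_mul_exp c x
  rw [h]
  exact (integrable_stdG.comp_sub_right c).const_mul _

/-- Gaussian convolution identity. -/
lemma gauss_conv (s : ℝ) :
    ∫ u, stdG u * stdG (s + u) = Real.exp (-s ^ 2 / 4) / (2 * Real.sqrt π) := by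
  have hπ : Real.sqrt π * Real.sqrt π = π := Real.mul_self_sqrt pi_pos.le
  have h1 : ∀ u, stdG u * stdG (s + u)
      = (Real.exp (-s ^ 2 / 4) / (2 * π)) * Real.exp (-(1:ℝ) * (u + s / 2) ^ 2) := by
    intro u
    simp only [stdG]
    rw [div_mul_div_comm, ← Real.exp_add, Real.mul_self_sqrt (by positivity),
      div_mul_eq_mul_div, ← Real.exp_add]
    congr 1
    ring
  simp_rw [h1]
  rw [integral_const_mul]
  have h2 : ∫ u : ℝ, Real.exp (-(1:ℝ) * (u + s / 2) ^ 2)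
      = ∫ u : ℝ, Real.exp (-(1:ℝ) * u ^ 2) :=
    integral_add_right_eq_self (fun x => Real.exp (-(1:ℝ) * x ^ 2)) (s / 2)
  rw [h2, integral_gaussian]
  have h3 : Real.sqrt (π / 1) = Real.sqrt π := by norm_num
  rw [h3]
  rw [div_mul_eq_mul_div, div_eq_div_iff (by positivity) (by positivity)]
  nlinarith [Real.exp_pos (-s ^ 2 / 4), Real.sqrt_nonneg π]

lemma tail_eq (c : ℝ) :
    ∫ s in Ioi c, Real.exp (-s ^ 2 / 4) / (2 * Real.sqrt π)
      = stdNormalCDF (-c / Real.sqrt 2) := by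
  have h2 : (0:ℝ) < Real.sqrt 2 := Real.sqrt_pos.2 (by norm_num)
  have hσ : Real.sqrt 2 * Real.sqrt 2 = 2 := Real.mul_self_sqrt (by norm_num)
  have hπ : Real.sqrt π * Real.sqrt π = π := Real.mul_self_sqrt pi_pos.le
  have hr : -c / Real.sqrt 2 = -(c / Real.sqrt 2) := by ring
  rw [hr, stdNormalCDF_neg]
  have h := integral_comp_mul_left_Ioi
    (fun s => Real.exp (-s ^ 2 / 4) / (2 * Real.sqrt π)) (c / Real.sqrt 2) h2
  have hc : Real.sqrt 2 * (c / Real.sqrt 2) = c := by field_simp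
  rw [hc] at h
  have h3 : ∀ x : ℝ, Real.exp (-(Real.sqrt 2 * x) ^ 2 / 4) / (2 * Real.sqrt π) = stdG x / Real.sqrt 2 := by
    intro x
    have : (Real.sqrt 2 * x) ^ 2 = 2 * x ^ 2 := by
      rw [mul_pow]; rw [sq]; rw [hσ]
    rw [this, stdG]
    rw [Real.sqrt_mul (by norm_num : (0:ℝ) ≤ 2) π]
    have e1 : -(2 * x ^ 2) / 4 = -x ^ 2 / 2 := by ring
    rw [e1]
    rw [div_div]
    congr 1
    nlinarith [Real.sqrt_nonneg π, Real.sqrt_nonneg 2]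
  simp only [h3] at h
  -- h : ∫ x in Ioi (c/√2), stdG x / √2 = (√2)⁻¹ • ∫ s in Ioi c, exp(-s^2/4)/(2√π)
  have h4 : ∫ x in Ioi (c / Real.sqrt 2), stdG x / Real.sqrt 2
      = (Real.sqrt 2)⁻¹ * ∫ x in Ioi (c / Real.sqrt 2), stdG x := by
    simp_rw [div_eq_inv_mul]
    rw [integral_const_mul]
  rw [h4, smul_eq_mul] at h
  have := mul_left_cancel₀ (inv_ne_zero h2.ne') h
  rw [this]

lemma inner_int (c : ℝ) (hc : 0 ≤ c) (z : ℝ) :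
    ∫ y, Real.exp (c * min z y) ∂(gaussianReal 0 1)
      = Real.exp (c ^ 2 / 2) * stdNormalCDF (z - c)
        + Real.exp (c * z) * (1 - stdNormalCDF z) := by
  rw [integral_gaussianReal_eq]
  have hbd : ∀ y, ‖stdG y * Real.exp (c * min z y)‖ ≤ Real.exp (c * z) * stdG y := by
    intro y
    rw [Real.norm_eq_abs, abs_mul, abs_of_nonneg (stdG_nonneg y),
      abs_of_nonneg (Real.exp_nonneg _), mul_comm]
    exact mul_le_mul_of_nonneg_right
      (Real.exp_le_exp.2 (mul_le_mul_of_nonneg_left (min_le_left z y) hc)) (stdG_nonneg y)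
  have hInt : Integrable (fun y => stdG y * Real.exp (c * min z y)) := by
    refine Integrable.mono' (integrable_stdG.const_mul (Real.exp (c * z))) ?_
      (Filter.Eventually.of_forall hbd)
    exact (continuous_stdG.mul (Real.continuous_exp.comp
      (continuous_const.mul (continuous_const.min continuous_id)))).aestronglyMeasurable
  rw [← integral_add_compl (measurableSet_Iic (a := z)) hInt, compl_Iic]
  congr 1
  · rw [setIntegral_congr_fun measurableSet_Iic
      (g := fun y => Real.exp (c ^ 2 / 2) * stdG (y - c)) ?_]
    · rw [integral_const_mul, setIntegral_Iic_comp_sub stdG z c, ← stdNormalCDF_eq]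
    · intro y hy
      have hm : min z y = y := min_eq_right (mem_Iic.1 hy)
      simp only [hm]
      rw [mul_comm, stdG_mul_exp]
  · rw [setIntegral_congr_fun measurableSet_Ioi
      (g := fun y => Real.exp (c * z) * stdG y) ?_]
    · rw [integral_const_mul, stdNormalCDF_Ioi]
    · intro y hy
      have hm : min z y = z := min_eq_left (le_of_lt (mem_Ioi.1 hy))
      simp only [hm]
      rw [mul_comm]

lemma integrable_inner_exp_min (c : ℝ) (hc : 0 ≤ c) (x : ℝ) :
    Integrable (fun y => Real.exp (c * min x y)) (gaussianReal 0 1) := by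
  refine Integrable.mono' (integrable_const (Real.exp (c * x))) ?_
    (Filter.Eventually.of_forall fun y => ?_)
  · exact (Real.continuous_exp.comp
      (continuous_const.mul (continuous_const.min continuous_id))).aestronglyMeasurable
  · rw [Real.norm_eq_abs, abs_of_nonneg (Real.exp_nonneg _)]
    exact Real.exp_le_exp.2 (mul_le_mul_of_nonneg_left (min_le_left x y) hc)

lemma integrable_prod_exp_min (c : ℝ) (hc : 0 ≤ c) :
    Integrable (fun p : ℝ × ℝ => Real.exp (c * min p.1 p.2))
      ((gaussianReal 0 1).prod (gaussianReal 0 1)) := by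
  have hcont : Continuous fun p : ℝ × ℝ => Real.exp (c * min p.1 p.2) :=
    Real.continuous_exp.comp (continuous_const.mul (continuous_fst.min continuous_snd))
  rw [integrable_prod_iff hcont.aestronglyMeasurable]
  constructor
  · exact Filter.Eventually.of_forall fun x => integrable_inner_exp_min c hc x
  · refine Integrable.mono' (integrable_exp_gaussian c) ?_
      (Filter.Eventually.of_forall fun x => ?_)
    · exact hcont.norm.aestronglyMeasurable.integral_prod_right'
    · rw [Real.norm_of_nonneg (integral_nonneg fun y => norm_nonneg _)]
      calc ∫ y, ‖Real.exp (c * min x y)‖ ∂(gaussianReal 0 1)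
          ≤ ∫ _y, Real.exp (c * x) ∂(gaussianReal 0 1) := by
            refine integral_mono (integrable_inner_exp_min c hc x).norm (integrable_const _)
              fun y => ?_
            rw [Real.norm_eq_abs, abs_of_nonneg (Real.exp_nonneg _)]
            exact Real.exp_le_exp.2 (mul_le_mul_of_nonneg_left (min_le_left x y) hc)
        _ = Real.exp (c * x) := by simp

lemma J_eq (c : ℝ) (hc : 0 < c) :
    ∫ p : ℝ × ℝ, Real.exp (c * min p.1 p.2) ∂((gaussianReal 0 1).prod (gaussianReal 0 1))
      = 2 * Real.exp (c ^ 2 / 2) * stdNormalCDF (-c / Real.sqrt 2) := by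
  rw [integral_prod _ (integrable_prod_exp_min c hc.le)]
  simp_rw [inner_int c hc.le]
  rw [integral_gaussianReal_eq]
  have hI1 : Integrable (fun x => stdG x * stdNormalCDF (x - c)) := by
    refine Integrable.mono' integrable_stdG ?_ (Filter.Eventually.of_forall fun x => ?_)
    · exact continuous_stdG.aestronglyMeasurable.mul
        ((measurable_stdNormalCDF.comp (measurable_id.sub_const c)).aestronglyMeasurable)
    · rw [Real.norm_eq_abs, abs_mul, abs_of_nonneg (stdG_nonneg x),
        abs_of_nonneg (stdNormalCDF_nonneg _)]
      exact mul_le_of_le_one_right (stdG_nonneg x) (stdNormalCDF_le_one _)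
  have hI2 : Integrable (fun x => stdG (x - c) * (1 - stdNormalCDF x)) := by
    refine Integrable.mono' (integrable_stdG.comp_sub_right c) ?_
      (Filter.Eventually.of_forall fun x => ?_)
    · exact (continuous_stdG.comp (continuous_id.sub continuous_const)).aestronglyMeasurable.mul
        ((measurable_const.sub measurable_stdNormalCDF).aestronglyMeasurable)
    · rw [Real.norm_eq_abs, abs_mul, abs_of_nonneg (stdG_nonneg _),
        abs_of_nonneg (by linarith [stdNormalCDF_le_one x] : (0:ℝ) ≤ 1 - stdNormalCDF x)]
      exact mul_le_of_le_one_right (stdG_nonneg _)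
        (by linarith [stdNormalCDF_nonneg x])
  have hsplit : (fun x => stdG x * (Real.exp (c ^ 2 / 2) * stdNormalCDF (x - c)
        + Real.exp (c * x) * (1 - stdNormalCDF x)))
      = fun x => Real.exp (c ^ 2 / 2) * (stdG x * stdNormalCDF (x - c))
        + Real.exp (c ^ 2 / 2) * (stdG (x - c) * (1 - stdNormalCDF x)) := by
    funext x
    have h := stdG_mul_exp c x
    linear_combination (1 - stdNormalCDF x) * h
  rw [hsplit, integral_add (hI1.const_mul _) (hI2.const_mul _),
    integral_const_mul, integral_const_mul]
  have hT1 : ∫ x, stdG x * stdNormalCDF (x - c)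
      = ∫ x, stdG x * (1 - stdNormalCDF (x + c)) := by
    rw [← integral_neg_eq_self (fun x => stdG x * stdNormalCDF (x - c)) volume]
    congr 1
    funext x
    rw [stdG_neg]
    congr 1
    have he : -x - c = -(x + c) := by ring
    rw [he, stdNormalCDF_neg']
  have hT2 : ∫ x, stdG (x - c) * (1 - stdNormalCDF x)
      = ∫ x, stdG x * (1 - stdNormalCDF (x + c)) := by
    rw [← integral_add_right_eq_self (fun x => stdG (x - c) * (1 - stdNormalCDF x)) c]
    congr 1
    funext x
    rw [add_sub_cancel_right]
  have hD : ∫ x, stdG x * (1 - stdNormalCDF (x + c)) = stdNormalCDF (-c / Real.sqrt 2) := by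
    have h1 : ∀ x : ℝ, (1 : ℝ) - stdNormalCDF (x + c) = ∫ s in Ioi c, stdG (s + x) := by
      intro x
      rw [setIntegral_Ioi_comp_add stdG x c, add_comm c x, stdNormalCDF_Ioi]
    have e1 : (fun x => stdG x * (1 - stdNormalCDF (x + c)))
        = fun x => ∫ s in Ioi c, stdG x * stdG (s + x) := by
      funext x
      rw [h1 x]
      exact (integral_const_mul _ _).symm
    have hswap : Integrable (fun p : ℝ × ℝ => stdG p.1 * stdG (p.2 + p.1))
        (volume.prod ((volume : Measure ℝ).restrict (Ioi c))) := by
      have hcont : Continuous fun p : ℝ × ℝ => stdG p.1 * stdG (p.2 + p.1) :=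
        (continuous_stdG.comp continuous_fst).mul
          (continuous_stdG.comp (continuous_snd.add continuous_fst))
      rw [integrable_prod_iff hcont.aestronglyMeasurable]
      constructor
      · exact Filter.Eventually.of_forall fun x =>
          ((integrable_stdG.comp_add_right x).const_mul (stdG x)).integrableOn
      · refine Integrable.mono' integrable_stdG ?_ (Filter.Eventually.of_forall fun x => ?_)
        · exact hcont.norm.aestronglyMeasurable.integral_prod_right'
        · rw [Real.norm_of_nonneg (integral_nonneg fun s => norm_nonneg _)]
          have hns : ∀ s, ‖stdG x * stdG (s + x)‖ = stdG x * stdG (s + x) :=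
            fun s => Real.norm_of_nonneg (mul_nonneg (stdG_nonneg _) (stdG_nonneg _))
          calc ∫ s in Ioi c, ‖stdG x * stdG (s + x)‖
              = ∫ s in Ioi c, stdG x * stdG (s + x) := by simp_rw [hns]
            _ = stdG x * ∫ s in Ioi c, stdG (s + x) := integral_const_mul _ _
            _ ≤ stdG x * 1 := by
                refine mul_le_mul_of_nonneg_left ?_ (stdG_nonneg x)
                calc ∫ s in Ioi c, stdG (s + x)
                    ≤ ∫ s, stdG (s + x) := setIntegral_le_integral
                      (integrable_stdG.comp_add_right x)
                      (Filter.Eventually.of_forall fun s => stdG_nonneg _)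
                  _ = 1 := by rw [integral_add_right_eq_self stdG x, integral_stdG]
            _ = stdG x := mul_one _
    rw [e1, integral_integral_swap hswap,
      setIntegral_congr_fun measurableSet_Ioi
        (g := fun s => Real.exp (-s ^ 2 / 4) / (2 * Real.sqrt π)) fun s _ => gauss_conv s]
    exact tail_eq c
  rw [hT1, hT2, hD]
  ring

end MinLogNormalAux

open MinLogNormalAux in
/-- If `X = e^(μ + σZ₁)` and `Y = e^(μ + σZ₂)` with `Z₁, Z₂` i.i.d. standard normal, then
for every `a > 0`, `E[(min{X,Y})^a] = 2 e^(aμ + (aσ)²/2) Φ(−aσ/√2)`. -/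
theorem min_logNormal_moment {Ω : Type*} [MeasureSpace Ω]
    [IsProbabilityMeasure (ℙ : Measure Ω)]
    (Z₁ Z₂ : Ω → ℝ) (μ σ : ℝ) (hσ : 0 < σ)
    (hZ₁ : Measure.map Z₁ ℙ = gaussianReal 0 1)
    (hZ₂ : Measure.map Z₂ ℙ = gaussianReal 0 1)
    (hindep : IndepFun Z₁ Z₂ ℙ)
    (X Y : Ω → ℝ)
    (hX : X = fun ω => Real.exp (μ + σ * Z₁ ω))
    (hY : Y = fun ω => Real.exp (μ + σ * Z₂ ω))
    (a : ℝ) (ha : 0 < a) :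
    ∫ ω, (min (X ω) (Y ω)) ^ a ∂ℙ =
      2 * Real.exp (a * μ + (a * σ) ^ 2 / 2) * stdNormalCDF (-(a * σ) / Real.sqrt 2) := by
  subst hX hY
  have hZ₁m : AEMeasurable Z₁ ℙ := by
    apply aemeasurable_of_map_neZero
    rw [hZ₁]
    infer_instance
  have hZ₂m : AEMeasurable Z₂ ℙ := by
    apply aemeasurable_of_map_neZero
    rw [hZ₂]
    infer_instance
  have hcpos : 0 < a * σ := mul_pos ha hσ
  have hmap : Measure.map (fun ω => (Z₁ ω, Z₂ ω)) ℙ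
      = (gaussianReal 0 1).prod (gaussianReal 0 1) := by
    exact ((indepFun_iff_map_prod_eq_prod_map_map hZ₁m hZ₂m).mp hindep).trans
      (by rw [hZ₁, hZ₂])
  have hpt : ∀ ω, (min (Real.exp (μ + σ * Z₁ ω)) (Real.exp (μ + σ * Z₂ ω))) ^ a
      = Real.exp (a * μ) * Real.exp ((a * σ) * min (Z₁ ω) (Z₂ ω)) := by
    intro ω
    have hmin : min (Real.exp (μ + σ * Z₁ ω)) (Real.exp (μ + σ * Z₂ ω))
        = Real.exp (μ + σ * min (Z₁ ω) (Z₂ ω)) := by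
      rcases le_total (Z₁ ω) (Z₂ ω) with h | h
      · rw [min_eq_left (Real.exp_le_exp.2 (by nlinarith)), min_eq_left h]
      · rw [min_eq_right (Real.exp_le_exp.2 (by nlinarith)), min_eq_right h]
    rw [hmin, ← Real.exp_mul, ← Real.exp_add]
    congr 1
    ring
  simp only
  simp_rw [hpt]
  rw [integral_const_mul]
  have hcm : Continuous fun p : ℝ × ℝ => Real.exp ((a * σ) * min p.1 p.2) :=
    Real.continuous_exp.comp (continuous_const.mul (continuous_fst.min continuous_snd))
  have h2 : ∫ ω, Real.exp ((a * σ) * min (Z₁ ω) (Z₂ ω)) ∂ℙ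
      = ∫ p : ℝ × ℝ, Real.exp ((a * σ) * min p.1 p.2)
          ∂((gaussianReal 0 1).prod (gaussianReal 0 1)) := by
    rw [← hmap, integral_map (hZ₁m.prodMk hZ₂m) hcm.aestronglyMeasurable]
  rw [h2, J_eq (a * σ) hcpos, Real.exp_add]
  ring
end

section
/- Let Z₁, Z₂ be i.i.d. standard normal random variables and a, σ > 0. Then E[e^(aσ min{Z₁,Z₂})] = 2 e^((aσ)²/2) Φ(−aσ/√2). -/
open MeasureTheory ProbabilityTheory Real

section aux

open Set

noncomputable def npdf (x : ℝ) : ℝ := Real.exp (-x ^ 2 / 2) / Real.sqrt (2 * π)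

lemma gaussianPDFReal_eq_npdf : gaussianPDFReal 0 1 = npdf := by
  ext x
  simp [gaussianPDFReal, npdf, div_eq_mul_inv, mul_comm]

lemma npdf_nonneg (x : ℝ) : 0 ≤ npdf x :=
  div_nonneg (Real.exp_pos _).le (Real.sqrt_nonneg _)

lemma continuous_npdf : Continuous npdf := by
  unfold npdf; fun_prop

lemma integrable_npdf : Integrable npdf := by
  rw [← gaussianPDFReal_eq_npdf]; exact integrable_gaussianPDFReal 0 1

lemma integral_npdf : ∫ x, npdf x = 1 := by
  rw [← gaussianPDFReal_eq_npdf]; exact integral_gaussianPDFReal_eq_one 0 one_ne_zero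

lemma npdf_neg (x : ℝ) : npdf (-x) = npdf x := by simp [npdf]

lemma stdNormalCDF_eq (z : ℝ) : stdNormalCDF z = ∫ t in Iic z, npdf t := rfl

lemma stdNormalCDF_nonneg (z : ℝ) : 0 ≤ stdNormalCDF z :=
  setIntegral_nonneg measurableSet_Iic fun x _ => npdf_nonneg x

lemma stdNormalCDF_le_one (z : ℝ) : stdNormalCDF z ≤ 1 := by
  rw [stdNormalCDF_eq, ← integral_npdf]
  exact setIntegral_le_integral integrable_npdf (Filter.Eventually.of_forall npdf_nonneg)

lemma monotone_stdNormalCDF : Monotone stdNormalCDF := by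
  intro x y hxy
  rw [stdNormalCDF_eq, stdNormalCDF_eq]
  exact setIntegral_mono_set integrable_npdf.integrableOn
    (Filter.Eventually.of_forall npdf_nonneg)
    (HasSubset.Subset.eventuallyLE (Iic_subset_Iic.mpr hxy))

lemma measurable_stdNormalCDF : Measurable stdNormalCDF :=
  monotone_stdNormalCDF.measurable

lemma integral_Ioi_npdf (z : ℝ) : ∫ t in Ioi z, npdf t = stdNormalCDF (-z) := by
  rw [stdNormalCDF_eq, ← integral_comp_neg_Ioi]
  simp_rw [npdf_neg]

lemma stdNormalCDF_compl (z : ℝ) : stdNormalCDF z + stdNormalCDF (-z) = 1 := by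
  rw [stdNormalCDF_eq, ← integral_Ioi_npdf, ← integral_npdf]
  rw [← setIntegral_union (Iic_disjoint_Ioi le_rfl) measurableSet_Ioi
    integrable_npdf.integrableOn integrable_npdf.integrableOn, Iic_union_Ioi]
  simp [Measure.restrict_univ]

lemma npdf_tilt (c y : ℝ) :
    Real.exp (c * y) * npdf y = Real.exp (c ^ 2 / 2) * npdf (y - c) := by
  unfold npdf
  rw [← mul_div_assoc, ← mul_div_assoc, ← Real.exp_add, ← Real.exp_add]
  ring_nf

lemma integral_Iic_comp_sub (f : ℝ → ℝ) (x c : ℝ) :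
    ∫ y in Iic x, f (y - c) = ∫ y in Iic (x - c), f y := by
  rw [← integral_indicator measurableSet_Iic, ← integral_indicator measurableSet_Iic]
  rw [← integral_sub_right_eq_self (fun y => (Iic (x - c)).indicator f y) c]
  congr 1; ext y
  by_cases h : y ≤ x <;>
    simp [Set.indicator, h, sub_le_sub_right, sub_le_sub_iff_right]

lemma integral_gaussianReal (f : ℝ → ℝ) :
    ∫ x, f x ∂(gaussianReal 0 1) = ∫ x, f x * npdf x := by
  rw [gaussianReal_of_var_ne_zero 0 one_ne_zero]
  have : (gaussianPDF 0 1) = fun x => ((npdf x).toNNReal : ENNReal) := by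
    ext x
    rw [gaussianPDF, gaussianPDFReal_eq_npdf, ENNReal.ofReal]
  rw [this, integral_withDensity_eq_integral_smul]
  · congr 1; ext x
    rw [NNReal.smul_def, smul_eq_mul, Real.coe_toNNReal _ (npdf_nonneg x), mul_comm]
  · exact (continuous_npdf.measurable).real_toNNReal
where
  continuous_npdf : Continuous npdf := by unfold npdf; fun_prop

lemma setIntegral_gaussianReal (f : ℝ → ℝ) {s : Set ℝ} (hs : MeasurableSet s) :
    ∫ x in s, f x ∂(gaussianReal 0 1) = ∫ x in s, f x * npdf x := by
  rw [gaussianReal_of_var_ne_zero 0 one_ne_zero]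
  have : (gaussianPDF 0 1) = fun x => ((npdf x).toNNReal : ENNReal) := by
    ext x
    rw [gaussianPDF, gaussianPDFReal_eq_npdf, ENNReal.ofReal]
  rw [this, setIntegral_withDensity_eq_setIntegral_smul _ _ hs]
  · congr 1; ext x
    rw [NNReal.smul_def, smul_eq_mul, Real.coe_toNNReal _ (npdf_nonneg x), mul_comm]
  · have : Continuous npdf := by unfold npdf; fun_prop
    exact this.measurable.real_toNNReal

lemma gaussianReal_Ioi_toReal (x : ℝ) :
    ((gaussianReal 0 1) (Ioi x)).toReal = ∫ t in Ioi x, npdf t := by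
  rw [gaussianReal_apply_eq_integral 0 one_ne_zero (Ioi x),
    gaussianPDFReal_eq_npdf,
    ENNReal.toReal_ofReal (setIntegral_nonneg measurableSet_Ioi fun t _ => npdf_nonneg t)]

lemma integral_npdf_mul (t : ℝ) :
    ∫ x, npdf (x - t) * npdf x = npdf (t * (Real.sqrt 2)⁻¹) * (Real.sqrt 2)⁻¹ := by
  have h2π : Real.sqrt (2 * π) ≠ 0 := by positivity
  have key : ∀ x : ℝ, npdf (x - t) * npdf x
      = (Real.exp (-t ^ 2 / 4) / (2 * π)) * Real.exp (-(x - t / 2) ^ 2) := by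
    intro x
    unfold npdf
    rw [div_mul_div_comm, ← Real.exp_add, Real.mul_self_sqrt (by positivity), div_mul_eq_mul_div,
      mul_comm]
    congr 1
    rw [← Real.exp_add]
    congr 1
    ring
  simp_rw [key]
  rw [integral_const_mul, integral_sub_right_eq_self (fun x => Real.exp (-(x : ℝ) ^ 2)) (t/2)]
  have : ∫ x : ℝ, Real.exp (-x ^ 2) = Real.sqrt π := by
    simpa using integral_gaussian 1
  rw [this]
  unfold npdf
  have e1 : -(t * (Real.sqrt 2)⁻¹) ^ 2 / 2 = -t ^ 2 / 4 := by
    rw [mul_pow, inv_pow, Real.sq_sqrt (by norm_num : (0:ℝ) ≤ 2)]; ring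
  rw [e1]
  have h2 : Real.sqrt (2 * π) = Real.sqrt 2 * Real.sqrt π :=
    Real.sqrt_mul (by norm_num) π
  have hπ : Real.sqrt π * Real.sqrt π = π := Real.mul_self_sqrt pi_pos.le
  have h2' : Real.sqrt 2 * Real.sqrt 2 = 2 := Real.mul_self_sqrt (by norm_num)
  have hconst : (Real.sqrt (2 * π))⁻¹ * (Real.sqrt 2)⁻¹ = (2 * π)⁻¹ * Real.sqrt π := by
    rw [h2]
    field_simp
    nlinarith [hπ, h2', Real.sqrt_nonneg π, Real.sqrt_nonneg 2, pi_pos]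
  conv_rhs => rw [div_eq_mul_inv, mul_assoc, hconst]
  ring

lemma integral_Ioi_comp_mul (c : ℝ) :
    ∫ t in Ioi c, npdf (t * (Real.sqrt 2)⁻¹) * (Real.sqrt 2)⁻¹
      = ∫ t in Ioi (c * (Real.sqrt 2)⁻¹), npdf t := by
  have h : (0:ℝ) < (Real.sqrt 2)⁻¹ := by positivity
  rw [integral_mul_const, integral_comp_mul_right_Ioi npdf c h]
  simp only [smul_eq_mul]
  rw [inv_inv, mul_comm, inv_mul_cancel_left₀ (by positivity : Real.sqrt 2 ≠ 0)]

lemma cdf_as_Ioi (x c : ℝ) :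
    ∫ t in Ioi c, npdf (x - t) = stdNormalCDF (x - c) := by
  have h1 : ∀ t : ℝ, npdf (x - t) = (fun s => npdf (x + s)) (-t) := by
    intro t; simp [sub_eq_add_neg]
  simp_rw [h1]
  rw [integral_comp_neg_Ioi c (fun s => npdf (x + s))]
  have h2 : ∀ s : ℝ, npdf (x + s) = npdf (s - (-x)) := by intro s; ring_nf
  simp_rw [h2]
  rw [integral_Iic_comp_sub npdf (-c) (-x), stdNormalCDF_eq]
  ring_nf

lemma integrable_exp_mul_npdf (c : ℝ) :
    Integrable (fun x => Real.exp (c * x) * npdf x) := by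
  simp_rw [npdf_tilt]
  exact (integrable_npdf.comp_sub_right c).const_mul _

lemma integrable_gaussianReal_iff {g : ℝ → ℝ} :
    Integrable g (gaussianReal 0 1) ↔ Integrable (fun x => g x * npdf x) volume := by
  rw [gaussianReal_of_var_ne_zero 0 one_ne_zero]
  have hd : (gaussianPDF 0 1) = fun x => ((npdf x).toNNReal : ENNReal) := by
    ext x
    rw [gaussianPDF, gaussianPDFReal_eq_npdf, ENNReal.ofReal]
  rw [hd, integrable_withDensity_iff_integrable_smul continuous_npdf.measurable.real_toNNReal]
  constructor <;> intro h <;> refine h.congr (Filter.Eventually.of_forall fun x => ?_) <;>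
    simp [NNReal.smul_def, Real.coe_toNNReal _ (npdf_nonneg x), mul_comm]
where
  gaussianPDFReal_eq_npdf : gaussianPDFReal 0 1 = npdf := by
    ext x; simp [gaussianPDFReal, npdf, div_eq_mul_inv, mul_comm]

lemma integrable_exp_gaussianReal (c : ℝ) :
    Integrable (fun x => Real.exp (c * x)) (gaussianReal 0 1) :=
  integrable_gaussianReal_iff.mpr (integrable_exp_mul_npdf c)

lemma inner_int (c : ℝ) (hc : 0 < c) (x : ℝ) :
    ∫ y, Real.exp (c * min x y) ∂(gaussianReal 0 1)
      = Real.exp (c ^ 2 / 2) * stdNormalCDF (x - c)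
        + Real.exp (c * x) * stdNormalCDF (-x) := by
  have hintF : Integrable (fun y => Real.exp (c * min x y)) (gaussianReal 0 1) := by
    refine (integrable_exp_gaussianReal c).mono'
      (Continuous.aestronglyMeasurable (by fun_prop)) ?_
    refine Filter.Eventually.of_forall fun y => ?_
    rw [Real.norm_eq_abs, Real.abs_exp, Real.exp_le_exp]
    exact mul_le_mul_of_nonneg_left (min_le_right x y) hc.le
  rw [← integral_add_compl measurableSet_Iic hintF, compl_Iic]
  have h1 : ∫ y in Iic x, Real.exp (c * min x y) ∂(gaussianReal 0 1)
      = Real.exp (c ^ 2 / 2) * stdNormalCDF (x - c) := by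
    rw [setIntegral_congr_fun measurableSet_Iic
      (fun y (hy : y ≤ x) => by rw [min_eq_right hy] :
        ∀ y ∈ Iic x, Real.exp (c * min x y) = Real.exp (c * y)),
      setIntegral_gaussianReal _ measurableSet_Iic]
    simp_rw [npdf_tilt c]
    rw [integral_const_mul, integral_Iic_comp_sub npdf x c, stdNormalCDF_eq]
  have h2 : ∫ y in Ioi x, Real.exp (c * min x y) ∂(gaussianReal 0 1)
      = Real.exp (c * x) * stdNormalCDF (-x) := by
    rw [setIntegral_congr_fun measurableSet_Ioi
      (fun y (hy : x < y) => by rw [min_eq_left hy.le] :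
        ∀ y ∈ Ioi x, Real.exp (c * min x y) = Real.exp (c * x)),
      setIntegral_const, smul_eq_mul, measureReal_def, gaussianReal_Ioi_toReal, integral_Ioi_npdf, mul_comm]
  rw [h1, h2]

lemma integrable_cdf_mul_npdf (c : ℝ) :
    Integrable (fun x => stdNormalCDF (x - c) * npdf x) := by
  refine integrable_npdf.mono'
    (((measurable_stdNormalCDF.comp (measurable_id.sub_const c)).mul
      continuous_npdf.measurable).aestronglyMeasurable) ?_
  refine Filter.Eventually.of_forall fun x => ?_
  rw [Real.norm_eq_abs, abs_mul, abs_of_nonneg (stdNormalCDF_nonneg _),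
    abs_of_nonneg (npdf_nonneg _)]
  calc stdNormalCDF (x - c) * npdf x ≤ 1 * npdf x :=
        mul_le_mul_of_nonneg_right (stdNormalCDF_le_one _) (npdf_nonneg _)
    _ = npdf x := one_mul _

lemma key_K (c : ℝ) :
    ∫ x, stdNormalCDF (x - c) * npdf x = stdNormalCDF (-(c * (Real.sqrt 2)⁻¹)) := by
  have hmeas : AEStronglyMeasurable (Function.uncurry fun x t => npdf (x - t) * npdf x)
      (volume.prod (volume.restrict (Ioi c))) := by
    apply Continuous.aestronglyMeasurable
    have : Continuous fun p : ℝ × ℝ => npdf (p.1 - p.2) * npdf p.1 :=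
      (continuous_npdf.comp (continuous_fst.sub continuous_snd)).mul
        (continuous_npdf.comp continuous_fst)
    exact this
  have hnorm : ∀ x : ℝ, (∫ t in Ioi c, ‖npdf (x - t) * npdf x‖)
      = stdNormalCDF (x - c) * npdf x := by
    intro x
    have : ∀ t : ℝ, ‖npdf (x - t) * npdf x‖ = npdf (x - t) * npdf x := fun t =>
      norm_of_nonneg (mul_nonneg (npdf_nonneg _) (npdf_nonneg _))
    simp_rw [this]
    rw [integral_mul_const, cdf_as_Ioi]
  have hswap : Integrable (Function.uncurry fun x t => npdf (x - t) * npdf x)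
      (volume.prod (volume.restrict (Ioi c))) := by
    rw [integrable_prod_iff hmeas]
    constructor
    · refine Filter.Eventually.of_forall fun x => ?_
      have he : (fun t => npdf (x - t) * npdf x) = fun t => npdf (t - x) * npdf x := by
        funext t; rw [← npdf_neg (x - t), neg_sub]
      simp only [Function.uncurry]
      rw [he]
      exact ((integrable_npdf.comp_sub_right x).mul_const (npdf x)).integrableOn
    · exact (integrable_cdf_mul_npdf c).congr
        (Filter.Eventually.of_forall fun x => (hnorm x).symm)
  have h1 : ∀ x : ℝ, stdNormalCDF (x - c) * npdf x
      = ∫ t in Ioi c, npdf (x - t) * npdf x := by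
    intro x
    rw [integral_mul_const, cdf_as_Ioi]
  simp_rw [h1]
  rw [integral_integral_swap hswap]
  simp_rw [integral_npdf_mul]
  rw [integral_Ioi_comp_mul, integral_Ioi_npdf]

end aux

/-- If `Z₁, Z₂` are i.i.d. standard normal and `a, σ > 0`, then
`E[e^(aσ min{Z₁,Z₂})] = 2 e^((aσ)²/2) Φ(−aσ/√2)`. -/
theorem exp_min_gaussian {Ω : Type*} [MeasureSpace Ω]
    [IsProbabilityMeasure (ℙ : Measure Ω)]
    (Z₁ Z₂ : Ω → ℝ) (a σ : ℝ) (ha : 0 < a) (hσ : 0 < σ)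
    (hZ₁ : Measure.map Z₁ ℙ = gaussianReal 0 1)
    (hZ₂ : Measure.map Z₂ ℙ = gaussianReal 0 1)
    (hindep : IndepFun Z₁ Z₂ ℙ) :
    ∫ ω, Real.exp (a * σ * min (Z₁ ω) (Z₂ ω)) ∂ℙ =
      2 * Real.exp ((a * σ) ^ 2 / 2) * stdNormalCDF (-(a * σ) / Real.sqrt 2) := by
  set c := a * σ with hc_def
  have hc : 0 < c := mul_pos ha hσ
  set γ := gaussianReal 0 1 with hγ
  -- measurability of Z₁, Z₂
  have hne : γ ≠ 0 := IsProbabilityMeasure.ne_zero γ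
  have hZ₁m : AEMeasurable Z₁ ℙ := by
    by_contra h
    rw [Measure.map_of_not_aemeasurable h] at hZ₁
    exact hne hZ₁.symm
  have hZ₂m : AEMeasurable Z₂ ℙ := by
    by_contra h
    rw [Measure.map_of_not_aemeasurable h] at hZ₂
    exact hne hZ₂.symm
  have hmap : Measure.map (fun ω => (Z₁ ω, Z₂ ω)) ℙ = γ.prod γ := by
    rw [(indepFun_iff_map_prod_eq_prod_map_map hZ₁m hZ₂m).mp hindep, hZ₁, hZ₂]
  have hcont : Continuous fun p : ℝ × ℝ => Real.exp (c * min p.1 p.2) := by fun_prop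
  have step1 : ∫ ω, Real.exp (c * min (Z₁ ω) (Z₂ ω)) ∂ℙ
      = ∫ p : ℝ × ℝ, Real.exp (c * min p.1 p.2) ∂(γ.prod γ) := by
    rw [← hmap, integral_map (hZ₁m.prodMk hZ₂m) hcont.aestronglyMeasurable]
  -- integrability on the product
  have hFint : Integrable (fun p : ℝ × ℝ => Real.exp (c * min p.1 p.2)) (γ.prod γ) := by
    have hb : Integrable (fun p : ℝ × ℝ =>
        Real.exp ((c / 2) * p.1) * Real.exp ((c / 2) * p.2)) (γ.prod γ) :=
      (integrable_exp_gaussianReal (c / 2)).mul_prod (integrable_exp_gaussianReal (c / 2))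
    refine hb.mono' hcont.aestronglyMeasurable ?_
    refine Filter.Eventually.of_forall fun p => ?_
    rw [Real.norm_eq_abs, Real.abs_exp, ← Real.exp_add, Real.exp_le_exp]
    have h1 := min_le_left p.1 p.2
    have h2 := min_le_right p.1 p.2
    nlinarith [hc.le]
  rw [step1, integral_prod _ hFint]
  simp only []
  have hinner : ∀ x : ℝ, ∫ y, Real.exp (c * min x y) ∂γ
      = Real.exp (c ^ 2 / 2) * stdNormalCDF (x - c)
        + Real.exp (c * x) * stdNormalCDF (-x) := inner_int c hc
  simp_rw [hinner]
  rw [integral_gaussianReal]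
  -- split the integral
  have hint2 : Integrable (fun x => Real.exp (c * x) * stdNormalCDF (-x) * npdf x) := by
    have he : ∀ x : ℝ, Real.exp (c * x) * stdNormalCDF (-x) * npdf x
        = Real.exp (c ^ 2 / 2) * (stdNormalCDF (-x) * npdf (x - c)) := by
      intro x
      calc Real.exp (c * x) * stdNormalCDF (-x) * npdf x
          = stdNormalCDF (-x) * (Real.exp (c * x) * npdf x) := by ring
        _ = stdNormalCDF (-x) * (Real.exp (c ^ 2 / 2) * npdf (x - c)) := by rw [npdf_tilt]
        _ = Real.exp (c ^ 2 / 2) * (stdNormalCDF (-x) * npdf (x - c)) := by ring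
    simp_rw [he]
    apply Integrable.const_mul
    refine (integrable_npdf.comp_sub_right c).mono'
      (((measurable_stdNormalCDF.comp measurable_neg).mul
        (continuous_npdf.measurable.comp (measurable_id.sub_const c))).aestronglyMeasurable) ?_
    refine Filter.Eventually.of_forall fun x => ?_
    rw [Real.norm_eq_abs, abs_mul, abs_of_nonneg (stdNormalCDF_nonneg _),
      abs_of_nonneg (npdf_nonneg _)]
    calc stdNormalCDF (-x) * npdf (x - c) ≤ 1 * npdf (x - c) :=
          mul_le_mul_of_nonneg_right (stdNormalCDF_le_one _) (npdf_nonneg _)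
      _ = npdf (x - c) := one_mul _
  have hsplit : ∫ x, (Real.exp (c ^ 2 / 2) * stdNormalCDF (x - c)
        + Real.exp (c * x) * stdNormalCDF (-x)) * npdf x
      = Real.exp (c ^ 2 / 2) * (∫ x, stdNormalCDF (x - c) * npdf x)
        + ∫ x, Real.exp (c * x) * stdNormalCDF (-x) * npdf x := by
    have he : ∀ x : ℝ, (Real.exp (c ^ 2 / 2) * stdNormalCDF (x - c)
          + Real.exp (c * x) * stdNormalCDF (-x)) * npdf x
        = Real.exp (c ^ 2 / 2) * (stdNormalCDF (x - c) * npdf x)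
          + Real.exp (c * x) * stdNormalCDF (-x) * npdf x := by intro x; ring
    simp_rw [he]
    rw [integral_add ((integrable_cdf_mul_npdf c).const_mul _) hint2, integral_const_mul]
  rw [hsplit]
  -- second integral equals the first
  have hsecond : ∫ x, Real.exp (c * x) * stdNormalCDF (-x) * npdf x
      = Real.exp (c ^ 2 / 2) * ∫ x, stdNormalCDF (x - c) * npdf x := by
    have he : ∀ x : ℝ, Real.exp (c * x) * stdNormalCDF (-x) * npdf x
        = Real.exp (c ^ 2 / 2) * (stdNormalCDF (-x) * npdf (x - c)) := by
      intro x
      calc Real.exp (c * x) * stdNormalCDF (-x) * npdf x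
          = stdNormalCDF (-x) * (Real.exp (c * x) * npdf x) := by ring
        _ = stdNormalCDF (-x) * (Real.exp (c ^ 2 / 2) * npdf (x - c)) := by rw [npdf_tilt]
        _ = Real.exp (c ^ 2 / 2) * (stdNormalCDF (-x) * npdf (x - c)) := by ring
    simp_rw [he]
    rw [integral_const_mul]
    congr 1
    have hshift : ∫ x, stdNormalCDF (-x) * npdf (x - c)
        = ∫ u, stdNormalCDF (-(u + c)) * npdf u := by
      rw [← integral_sub_right_eq_self (fun u => stdNormalCDF (-(u + c)) * npdf u) c]
      congr 1; funext x; rw [sub_add_cancel]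
    rw [hshift]
    rw [← integral_neg_eq_self (fun v => stdNormalCDF (v - c) * npdf v)]
    congr 1; funext u
    rw [npdf_neg]
    congr 2
    ring
  rw [hsecond, key_K]
  rw [neg_div, div_eq_mul_inv]
  ring_nf
end
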